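/- arXiv:1604.01853 — 16 statements merged into one kernel-verified Lean document; each statement's English description precedes it below -/
import Mathlib

section
/- Let f and g be integrable functions on [a,b] with f decreasing on [a,b] and 0 ≤ g(t) ≤ 1 for all t ∈ [a,b], and set λ = ∫_a^b g(t) dt. Then ∫_{b-λ}^b f(t) dt ≤ ∫_a^b f(t) g(t) dt ≤ ∫_a^{a+λ} f(t) dt. -/
open MeasureTheory intervalIntegral

theorem steffensen_inequality (a b : ℝ) (hab : a < b) (f g : ℝ → ℝ)
    (hf : IntervalIntegrable f volume a b)
    (hg : IntervalIntegrable g volume a b)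
    (hf_dec : AntitoneOn f (Set.Icc a b))
    (hg01 : ∀ t ∈ Set.Icc a b, 0 ≤ g t ∧ g t ≤ 1)
    (lam : ℝ) (hlam : lam = ∫ t in a..b, g t) :
    (∫ t in (b - lam)..b, f t) ≤ (∫ t in a..b, f t * g t) ∧
      (∫ t in a..b, f t * g t) ≤ ∫ t in a..(a + lam), f t := by
  have hg0 : ∀ t ∈ Set.Icc a b, 0 ≤ g t := fun t ht => (hg01 t ht).1
  have hg1 : ∀ t ∈ Set.Icc a b, g t ≤ 1 := fun t ht => (hg01 t ht).2
  have hlam0 : 0 ≤ lam := by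
    rw [hlam]; exact intervalIntegral.integral_nonneg hab.le hg0
  have hlamb : lam ≤ b - a := by
    have h1 : (∫ t in a..b, g t) ≤ ∫ t in a..b, (1 : ℝ) :=
      integral_mono_on hab.le hg intervalIntegrable_const hg1
    simp only [intervalIntegral.integral_const, smul_eq_mul, mul_one] at h1
    linarith [hlam ▸ h1]
  -- integrability of f * g on a..b
  have hfg : IntervalIntegrable (fun t => f t * g t) volume a b := by
    rw [intervalIntegrable_iff_integrableOn_Ioc_of_le hab.le] at hf hg ⊢
    have hb : ∀ᵐ t ∂(volume.restrict (Set.Ioc a b)), ‖g t‖ ≤ 1 := by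
      filter_upwards [ae_restrict_mem measurableSet_Ioc] with t ht
      have h := hg01 t (Set.Ioc_subset_Icc_self ht)
      rw [Real.norm_eq_abs, abs_le]; exact ⟨by linarith [h.1], h.2⟩
    exact (Integrable.bdd_mul hf hg.aestronglyMeasurable hb).congr
      (by filter_upwards with t; ring)
  have subint : ∀ {F : ℝ → ℝ}, IntervalIntegrable F volume a b → ∀ {u v : ℝ},
      a ≤ u → u ≤ v → v ≤ b → IntervalIntegrable F volume u v := by
    intro F hF u v hu huv hv
    refine hF.mono_set ?_
    rw [Set.uIcc_of_le huv, Set.uIcc_of_le hab.le]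
    exact Set.Icc_subset_Icc hu hv
  constructor
  · -- left inequality, d := b - lam
    set d := b - lam with hd
    have had : a ≤ d := by simp only [hd]; linarith
    have hdb : d ≤ b := by simp only [hd]; linarith
    have hdmem : d ∈ Set.Icc a b := ⟨had, hdb⟩
    have hf2 := subint hf had hdb le_rfl
    have hg1' := subint hg le_rfl had hdb
    have hg2' := subint hg had hdb le_rfl
    have hfg1 := subint hfg le_rfl had hdb
    have hfg2 := subint hfg had hdb le_rfl
    have hsplit : (∫ t in a..d, f t * g t) + ∫ t in d..b, f t * g t
        = ∫ t in a..b, f t * g t :=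
      integral_add_adjacent_intervals hfg1 hfg2
    have hgsplit : (∫ t in a..d, g t) + ∫ t in d..b, g t = lam := by
      rw [hlam]; exact integral_add_adjacent_intervals hg1' hg2'
    -- on [a,d]: f d * g t ≤ f t * g t
    have hA : (∫ t in a..d, f d * g t) ≤ ∫ t in a..d, f t * g t := by
      refine integral_mono_on had (hg1'.const_mul _) hfg1 fun t ht => ?_
      have htmem : t ∈ Set.Icc a b := ⟨ht.1, ht.2.trans hdb⟩
      exact mul_le_mul_of_nonneg_right (hf_dec htmem hdmem ht.2) (hg0 t htmem)
    -- on [d,b]: f t - f t * g t ≤ f d - f d * g t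
    have hB : (∫ t in d..b, (f t - f t * g t)) ≤ ∫ t in d..b, (f d - f d * g t) := by
      refine integral_mono_on hdb (hf2.sub hfg2)
        (intervalIntegrable_const.sub (hg2'.const_mul _)) fun t ht => ?_
      have htmem : t ∈ Set.Icc a b := ⟨had.trans ht.1, ht.2⟩
      have h1 : f t ≤ f d := hf_dec hdmem htmem ht.1
      have h2 : g t ≤ 1 := hg1 t htmem
      nlinarith [mul_nonneg (sub_nonneg.2 h1) (sub_nonneg.2 h2)]
    have e1 : (∫ t in d..b, (f t - f t * g t))
        = (∫ t in d..b, f t) - ∫ t in d..b, f t * g t :=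
      integral_sub hf2 hfg2
    have e2 : (∫ t in d..b, (f d - f d * g t))
        = f d * (b - d) - f d * ∫ t in d..b, g t := by
      rw [integral_sub intervalIntegrable_const (hg2'.const_mul _),
        intervalIntegral.integral_const, intervalIntegral.integral_const_mul,
        smul_eq_mul, mul_comm (b - d)]
    have e3 : (∫ t in a..d, f d * g t) = f d * ∫ t in a..d, g t :=
      intervalIntegral.integral_const_mul _ _
    have hbd : b - d = lam := by simp [hd]
    have key : f d * (b - d) = f d * (∫ t in a..d, g t) + f d * ∫ t in d..b, g t := by
      rw [hbd, ← hgsplit]; ring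
    rw [e1, e2] at hB
    rw [e3] at hA
    linarith
  · -- right inequality, c := a + lam
    set c := a + lam with hc
    have hac : a ≤ c := by simp only [hc]; linarith
    have hcb : c ≤ b := by simp only [hc]; linarith
    have hcmem : c ∈ Set.Icc a b := ⟨hac, hcb⟩
    have hf1 := subint hf le_rfl hac hcb
    have hg1' := subint hg le_rfl hac hcb
    have hg2' := subint hg hac hcb le_rfl
    have hfg1 := subint hfg le_rfl hac hcb
    have hfg2 := subint hfg hac hcb le_rfl
    have hsplit : (∫ t in a..c, f t * g t) + ∫ t in c..b, f t * g t
        = ∫ t in a..b, f t * g t :=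
      integral_add_adjacent_intervals hfg1 hfg2
    have hgsplit : (∫ t in a..c, g t) + ∫ t in c..b, g t = lam := by
      rw [hlam]; exact integral_add_adjacent_intervals hg1' hg2'
    -- on [c,b]: f t * g t ≤ f c * g t
    have hA : (∫ t in c..b, f t * g t) ≤ ∫ t in c..b, f c * g t := by
      refine integral_mono_on hcb hfg2 (hg2'.const_mul _) fun t ht => ?_
      have htmem : t ∈ Set.Icc a b := ⟨hac.trans ht.1, ht.2⟩
      exact mul_le_mul_of_nonneg_right (hf_dec hcmem htmem ht.1) (hg0 t htmem)
    -- on [a,c]: f c - f c * g t ≤ f t - f t * g t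
    have hB : (∫ t in a..c, (f c - f c * g t)) ≤ ∫ t in a..c, (f t - f t * g t) := by
      refine integral_mono_on hac (intervalIntegrable_const.sub (hg1'.const_mul _))
        (hf1.sub hfg1) fun t ht => ?_
      have htmem : t ∈ Set.Icc a b := ⟨ht.1, ht.2.trans hcb⟩
      have h1 : f c ≤ f t := hf_dec htmem hcmem ht.2
      have h2 : g t ≤ 1 := hg1 t htmem
      nlinarith [mul_nonneg (sub_nonneg.2 h1) (sub_nonneg.2 h2)]
    have e1 : (∫ t in a..c, (f t - f t * g t))
        = (∫ t in a..c, f t) - ∫ t in a..c, f t * g t :=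
      integral_sub hf1 hfg1
    have e2 : (∫ t in a..c, (f c - f c * g t))
        = f c * (c - a) - f c * ∫ t in a..c, g t := by
      rw [integral_sub intervalIntegrable_const (hg1'.const_mul _),
        intervalIntegral.integral_const, intervalIntegral.integral_const_mul,
        smul_eq_mul, mul_comm (c - a)]
    have e3 : (∫ t in c..b, f c * g t) = f c * ∫ t in c..b, g t :=
      intervalIntegral.integral_const_mul _ _
    have hca : c - a = lam := by simp [hc]
    have key : f c * (c - a) = f c * (∫ t in a..c, g t) + f c * ∫ t in c..b, g t := by
      rw [hca, ← hgsplit]; ring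
    rw [e1, e2] at hB
    rw [e3] at hA
    linarith
end

section
/- Let f be decreasing and nonnegative on (0,∞), let g be measurable on (0,∞) with 0 ≤ g(t) ≤ A for all t, where A > 0, and assume that ∫_0^∞ g(t) dt is finite and that f·g is integrable on (0,∞). Then ∫_0^∞ f(t) g(t) dt ≤ A ∫_0^λ f(t) dt, where λ = (1/A) ∫_0^∞ g(t) dt. -/
open MeasureTheory

theorem apery_steffensen (A : ℝ) (hA : 0 < A) (f g : ℝ → ℝ)
    (hf_anti : AntitoneOn f (Set.Ioi 0))
    (hf_nonneg : ∀ t ∈ Set.Ioi (0 : ℝ), 0 ≤ f t)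
    (hg_meas : Measurable g)
    (hg0A : ∀ t ∈ Set.Ioi (0 : ℝ), 0 ≤ g t ∧ g t ≤ A)
    (hg_int : IntegrableOn g (Set.Ioi 0))
    (hfg_int : IntegrableOn (fun t => f t * g t) (Set.Ioi 0))
    (lam : ℝ) (hlam : lam = (1 / A) * ∫ t in Set.Ioi (0 : ℝ), g t)
    (hf_int : IntervalIntegrable f volume 0 lam) :
    (∫ t in Set.Ioi (0 : ℝ), f t * g t) ≤ A * ∫ t in (0 : ℝ)..lam, f t := by
  have hg0 : ∀ t ∈ Set.Ioi (0:ℝ), 0 ≤ g t := fun t ht => (hg0A t ht).1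
  have hIg : 0 ≤ ∫ t in Set.Ioi (0:ℝ), g t :=
    setIntegral_nonneg measurableSet_Ioi hg0
  have hlam0 : 0 ≤ lam := by
    rw [hlam]; positivity
  rcases eq_or_lt_of_le hlam0 with h0 | hpos
  · -- lam = 0 : then ∫ g = 0, so g = 0 a.e., so ∫ f g = 0
    have hIg0 : ∫ t in Set.Ioi (0:ℝ), g t = 0 := by
      have h := hlam.symm.trans h0.symm
      field_simp at h
      simpa using h
    have hg_ae : (fun t => g t) =ᵐ[volume.restrict (Set.Ioi (0:ℝ))] 0 := by
      have hnn : 0 ≤ᵐ[volume.restrict (Set.Ioi (0:ℝ))] fun t => g t :=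
        (ae_restrict_iff' measurableSet_Ioi).2 (Filter.Eventually.of_forall hg0)
      exact (integral_eq_zero_iff_of_nonneg_ae hnn hg_int).1 hIg0
    have hfg0 : (fun t => f t * g t) =ᵐ[volume.restrict (Set.Ioi (0:ℝ))] 0 := by
      filter_upwards [hg_ae] with t ht
      simp [ht]
    have h1 : (∫ t in Set.Ioi (0:ℝ), f t * g t) = 0 := by
      rw [integral_congr_ae hfg0]; simp
    rw [h1, ← h0]
    simp
  · -- main case lam > 0
    have hsub1 : Set.Ioc (0:ℝ) lam ⊆ Set.Ioi 0 := Set.Ioc_subset_Ioi_self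
    have hsub2 : Set.Ioi lam ⊆ Set.Ioi 0 := Set.Ioi_subset_Ioi hlam0
    have hfg1 : IntegrableOn (fun t => f t * g t) (Set.Ioc 0 lam) := hfg_int.mono_set hsub1
    have hfg2 : IntegrableOn (fun t => f t * g t) (Set.Ioi lam) := hfg_int.mono_set hsub2
    have hg1 : IntegrableOn g (Set.Ioc 0 lam) := hg_int.mono_set hsub1
    have hg2 : IntegrableOn g (Set.Ioi lam) := hg_int.mono_set hsub2
    have hf1 : IntegrableOn f (Set.Ioc 0 lam) := hf_int.1
    have hsplit : (∫ t in Set.Ioi (0:ℝ), f t * g t)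
        = (∫ t in Set.Ioc (0:ℝ) lam, f t * g t) + ∫ t in Set.Ioi lam, f t * g t := by
      rw [← setIntegral_union (Set.Ioc_disjoint_Ioi le_rfl) measurableSet_Ioi hfg1 hfg2,
        Set.Ioc_union_Ioi_eq_Ioi hlam0]
    have hgsplit : (∫ t in Set.Ioi (0:ℝ), g t)
        = (∫ t in Set.Ioc (0:ℝ) lam, g t) + ∫ t in Set.Ioi lam, g t := by
      rw [← setIntegral_union (Set.Ioc_disjoint_Ioi le_rfl) measurableSet_Ioi hg1 hg2,
        Set.Ioc_union_Ioi_eq_Ioi hlam0]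
    have hIg_eq : (∫ t in Set.Ioi (0:ℝ), g t) = A * lam := by
      rw [hlam]; field_simp
    have hflam : 0 ≤ f lam := hf_nonneg lam hpos
    -- tail bound
    have htail : (∫ t in Set.Ioi lam, f t * g t) ≤ f lam * ∫ t in Set.Ioi lam, g t := by
      rw [← integral_const_mul]
      apply setIntegral_mono_on hfg2 (hg2.const_mul _) measurableSet_Ioi
      intro t ht
      have ht0 : t ∈ Set.Ioi (0:ℝ) := hsub2 ht
      exact mul_le_mul_of_nonneg_right (hf_anti hpos ht0 (le_of_lt ht)) (hg0 t ht0)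
    -- head bound
    have hAg_int : IntegrableOn (fun t => A - g t) (Set.Ioc 0 lam) := by
      apply Integrable.sub _ hg1
      exact integrableOn_const (by simp [Real.volume_Ioc])
    have hconst : (∫ t in Set.Ioc (0:ℝ) lam, (A - g t))
        = A * lam - ∫ t in Set.Ioc (0:ℝ) lam, g t := by
      rw [integral_sub (integrableOn_const (C := A) (s := Set.Ioc (0:ℝ) lam) (μ := volume) (by simp [Real.volume_Ioc])) hg1]
      rw [setIntegral_const]
      simp [Real.volume_Ioc, ENNReal.toReal_ofReal hlam0, mul_comm, hlam0]
    have hhead1 : f lam * (A * lam - ∫ t in Set.Ioc (0:ℝ) lam, g t)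
        ≤ ∫ t in Set.Ioc (0:ℝ) lam, f t * (A - g t) := by
      rw [← hconst, ← integral_const_mul]
      apply setIntegral_mono_on (hAg_int.const_mul _) _ measurableSet_Ioc
      · intro t ht
        have ht0 : t ∈ Set.Ioi (0:ℝ) := hsub1 ht
        have hfle : f lam ≤ f t := hf_anti ht0 hpos ht.2
        have hAgt : 0 ≤ A - g t := sub_nonneg.2 (hg0A t ht0).2
        exact mul_le_mul_of_nonneg_right hfle hAgt
      · have : (fun t => f t * (A - g t)) = (fun t => A * f t - f t * g t) := by
          funext t; ring
        rw [this]
        exact (hf1.const_mul A).sub hfg1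
    have hhead2 : (∫ t in Set.Ioc (0:ℝ) lam, f t * (A - g t))
        = A * (∫ t in Set.Ioc (0:ℝ) lam, f t) - ∫ t in Set.Ioc (0:ℝ) lam, f t * g t := by
      have heq : (∫ t in Set.Ioc (0:ℝ) lam, f t * (A - g t))
          = ∫ t in Set.Ioc (0:ℝ) lam, (A * f t - f t * g t) := by
        apply integral_congr_ae
        filter_upwards with t
        ring
      rw [heq, integral_sub (hf1.const_mul A) hfg1, integral_const_mul]
    have hg2eq : (∫ t in Set.Ioi lam, g t) = A * lam - ∫ t in Set.Ioc (0:ℝ) lam, g t := by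
      linarith [hgsplit, hIg_eq]
    have hmul : f lam * (∫ t in Set.Ioi lam, g t)
        = f lam * (A * lam - ∫ t in Set.Ioc (0:ℝ) lam, g t) := by rw [hg2eq]
    rw [intervalIntegral.integral_of_le hlam0]
    linarith [htail, hhead1, hhead2, hsplit, hmul]
end

section
/- Let g : [a,b] → ℝ be integrable with 0 ≤ g(t) ≤ 1 for all t ∈ [a,b], let f : [a,b] → ℝ be absolutely continuous on [a,b] with derivative f', and set λ = ∫_a^b g(t) dt. Then ∫_a^{a+λ} f(t) dt − ∫_a^b f(t) g(t) dt = −∫_a^{a+λ} (∫_a^x (1 − g(t)) dt) f'(x) dx − ∫_{a+λ}^b (∫_x^b g(t) dt) f'(x) dx. -/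
open MeasureTheory Set

lemma swap_triangle (a b : ℝ) (hab : a ≤ b) (u v : ℝ → ℝ)
    (hu : IntervalIntegrable u volume a b) (hv : IntervalIntegrable v volume a b) :
    ∫ t in a..b, (∫ x in a..t, v x) * u t = ∫ x in a..b, (∫ t in x..b, u t) * v x := by
  have hu1 : IntegrableOn u (Ioc a b) volume := hu.1
  have hv1 : IntegrableOn v (Ioc a b) volume := hv.1
  set μ := volume.restrict (Ioc a b) with hμ
  set H : ℝ → ℝ → ℝ := fun t x => if x < t then u t * v x else 0 with hH
  have hint : Integrable (Function.uncurry H) (μ.prod μ) := by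
    have hbase : Integrable (fun p : ℝ × ℝ => u p.1 * v p.2) (μ.prod μ) :=
      hu1.mul_prod hv1
    have heq : Function.uncurry H
        = ({p : ℝ × ℝ | p.2 < p.1}).indicator (fun p => u p.1 * v p.2) := by
      funext p; simp only [Function.uncurry, hH, Set.indicator, Set.mem_setOf_eq]
    rw [heq]
    exact hbase.indicator (measurableSet_lt measurable_snd measurable_fst)
  have key := integral_integral_swap hint
  have hL : ∫ t in a..b, (∫ x in a..t, v x) * u t = ∫ t, ∫ x, H t x ∂μ ∂μ := by
    rw [intervalIntegral.integral_of_le hab]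
    refine setIntegral_congr_fun measurableSet_Ioc (fun t ht => ?_)
    have h2 : ∫ x, H t x ∂μ = ∫ x in Ioo a t, u t * v x := by
      have h1 : ∀ x, H t x = (Iio t).indicator (fun x => u t * v x) x := by
        intro x; simp [hH, Set.indicator, Set.mem_Iio]
      simp_rw [h1]
      rw [hμ, integral_indicator measurableSet_Iio, Measure.restrict_restrict measurableSet_Iio]
      have hset : Iio t ∩ Ioc a b = Ioo a t := by
        ext y
        simp only [mem_inter_iff, mem_Iio, mem_Ioc, mem_Ioo]
        constructor
        · rintro ⟨h, h', _⟩; exact ⟨h', h⟩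
        · rintro ⟨h, h'⟩; exact ⟨h', h, h'.le.trans ht.2⟩
      rw [hset]
    rw [h2, integral_const_mul, intervalIntegral.integral_of_le ht.1.le,
      ← integral_Ioc_eq_integral_Ioo, mul_comm]
  have hR : ∫ x in a..b, (∫ t in x..b, u t) * v x = ∫ x, ∫ t, H t x ∂μ ∂μ := by
    rw [intervalIntegral.integral_of_le hab]
    refine setIntegral_congr_fun measurableSet_Ioc (fun x hx => ?_)
    have h2 : ∫ t, H t x ∂μ = ∫ t in Ioc x b, u t * v x := by
      have h1 : ∀ t, H t x = (Ioi x).indicator (fun t => u t * v x) t := by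
        intro t; simp [hH, Set.indicator, Set.mem_Ioi]
      simp_rw [h1]
      rw [hμ, integral_indicator measurableSet_Ioi, Measure.restrict_restrict measurableSet_Ioi]
      have hset : Ioi x ∩ Ioc a b = Ioc x b := by
        ext y
        simp only [mem_inter_iff, mem_Ioi, mem_Ioc]
        constructor
        · rintro ⟨h, _, h''⟩; exact ⟨h, h''⟩
        · rintro ⟨h, h'⟩; exact ⟨h, hx.1.trans h, h'⟩
      rw [hset]
    rw [h2, integral_mul_const, intervalIntegral.integral_of_le hx.2]
  rw [hL, hR]
  exact key

theorem steffensen_identity_one (a b : ℝ) (hab : a < b) (f f' g : ℝ → ℝ)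
    (hg : IntervalIntegrable g volume a b)
    (hg01 : ∀ t ∈ Set.Icc a b, 0 ≤ g t ∧ g t ≤ 1)
    (hf' : IntervalIntegrable f' volume a b)
    (hAC : ∀ x ∈ Set.Icc a b, f x = f a + ∫ t in a..x, f' t)
    (lam : ℝ) (hlam : lam = ∫ t in a..b, g t) :
    (∫ t in a..(a + lam), f t) - (∫ t in a..b, f t * g t)
      = -(∫ x in a..(a + lam), (∫ t in a..x, (1 - g t)) * f' x)
          - ∫ x in (a + lam)..b, (∫ t in x..b, g t) * f' x := by
  have hlam0 : 0 ≤ lam := by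
    rw [hlam]
    exact intervalIntegral.integral_nonneg hab.le (fun t ht => (hg01 t ht).1)
  have hlamb : lam ≤ b - a := by
    rw [hlam]
    calc ∫ t in a..b, g t ≤ ∫ t in a..b, (1:ℝ) :=
          intervalIntegral.integral_mono_on hab.le hg intervalIntegrable_const
            (fun t ht => (hg01 t ht).2)
      _ = b - a := by simp
  set c := a + lam with hc
  have hac : a ≤ c := by simp [hc]; linarith
  have hcb : c ≤ b := by simp [hc]; linarith
  have huab : Set.uIcc a b = Set.Icc a b := Set.uIcc_of_le hab.le
  have huac : Set.uIcc a c = Set.Icc a c := Set.uIcc_of_le hac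
  have hucb : Set.uIcc c b = Set.Icc c b := Set.uIcc_of_le hcb
  have hsubac : Set.uIcc a c ⊆ Set.uIcc a b := by
    rw [huab, huac]; exact Set.Icc_subset_Icc le_rfl hcb
  have hsubcb : Set.uIcc c b ⊆ Set.uIcc a b := by
    rw [huab, hucb]; exact Set.Icc_subset_Icc hac le_rfl
  set F : ℝ → ℝ := fun x => ∫ t in a..x, f' t with hF
  set G : ℝ → ℝ := fun x => ∫ t in a..x, g t with hG
  -- integrability and continuity facts
  have hf'I : IntegrableOn f' (Set.uIcc a b) volume := by
    rw [huab]; exact (intervalIntegrable_iff_integrableOn_Icc_of_le hab.le).1 hf'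
  have hgI : IntegrableOn g (Set.uIcc a b) volume := by
    rw [huab]; exact (intervalIntegrable_iff_integrableOn_Icc_of_le hab.le).1 hg
  have hFcont : ContinuousOn F (Set.uIcc a b) :=
    intervalIntegral.continuousOn_primitive_interval hf'I
  have hGcont : ContinuousOn G (Set.uIcc a b) :=
    intervalIntegral.continuousOn_primitive_interval hgI
  have hf'ac : IntervalIntegrable f' volume a c := hf'.mono_set hsubac
  have hf'cb : IntervalIntegrable f' volume c b := hf'.mono_set hsubcb
  have hgax : ∀ x ∈ Set.Icc a b, IntervalIntegrable g volume a x := by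
    intro x hx
    refine hg.mono_set ?_
    rw [huab, Set.uIcc_of_le hx.1]
    exact Set.Icc_subset_Icc le_rfl hx.2
  have hgxb : ∀ x ∈ Set.Icc a b, IntervalIntegrable g volume x b := by
    intro x hx
    refine hg.mono_set ?_
    rw [huab, Set.uIcc_of_le hx.2]
    exact Set.Icc_subset_Icc hx.1 le_rfl
  have hFac : IntervalIntegrable F volume a c :=
    (hFcont.mono hsubac).intervalIntegrable
  -- key pointwise fact: ∫ t in x..b, g t = lam - G x
  have hGtail : ∀ x ∈ Set.Icc a b, (∫ t in x..b, g t) = lam - G x := by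
    intro x hx
    have := intervalIntegral.integral_add_adjacent_intervals (hgax x hx) (hgxb x hx)
    rw [← hlam] at this
    simp only [hG]
    linarith
  -- E1
  have E1 : (∫ t in a..c, f t) = lam * f a + ∫ x in a..c, (c - x) * f' x := by
    have s1 : (∫ t in a..c, f t) = ∫ t in a..c, (f a + F t) := by
      refine intervalIntegral.integral_congr (fun t ht => ?_)
      exact hAC t (huab ▸ hsubac ht)
    have s2 : (∫ t in a..c, F t) = ∫ x in a..c, (c - x) * f' x := by
      have hs : (∫ t in a..c, F t * 1) = ∫ x in a..c, (∫ t in x..c, (1:ℝ)) * f' x :=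
        swap_triangle a c hac (fun _ => 1) f' intervalIntegrable_const hf'ac
      simp only [mul_one, intervalIntegral.integral_const, smul_eq_mul] at hs
      rw [hs]
    rw [s1, intervalIntegral.integral_add (by simp) hFac, s2,
      intervalIntegral.integral_const, smul_eq_mul, hc]
    ring
  -- E2
  have E2 : (∫ t in a..b, f t * g t)
      = f a * lam + ∫ x in a..b, (lam - G x) * f' x := by
    have s1 : (∫ t in a..b, f t * g t) = ∫ t in a..b, (f a * g t + F t * g t) := by
      refine intervalIntegral.integral_congr (fun t ht => ?_)
      rw [hAC t (huab ▸ ht)]; ring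
    have s4 : (∫ t in a..b, F t * g t) = ∫ x in a..b, (∫ t in x..b, g t) * f' x :=
      swap_triangle a b hab.le g f' hg hf'
    have s5 : (∫ x in a..b, (∫ t in x..b, g t) * f' x)
        = ∫ x in a..b, (lam - G x) * f' x := by
      refine intervalIntegral.integral_congr (fun x hx => ?_)
      rw [hGtail x (huab ▸ hx)]
    rw [s1, intervalIntegral.integral_add (hg.const_mul (f a))
        (hg.continuousOn_mul hFcont),
      intervalIntegral.integral_const_mul, ← hlam, s4, s5]
  -- E3
  have E3 : (∫ x in a..c, (∫ t in a..x, (1 - g t)) * f' x)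
      = ∫ x in a..c, ((x - a) - G x) * f' x := by
    refine intervalIntegral.integral_congr (fun x hx => ?_)
    have hx' : x ∈ Set.Icc a b := huab ▸ hsubac hx
    rw [intervalIntegral.integral_sub intervalIntegrable_const (hgax x hx')]
    simp [hG]
  -- E4
  have E4 : (∫ x in c..b, (∫ t in x..b, g t) * f' x)
      = ∫ x in c..b, (lam - G x) * f' x := by
    refine intervalIntegral.integral_congr (fun x hx => ?_)
    rw [hGtail x (huab ▸ hsubcb hx)]
  -- split ∫ a..b (lam - G)·f' into a..c and c..b
  have iGf'ac : IntervalIntegrable (fun x => (lam - G x) * f' x) volume a c :=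
    hf'ac.continuousOn_mul ((continuousOn_const.sub hGcont).mono hsubac)
  have iGf'cb : IntervalIntegrable (fun x => (lam - G x) * f' x) volume c b :=
    hf'cb.continuousOn_mul ((continuousOn_const.sub hGcont).mono hsubcb)
  have hsplit := intervalIntegral.integral_add_adjacent_intervals iGf'ac iGf'cb
  -- key linear identity on a..c
  have iXf'ac : IntervalIntegrable (fun x => ((x - a) - G x) * f' x) volume a c :=
    hf'ac.continuousOn_mul
      (((continuousOn_id.sub continuousOn_const).sub hGcont).mono hsubac)
  have Ekey : (∫ x in a..c, (c - x) * f' x)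
      = (∫ x in a..c, (lam - G x) * f' x)
        - ∫ x in a..c, ((x - a) - G x) * f' x := by
    rw [← intervalIntegral.integral_sub iGf'ac iXf'ac]
    refine intervalIntegral.integral_congr (fun x hx => ?_)
    simp only [hc]; ring
  rw [E1, E2, E3, E4, Ekey, ← hsplit]
  ring
end

section
/- Let g : [a,b] → ℝ be integrable with 0 ≤ g(t) ≤ 1 for all t ∈ [a,b], let f : [a,b] → ℝ be absolutely continuous on [a,b] with derivative f', and set λ = ∫_a^b g(t) dt. Then ∫_a^b f(t) g(t) dt − ∫_{b-λ}^b f(t) dt = −∫_a^{b-λ} (∫_a^x g(t) dt) f'(x) dx − ∫_{b-λ}^b (∫_x^b (1 − g(t)) dt) f'(x) dx. -/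
open MeasureTheory

theorem fubini_triangle (p q : ℝ) (hpq : p ≤ q) (u v : ℝ → ℝ)
    (hu : IntervalIntegrable u volume p q) (hv : IntervalIntegrable v volume p q) :
    ∫ t in p..q, (∫ x in p..t, u x) * v t = ∫ x in p..q, (∫ t in x..q, v t) * u x := by
  set μ := volume.restrict (Set.Ioc p q) with hμ
  have hu' : Integrable u μ := hu.1
  have hv' : Integrable v μ := hv.1
  set F : ℝ → ℝ → ℝ := fun t x => Set.indicator {z : ℝ × ℝ | z.2 ≤ z.1}
    (fun z => u z.2 * v z.1) (t, x) with hF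
  have hS : MeasurableSet {z : ℝ × ℝ | z.2 ≤ z.1} :=
    measurableSet_le measurable_snd measurable_fst
  have hFint : Integrable (Function.uncurry F) (μ.prod μ) := by
    have : Integrable (fun z : ℝ × ℝ => v z.1 * u z.2) (μ.prod μ) := hv'.mul_prod hu'
    have h2 : Integrable (fun z : ℝ × ℝ => u z.2 * v z.1) (μ.prod μ) := by
      simpa [mul_comm] using this
    have := h2.indicator hS
    exact this.congr (by filter_upwards with z; rcases z with ⟨t, x⟩; rfl)
  have key : ∫ t, ∫ x, F t x ∂μ ∂μ = ∫ x, ∫ t, F t x ∂μ ∂μ :=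
    integral_integral_swap hFint
  have hL : ∫ t in p..q, (∫ x in p..t, u x) * v t = ∫ t, ∫ x, F t x ∂μ ∂μ := by
    rw [intervalIntegral.integral_of_le hpq]
    refine setIntegral_congr_fun measurableSet_Ioc fun t ht => ?_
    have : ∀ x, F t x = (Set.Iic t).indicator (fun x => u x * v t) x := by
      intro x
      by_cases h : x ≤ t <;>
        simp [hF, Set.indicator_apply, h, Set.mem_Iic]
    simp_rw [this]
    rw [integral_indicator measurableSet_Iic, hμ, Measure.restrict_restrict measurableSet_Iic]
    have hset : Set.Iic t ∩ Set.Ioc p q = Set.Ioc p t := by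
      ext x
      simp only [Set.mem_inter_iff, Set.mem_Iic, Set.mem_Ioc]
      exact ⟨fun ⟨h1, h2, _⟩ => ⟨h2, h1⟩, fun ⟨h1, h2⟩ => ⟨h2, h1, h2.trans ht.2⟩⟩
    rw [hset, intervalIntegral.integral_of_le ht.1.le, ← integral_mul_const]
  have hR : ∫ x, ∫ t, F t x ∂μ ∂μ = ∫ x in p..q, (∫ t in x..q, v t) * u x := by
    rw [intervalIntegral.integral_of_le hpq]
    refine (setIntegral_congr_fun measurableSet_Ioc fun x hx => ?_)
    have : ∀ t, F t x = (Set.Ici x).indicator (fun t => u x * v t) t := by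
      intro t
      by_cases h : x ≤ t <;>
        simp [hF, Set.indicator_apply, h, Set.mem_Ici]
    simp_rw [this]
    rw [integral_indicator measurableSet_Ici, hμ, Measure.restrict_restrict measurableSet_Ici]
    have hset : Set.Ici x ∩ Set.Ioc p q = Set.Icc x q := by
      ext t
      simp only [Set.mem_inter_iff, Set.mem_Ici, Set.mem_Ioc, Set.mem_Icc]
      exact ⟨fun ⟨h1, _, h3⟩ => ⟨h1, h3⟩, fun ⟨h1, h2⟩ => ⟨h1, hx.1.trans_le h1, h2⟩⟩
    rw [hset, integral_Icc_eq_integral_Ioc, ← intervalIntegral.integral_of_le hx.2,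
      intervalIntegral.integral_const_mul, mul_comm (u x)]
  rw [hL, key, hR]

set_option maxHeartbeats 1000000 in
theorem steffensen_identity_two (a b : ℝ) (hab : a < b) (f f' g : ℝ → ℝ)
    (hg : IntervalIntegrable g volume a b)
    (hg01 : ∀ t ∈ Set.Icc a b, 0 ≤ g t ∧ g t ≤ 1)
    (hf' : IntervalIntegrable f' volume a b)
    (hAC : ∀ x ∈ Set.Icc a b, f x = f a + ∫ t in a..x, f' t)
    (lam : ℝ) (hlam : lam = ∫ t in a..b, g t) :
    (∫ t in a..b, f t * g t) - (∫ t in (b - lam)..b, f t)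
      = -(∫ x in a..(b - lam), (∫ t in a..x, g t) * f' x)
          - ∫ x in (b - lam)..b, (∫ t in x..b, (1 - g t)) * f' x := by
  set c := b - lam with hc
  have h0lam : 0 ≤ lam := by
    rw [hlam]
    exact intervalIntegral.integral_nonneg hab.le fun t ht => (hg01 t ht).1
  have hlamba : lam ≤ b - a := by
    rw [hlam]
    calc ∫ t in a..b, g t ≤ ∫ _t in a..b, (1:ℝ) :=
          intervalIntegral.integral_mono_on hab.le hg intervalIntegrable_const
            fun x hx => (hg01 x hx).2
      _ = b - a := by simp
  have hac : a ≤ c := by rw [hc]; linarith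
  have hcb : c ≤ b := by rw [hc]; linarith
  have huIcc : Set.uIcc a b = Set.Icc a b := Set.uIcc_of_le hab.le
  -- integrability on uIcc
  have hgIcc : IntegrableOn g (Set.uIcc a b) volume := by
    rw [huIcc]
    exact (intervalIntegrable_iff_integrableOn_Icc_of_le hab.le).mp hg
  have hf'Icc : IntegrableOn f' (Set.uIcc a b) volume := by
    rw [huIcc]
    exact (intervalIntegrable_iff_integrableOn_Icc_of_le hab.le).mp hf'
  have Fcont : ContinuousOn (fun t => ∫ x in a..t, f' x) (Set.uIcc a b) :=
    intervalIntegral.continuousOn_primitive_interval hf'Icc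
  have Gcont' : ContinuousOn (fun x => ∫ t in x..b, g t) (Set.uIcc a b) :=
    intervalIntegral.continuousOn_primitive_interval_left hgIcc
  -- subinterval integrability
  have hsub1 : Set.uIcc a c ⊆ Set.uIcc a b :=
    Set.uIcc_subset_uIcc Set.left_mem_uIcc (by rw [huIcc]; exact ⟨hac, hcb⟩)
  have hsub2 : Set.uIcc c b ⊆ Set.uIcc a b :=
    Set.uIcc_subset_uIcc (by rw [huIcc]; exact ⟨hac, hcb⟩) Set.right_mem_uIcc
  have hf'1 : IntervalIntegrable f' volume a c := hf'.mono_set hsub1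
  have hf'2 : IntervalIntegrable f' volume c b := hf'.mono_set hsub2
  have hGf'ab : IntervalIntegrable (fun x => (∫ t in x..b, g t) * f' x) volume a b :=
    hf'.continuousOn_mul Gcont'
  have hGf'1 : IntervalIntegrable (fun x => (∫ t in x..b, g t) * f' x) volume a c :=
    hf'1.continuousOn_mul (Gcont'.mono hsub1)
  have hGf'2 : IntervalIntegrable (fun x => (∫ t in x..b, g t) * f' x) volume c b :=
    hf'2.continuousOn_mul (Gcont'.mono hsub2)
  -- step 1 : first integral
  have e1 : ∫ t in a..b, f t * g t
      = f a * lam + ∫ x in a..b, (∫ t in x..b, g t) * f' x := by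
    have h1 : ∫ t in a..b, f t * g t
        = ∫ t in a..b, (f a * g t + (∫ x in a..t, f' x) * g t) := by
      refine intervalIntegral.integral_congr fun t ht => ?_
      rw [hAC t (huIcc ▸ ht), add_mul]
    rw [h1, intervalIntegral.integral_add (hg.const_mul _) (hg.continuousOn_mul Fcont),
      intervalIntegral.integral_const_mul, ← hlam,
      fubini_triangle a b hab.le f' g hf' hg]
  -- step 2 : second integral
  have e3 : ∫ t in c..b, f t
      = f a * lam + lam * (∫ x in a..c, f' x) + ∫ x in c..b, (b - x) * f' x := by
    have h1 : ∫ t in c..b, f t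
        = ∫ t in c..b, ((f a + ∫ x in a..c, f' x) + ∫ x in c..t, f' x) := by
      refine intervalIntegral.integral_congr fun t ht => ?_
      have ht' : t ∈ Set.Icc a b := by
        have := hsub2 ht
        rwa [huIcc] at this
      rw [hAC t ht', add_assoc,
        intervalIntegral.integral_add_adjacent_intervals hf'1
          (hf'.mono_set (Set.uIcc_subset_uIcc (by rw [huIcc]; exact ⟨hac, hcb⟩)
            (by rwa [huIcc])))]
    have hPcont : ContinuousOn (fun t => ∫ x in c..t, f' x) (Set.uIcc c b) :=
      intervalIntegral.continuousOn_primitive_interval (hf'Icc.mono_set hsub2)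
    have hPint : IntervalIntegrable (fun t => ∫ x in c..t, f' x) volume c b :=
      hPcont.intervalIntegrable
    rw [h1, intervalIntegral.integral_add intervalIntegrable_const hPint,
      intervalIntegral.integral_const]
    have h2 : ∫ t in c..b, (∫ x in c..t, f' x)
        = ∫ x in c..b, (∫ t in x..b, (1:ℝ)) * f' x := by
      have := fubini_triangle c b hcb f' (fun _ => (1:ℝ)) hf'2 intervalIntegrable_const
      simpa using this
    have h3 : ∫ x in c..b, (∫ t in x..b, (1:ℝ)) * f' x = ∫ x in c..b, (b - x) * f' x := by
      refine intervalIntegral.integral_congr fun x hx => ?_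
      simp
    have hbc : b - c = lam := by rw [hc]; ring
    rw [h2, h3, hbc]
    simp only [smul_eq_mul]
    ring
  -- rewrite RHS second term
  have e4 : ∫ x in c..b, (∫ t in x..b, (1 - g t)) * f' x
      = ∫ x in c..b, ((b - x) - ∫ t in x..b, g t) * f' x := by
    refine intervalIntegral.integral_congr fun x hx => ?_
    have hgx : IntervalIntegrable g volume x b :=
      hg.mono_set (Set.uIcc_subset_uIcc (hsub2 hx) (by rw [huIcc]; exact ⟨hab.le, le_refl b⟩))
    rw [intervalIntegral.integral_sub intervalIntegrable_const hgx,
      intervalIntegral.integral_const]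
    simp only [smul_eq_mul]
    ring
  -- rewrite RHS first term
  have e5 : ∫ x in a..c, (∫ t in a..x, g t) * f' x
      = ∫ x in a..c, (lam - ∫ t in x..b, g t) * f' x := by
    refine intervalIntegral.integral_congr fun x hx => ?_
    have hx' : x ∈ Set.Icc a b := by
      have := hsub1 hx; rwa [huIcc] at this
    have hg1 : IntervalIntegrable g volume a x :=
      hg.mono_set (Set.uIcc_subset_uIcc Set.left_mem_uIcc (by rwa [huIcc]))
    have hg2 : IntervalIntegrable g volume x b :=
      hg.mono_set (Set.uIcc_subset_uIcc (by rwa [huIcc]) Set.right_mem_uIcc)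
    have := intervalIntegral.integral_add_adjacent_intervals hg1 hg2
    rw [← hlam] at this
    have : (∫ t in a..x, g t) = lam - ∫ t in x..b, g t := by linarith
    rw [this]
  -- split the middle integral
  have esplit : ∫ x in a..b, (∫ t in x..b, g t) * f' x
      = (∫ x in a..c, (∫ t in x..b, g t) * f' x) + ∫ x in c..b, (∫ t in x..b, g t) * f' x :=
    (intervalIntegral.integral_add_adjacent_intervals hGf'1 hGf'2).symm
  -- expand the RHS subtractions
  have e6 : ∫ x in a..c, (lam - ∫ t in x..b, g t) * f' x
      = lam * (∫ x in a..c, f' x) - ∫ x in a..c, (∫ t in x..b, g t) * f' x := by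
    have h1 : ∀ x ∈ Set.uIcc a c, (lam - ∫ t in x..b, g t) * f' x
        = lam * f' x - (∫ t in x..b, g t) * f' x := fun x _ => by ring
    rw [intervalIntegral.integral_congr h1,
      intervalIntegral.integral_sub (hf'1.const_mul _) hGf'1,
      intervalIntegral.integral_const_mul]
  have e7 : ∫ x in c..b, ((b - x) - ∫ t in x..b, g t) * f' x
      = (∫ x in c..b, (b - x) * f' x) - ∫ x in c..b, (∫ t in x..b, g t) * f' x := by
    have h1 : ∀ x ∈ Set.uIcc c b, ((b - x) - ∫ t in x..b, g t) * f' x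
        = (b - x) * f' x - (∫ t in x..b, g t) * f' x := fun x _ => by ring
    have hbx : IntervalIntegrable (fun x => (b - x) * f' x) volume c b :=
      hf'2.continuousOn_mul (by fun_prop)
    rw [intervalIntegral.integral_congr h1,
      intervalIntegral.integral_sub hbx hGf'2]
  rw [e1, e3, e4, e5, esplit, e6, e7]
  ring
end

section
/- Let f, g : [a,b] → ℝ with g integrable, 0 ≤ g(t) ≤ 1 for all t ∈ [a,b], f of bounded variation on [a,b], f integrable, and f·g integrable on [a,b]. Setting λ = ∫_a^b g(t) dt, one has |∫_a^{a+λ} f(t) dt − ∫_a^b f(t) g(t) dt| ≤ (∫_{a+λ}^b g(t) dt) · V_a^b(f) ≤ (b − a − λ) · V_a^b(f). -/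
open MeasureTheory

theorem steffensen_bounded_variation_one (a b : ℝ) (hab : a < b) (f g : ℝ → ℝ)
    (hg : IntervalIntegrable g volume a b)
    (hg01 : ∀ t ∈ Set.Icc a b, 0 ≤ g t ∧ g t ≤ 1)
    (hf_bv : BoundedVariationOn f (Set.Icc a b))
    (hf : IntervalIntegrable f volume a b)
    (hfg : IntervalIntegrable (fun t => f t * g t) volume a b)
    (lam : ℝ) (hlam : lam = ∫ t in a..b, g t) :
    |(∫ t in a..(a + lam), f t) - ∫ t in a..b, f t * g t|
        ≤ (∫ t in (a + lam)..b, g t) * (eVariationOn f (Set.Icc a b)).toReal ∧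
      (∫ t in (a + lam)..b, g t) * (eVariationOn f (Set.Icc a b)).toReal
        ≤ (b - a - lam) * (eVariationOn f (Set.Icc a b)).toReal := by
  have hab' : a ≤ b := hab.le
  have hlam0 : 0 ≤ lam := by
    rw [hlam]
    exact intervalIntegral.integral_nonneg hab' (fun u hu => (hg01 u hu).1)
  have hlamle : lam ≤ b - a := by
    rw [hlam]
    calc (∫ t in a..b, g t) ≤ ∫ _t in a..b, (1 : ℝ) :=
          intervalIntegral.integral_mono_on hab' hg intervalIntegrable_const
            (fun x hx => (hg01 x hx).2)
      _ = b - a := by simp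
  set c := a + lam with hc
  have hac : a ≤ c := by simp [hc]; linarith
  have hcb : c ≤ b := by simp [hc]; linarith
  -- subinterval integrabilities
  have hsub1 : Set.uIcc a c ⊆ Set.uIcc a b := by
    rw [Set.uIcc_of_le hac, Set.uIcc_of_le hab']
    exact Set.Icc_subset_Icc le_rfl hcb
  have hsub2 : Set.uIcc c b ⊆ Set.uIcc a b := by
    rw [Set.uIcc_of_le hcb, Set.uIcc_of_le hab']
    exact Set.Icc_subset_Icc hac le_rfl
  have hg1 : IntervalIntegrable g volume a c := hg.mono_set hsub1
  have hg2 : IntervalIntegrable g volume c b := hg.mono_set hsub2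
  have hf1 : IntervalIntegrable f volume a c := hf.mono_set hsub1
  have hfg1 : IntervalIntegrable (fun t => f t * g t) volume a c := hfg.mono_set hsub1
  have hfg2 : IntervalIntegrable (fun t => f t * g t) volume c b := hfg.mono_set hsub2
  set μ : ℝ := ∫ t in c..b, g t with hμ
  have hgsplit : (∫ t in a..c, g t) + μ = lam := by
    rw [hμ, hlam]
    exact intervalIntegral.integral_add_adjacent_intervals hg1 hg2
  have hμ0 : 0 ≤ μ :=
    intervalIntegral.integral_nonneg hcb
      (fun u hu => (hg01 u (Set.Icc_subset_Icc hac le_rfl hu)).1)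
  have hone : (∫ t in a..c, (1 - g t)) = μ := by
    rw [intervalIntegral.integral_sub intervalIntegrable_const hg1]
    simp only [intervalIntegral.integral_const, smul_eq_mul, mul_one]
    have : c - a = lam := by simp [hc]
    linarith [hgsplit]
  -- variations on subintervals
  have hbv1 : BoundedVariationOn f (Set.Icc a c) :=
    hf_bv.mono (Set.Icc_subset_Icc le_rfl hcb)
  have hbv2 : BoundedVariationOn f (Set.Icc c b) :=
    hf_bv.mono (Set.Icc_subset_Icc hac le_rfl)
  set V1 : ℝ := (eVariationOn f (Set.Icc a c)).toReal with hV1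
  set V2 : ℝ := (eVariationOn f (Set.Icc c b)).toReal with hV2
  set V : ℝ := (eVariationOn f (Set.Icc a b)).toReal with hV
  have hVadd : V1 + V2 = V := by
    have h := eVariationOn.Icc_add_Icc f (s := Set.Icc a b) hac hcb ⟨hac, hcb⟩
    have e1 : Set.Icc a b ∩ Set.Icc a c = Set.Icc a c := by
      rw [Set.Icc_inter_Icc]; simp [hcb]
    have e2 : Set.Icc a b ∩ Set.Icc c b = Set.Icc c b := by
      rw [Set.Icc_inter_Icc]; simp [hac]
    have e3 : Set.Icc a b ∩ Set.Icc a b = Set.Icc a b := Set.inter_self _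
    rw [e1, e2, e3] at h
    rw [hV1, hV2, hV, ← h, ENNReal.toReal_add hbv1 hbv2]
  have hV1nn : 0 ≤ V1 := ENNReal.toReal_nonneg
  have hV2nn : 0 ≤ V2 := ENNReal.toReal_nonneg
  have hVnn : 0 ≤ V := ENNReal.toReal_nonneg
  -- integrability of shifted products
  have hi1 : IntervalIntegrable (fun t => (f t - f c) * (1 - g t)) volume a c := by
    have heq : (fun t => (f t - f c) * (1 - g t))
        = fun t => (f t - f t * g t) + (f c * g t - f c) := by ext t; ring
    rw [heq]
    exact (hf1.sub hfg1).add ((hg1.const_mul (f c)).sub intervalIntegrable_const)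
  have hi2 : IntervalIntegrable (fun t => (f t - f c) * g t) volume c b := by
    have heq : (fun t => (f t - f c) * g t) = fun t => f t * g t - f c * g t := by
      ext t; ring
    rw [heq]
    exact hfg2.sub (hg2.const_mul (f c))
  -- the decomposition of the difference
  have hsplitfg : (∫ t in a..b, f t * g t)
      = (∫ t in a..c, f t * g t) + ∫ t in c..b, f t * g t :=
    (intervalIntegral.integral_add_adjacent_intervals hfg1 hfg2).symm
  have hI1 : (∫ t in a..c, (f t - f c) * (1 - g t))
      = (∫ t in a..c, f t) - (∫ t in a..c, f t * g t) - f c * μ := by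
    have heq : (fun t => (f t - f c) * (1 - g t))
        = fun t => (f t - f t * g t) - f c * (1 - g t) := by ext t; ring
    rw [heq, intervalIntegral.integral_sub (hf1.sub hfg1)
      ((intervalIntegrable_const.sub hg1).const_mul (f c)),
      intervalIntegral.integral_sub hf1 hfg1, intervalIntegral.integral_const_mul, hone]
  have hI2 : (∫ t in c..b, (f t - f c) * g t)
      = (∫ t in c..b, f t * g t) - f c * μ := by
    have heq : (fun t => (f t - f c) * g t) = fun t => f t * g t - f c * g t := by
      ext t; ring
    rw [heq, intervalIntegral.integral_sub hfg2 (hg2.const_mul (f c)),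
      intervalIntegral.integral_const_mul, ← hμ]
  have hD : (∫ t in a..c, f t) - (∫ t in a..b, f t * g t)
      = (∫ t in a..c, (f t - f c) * (1 - g t)) - ∫ t in c..b, (f t - f c) * g t := by
    rw [hI1, hI2, hsplitfg]; ring
  -- bound the first piece
  have hb1 : |∫ t in a..c, (f t - f c) * (1 - g t)| ≤ V1 * μ := by
    refine (intervalIntegral.abs_integral_le_integral_abs hac).trans ?_
    have : (∫ t in a..c, |(f t - f c) * (1 - g t)|) ≤ ∫ t in a..c, V1 * (1 - g t) := by
      refine intervalIntegral.integral_mono_on hac hi1.abs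
        ((intervalIntegrable_const.sub hg1).const_mul V1) (fun x hx => ?_)
      have hx' : x ∈ Set.Icc a b := Set.Icc_subset_Icc le_rfl hcb hx
      have hgx := hg01 x hx'
      rw [abs_mul, abs_of_nonneg (by linarith [hgx.2] : (0:ℝ) ≤ 1 - g x)]
      apply mul_le_mul_of_nonneg_right _ (by linarith [hgx.2])
      have := hbv1.dist_le hx ⟨hac, le_rfl⟩
      rwa [Real.dist_eq] at this
    refine this.trans ?_
    rw [intervalIntegral.integral_const_mul, hone]
  -- bound the second piece
  have hb2 : |∫ t in c..b, (f t - f c) * g t| ≤ V2 * μ := by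
    refine (intervalIntegral.abs_integral_le_integral_abs hcb).trans ?_
    have : (∫ t in c..b, |(f t - f c) * g t|) ≤ ∫ t in c..b, V2 * g t := by
      refine intervalIntegral.integral_mono_on hcb hi2.abs
        (hg2.const_mul V2) (fun x hx => ?_)
      have hx' : x ∈ Set.Icc a b := Set.Icc_subset_Icc hac le_rfl hx
      have hgx := hg01 x hx'
      rw [abs_mul, abs_of_nonneg hgx.1]
      apply mul_le_mul_of_nonneg_right _ hgx.1
      have := hbv2.dist_le hx ⟨le_rfl, hcb⟩
      rwa [Real.dist_eq] at this
    refine this.trans ?_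
    rw [intervalIntegral.integral_const_mul, ← hμ]
  constructor
  · calc |(∫ t in a..c, f t) - ∫ t in a..b, f t * g t|
        = |(∫ t in a..c, (f t - f c) * (1 - g t)) - ∫ t in c..b, (f t - f c) * g t| := by
          rw [hD]
      _ ≤ |∫ t in a..c, (f t - f c) * (1 - g t)| + |∫ t in c..b, (f t - f c) * g t| :=
          abs_sub _ _
      _ ≤ V1 * μ + V2 * μ := add_le_add hb1 hb2
      _ = μ * V := by rw [← hVadd]; ring
  · have hμle : μ ≤ b - a - lam := by
      rw [hμ]
      calc (∫ t in c..b, g t) ≤ ∫ _t in c..b, (1 : ℝ) :=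
            intervalIntegral.integral_mono_on hcb hg2 intervalIntegrable_const
              (fun x hx => (hg01 x (Set.Icc_subset_Icc hac le_rfl hx)).2)
        _ = b - c := by simp
        _ = b - a - lam := by simp [hc]; ring
    exact mul_le_mul_of_nonneg_right hμle hVnn
end

section
/- Let f, g : [a,b] → ℝ with g integrable, 0 ≤ g(t) ≤ 1 for all t ∈ [a,b], f of bounded variation on [a,b], f integrable, and f·g integrable on [a,b]. Setting λ = ∫_a^b g(t) dt, one has |∫_a^b f(t) g(t) dt − ∫_{b-λ}^b f(t) dt| ≤ (∫_a^{b-λ} g(t) dt) · V_a^b(f) ≤ (b − a − λ) · V_a^b(f). -/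
open MeasureTheory

theorem steffensen_bounded_variation_two (a b : ℝ) (hab : a < b) (f g : ℝ → ℝ)
    (hg : IntervalIntegrable g volume a b)
    (hg01 : ∀ t ∈ Set.Icc a b, 0 ≤ g t ∧ g t ≤ 1)
    (hf_bv : BoundedVariationOn f (Set.Icc a b))
    (hf : IntervalIntegrable f volume a b)
    (hfg : IntervalIntegrable (fun t => f t * g t) volume a b)
    (lam : ℝ) (hlam : lam = ∫ t in a..b, g t) :
    |(∫ t in a..b, f t * g t) - ∫ t in (b - lam)..b, f t|
        ≤ (∫ t in a..(b - lam), g t) * (eVariationOn f (Set.Icc a b)).toReal ∧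
      (∫ t in a..(b - lam), g t) * (eVariationOn f (Set.Icc a b)).toReal
        ≤ (b - a - lam) * (eVariationOn f (Set.Icc a b)).toReal := by
  set c : ℝ := b - lam with hc
  have hab' : a ≤ b := hab.le
  -- 0 ≤ lam ≤ b - a
  have hlam0 : 0 ≤ lam := by
    rw [hlam]
    exact intervalIntegral.integral_nonneg hab' (fun t ht => (hg01 t ht).1)
  have hlamle : lam ≤ b - a := by
    rw [hlam]
    calc ∫ t in a..b, g t ≤ ∫ t in a..b, (1 : ℝ) :=
          intervalIntegral.integral_mono_on hab' hg intervalIntegrable_const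
            (fun t ht => (hg01 t ht).2)
      _ = b - a := by simp
  have hac : a ≤ c := by simp only [hc]; linarith
  have hcb : c ≤ b := by simp only [hc]; linarith
  have hmemc : c ∈ Set.Icc a b := ⟨hac, hcb⟩
  have hsub1 : Set.uIcc a c ⊆ Set.uIcc a b := by
    rw [Set.uIcc_of_le hac, Set.uIcc_of_le hab']
    exact Set.Icc_subset_Icc le_rfl hcb
  have hsub2 : Set.uIcc c b ⊆ Set.uIcc a b := by
    rw [Set.uIcc_of_le hcb, Set.uIcc_of_le hab']
    exact Set.Icc_subset_Icc hac le_rfl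
  -- integrability on subintervals
  have hg1 : IntervalIntegrable g volume a c := hg.mono_set hsub1
  have hg2 : IntervalIntegrable g volume c b := hg.mono_set hsub2
  have hfg1 : IntervalIntegrable (fun t => f t * g t) volume a c := hfg.mono_set hsub1
  have hfg2 : IntervalIntegrable (fun t => f t * g t) volume c b := hfg.mono_set hsub2
  have hf2 : IntervalIntegrable f volume c b := hf.mono_set hsub2
  -- variation on pieces
  have hsplit : eVariationOn f (Set.Icc a c) + eVariationOn f (Set.Icc c b)
      = eVariationOn f (Set.Icc a b) := by
    have := eVariationOn.Icc_add_Icc f (s := Set.Icc a b) hac hcb hmemc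
    simpa [Set.Icc_inter_Icc, max_eq_left hac, min_eq_left hcb, min_eq_right hcb, max_eq_right hac,
      max_eq_left hab', min_eq_left (le_refl b), max_self] using this
  have hV1top : eVariationOn f (Set.Icc a c) ≠ ⊤ :=
    (eVariationOn.mono f (Set.Icc_subset_Icc le_rfl hcb)).trans_lt hf_bv.lt_top |>.ne
  have hV2top : eVariationOn f (Set.Icc c b) ≠ ⊤ :=
    (eVariationOn.mono f (Set.Icc_subset_Icc hac le_rfl)).trans_lt hf_bv.lt_top |>.ne
  set V1 : ℝ := (eVariationOn f (Set.Icc a c)).toReal with hV1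
  set V2 : ℝ := (eVariationOn f (Set.Icc c b)).toReal with hV2
  have hVsum : (eVariationOn f (Set.Icc a b)).toReal = V1 + V2 := by
    rw [← hsplit, ENNReal.toReal_add hV1top hV2top]
  -- pointwise distance bounds
  have hb1 : ∀ t ∈ Set.Icc a c, |f t - f c| ≤ V1 := by
    intro t ht
    have := eVariationOn.edist_le f ht (Set.right_mem_Icc.2 hac)
    rw [edist_dist] at this
    have h2 := ENNReal.toReal_mono hV1top this
    rwa [ENNReal.toReal_ofReal dist_nonneg, Real.dist_eq] at h2
  have hb2 : ∀ t ∈ Set.Icc c b, |f t - f c| ≤ V2 := by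
    intro t ht
    have := eVariationOn.edist_le f ht (Set.left_mem_Icc.2 hcb)
    rw [edist_dist] at this
    have h2 := ENNReal.toReal_mono hV2top this
    rwa [ENNReal.toReal_ofReal dist_nonneg, Real.dist_eq] at h2
  -- integrability of the shifted products
  have hA : IntervalIntegrable (fun t => (f t - f c) * g t) volume a c := by
    have : (fun t => (f t - f c) * g t) = fun t => f t * g t - f c * g t := by
      ext t; ring
    rw [this]
    exact hfg1.sub (hg1.const_mul (f c))
  have hB : IntervalIntegrable (fun t => (f t - f c) * (g t - 1)) volume c b := by
    have : (fun t => (f t - f c) * (g t - 1)) =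
        fun t => (f t * g t - f c * g t) - (f t - f c) := by
      ext t; ring
    rw [this]
    exact (hfg2.sub (hg2.const_mul (f c))).sub (hf2.sub intervalIntegrable_const)
  -- key identity
  have hIacg : (∫ t in a..c, g t) + ∫ t in c..b, g t = lam := by
    rw [hlam]; exact intervalIntegral.integral_add_adjacent_intervals hg1 hg2
  have hkey : (∫ t in a..b, f t * g t) - (∫ t in c..b, f t)
      = (∫ t in a..c, (f t - f c) * g t) + ∫ t in c..b, (f t - f c) * (g t - 1) := by
    have hsplitI : (∫ t in a..b, f t * g t)
        = (∫ t in a..c, f t * g t) + ∫ t in c..b, f t * g t :=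
      (intervalIntegral.integral_add_adjacent_intervals hfg1 hfg2).symm
    have e1 : (∫ t in a..c, (f t - f c) * g t)
        = (∫ t in a..c, f t * g t) - f c * ∫ t in a..c, g t := by
      have : (fun t => (f t - f c) * g t) = fun t => f t * g t - f c * g t := by
        ext t; ring
      rw [this, intervalIntegral.integral_sub hfg1 (hg1.const_mul (f c)),
        intervalIntegral.integral_const_mul]
    have e2 : (∫ t in c..b, (f t - f c) * (g t - 1))
        = ((∫ t in c..b, f t * g t) - f c * ∫ t in c..b, g t)
          - ((∫ t in c..b, f t) - f c * (b - c)) := by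
      have : (fun t => (f t - f c) * (g t - 1)) =
          fun t => (f t * g t - f c * g t) - (f t - f c) := by
        ext t; ring
      rw [this, intervalIntegral.integral_sub (hfg2.sub (hg2.const_mul (f c)))
          (hf2.sub intervalIntegrable_const),
        intervalIntegral.integral_sub hfg2 (hg2.const_mul (f c)),
        intervalIntegral.integral_sub hf2 intervalIntegrable_const,
        intervalIntegral.integral_const_mul, intervalIntegral.integral_const,
        smul_eq_mul]
      ring
    have hbc : b - c = lam := by simp [hc]
    rw [e1, e2, hsplitI, hbc]
    have : f c * (∫ t in a..c, g t) + f c * (∫ t in c..b, g t) = f c * lam := by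
      rw [← mul_add, hIacg]
    linarith
  set I : ℝ := ∫ t in a..c, g t with hI
  have hInn : 0 ≤ I := intervalIntegral.integral_nonneg hac
    (fun t ht => (hg01 t ⟨ht.1, ht.2.trans hcb⟩).1)
  have hIcb : (∫ t in c..b, (1 - g t)) = I := by
    rw [intervalIntegral.integral_sub intervalIntegrable_const hg2,
      intervalIntegral.integral_const, smul_eq_mul]
    have hbc : b - c = lam := by simp [hc]
    have h2 : (∫ t in c..b, g t) = lam - I := by linarith [hIacg]
    rw [h2, hbc]; ring
  have hV1nn : 0 ≤ V1 := ENNReal.toReal_nonneg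
  have hV2nn : 0 ≤ V2 := ENNReal.toReal_nonneg
  -- bound first integral
  have hbound1 : |∫ t in a..c, (f t - f c) * g t| ≤ V1 * I := by
    calc |∫ t in a..c, (f t - f c) * g t| ≤ ∫ t in a..c, |(f t - f c) * g t| :=
          intervalIntegral.abs_integral_le_integral_abs hac
      _ ≤ ∫ t in a..c, V1 * g t := by
          apply intervalIntegral.integral_mono_on hac hA.abs (hg1.const_mul V1)
          intro t ht
          have hg0 := (hg01 t ⟨ht.1, ht.2.trans hcb⟩).1
          rw [abs_mul, abs_of_nonneg hg0]
          exact mul_le_mul_of_nonneg_right (hb1 t ht) hg0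
      _ = V1 * I := by rw [intervalIntegral.integral_const_mul]
  have hbound2 : |∫ t in c..b, (f t - f c) * (g t - 1)| ≤ V2 * I := by
    calc |∫ t in c..b, (f t - f c) * (g t - 1)| ≤ ∫ t in c..b, |(f t - f c) * (g t - 1)| :=
          intervalIntegral.abs_integral_le_integral_abs hcb
      _ ≤ ∫ t in c..b, V2 * (1 - g t) := by
          apply intervalIntegral.integral_mono_on hcb hB.abs
            ((intervalIntegrable_const.sub hg2).const_mul V2)
          intro t ht
          have ht' : t ∈ Set.Icc a b := ⟨hac.trans ht.1, ht.2⟩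
          have hg1' := (hg01 t ht').2
          rw [abs_mul, abs_of_nonpos (by linarith : g t - 1 ≤ 0)]
          have : -(g t - 1) = 1 - g t := by ring
          rw [this]
          exact mul_le_mul_of_nonneg_right (hb2 t ht) (by linarith)
      _ = V2 * I := by rw [intervalIntegral.integral_const_mul, hIcb]
  constructor
  · rw [hkey, hVsum]
    calc |(∫ t in a..c, (f t - f c) * g t) + ∫ t in c..b, (f t - f c) * (g t - 1)|
        ≤ |∫ t in a..c, (f t - f c) * g t| + |∫ t in c..b, (f t - f c) * (g t - 1)| :=
          abs_add_le _ _
      _ ≤ V1 * I + V2 * I := add_le_add hbound1 hbound2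
      _ = I * (V1 + V2) := by ring
  · apply mul_le_mul_of_nonneg_right _ ENNReal.toReal_nonneg
    calc I ≤ ∫ t in a..c, (1 : ℝ) :=
          intervalIntegral.integral_mono_on hac hg1 intervalIntegrable_const
            (fun t ht => (hg01 t ⟨ht.1, ht.2.trans hcb⟩).2)
      _ = c - a := by simp
      _ = b - a - lam := by simp [hc]; ring
end

section
/- Let f, g : [a,b] → ℝ with g integrable, 0 ≤ g(t) ≤ 1 for all t ∈ [a,b], f decreasing on [a,b], and f·g integrable on [a,b]. Setting λ = ∫_a^b g(t) dt, one has 0 ≤ ∫_a^{a+λ} f(t) dt − ∫_a^b f(t) g(t) dt ≤ (f(a) − f(b)) · ∫_{a+λ}^b g(t) dt. -/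
open MeasureTheory

theorem steffensen_decreasing_one (a b : ℝ) (hab : a < b) (f g : ℝ → ℝ)
    (hg : IntervalIntegrable g volume a b)
    (hg01 : ∀ t ∈ Set.Icc a b, 0 ≤ g t ∧ g t ≤ 1)
    (hf_dec : AntitoneOn f (Set.Icc a b))
    (hfg : IntervalIntegrable (fun t => f t * g t) volume a b)
    (lam : ℝ) (hlam : lam = ∫ t in a..b, g t) :
    0 ≤ (∫ t in a..(a + lam), f t) - ∫ t in a..b, f t * g t ∧
      (∫ t in a..(a + lam), f t) - (∫ t in a..b, f t * g t)
        ≤ (f a - f b) * ∫ t in (a + lam)..b, g t := by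
  have hl0 : 0 ≤ lam := by
    rw [hlam]
    exact intervalIntegral.integral_nonneg hab.le (fun t ht => (hg01 t ht).1)
  have hlle : lam ≤ b - a := by
    rw [hlam]
    calc (∫ t in a..b, g t) ≤ ∫ _t in a..b, (1:ℝ) :=
          intervalIntegral.integral_mono_on hab.le hg intervalIntegrable_const
            (fun t ht => (hg01 t ht).2)
      _ = b - a := by simp
  set c := a + lam with hc
  have hac : a ≤ c := by simp [hc]; linarith
  have hcb : c ≤ b := by simp [hc]; linarith
  have hcmem : c ∈ Set.Icc a b := ⟨hac, hcb⟩
  have hf_int : IntervalIntegrable f volume a b := by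
    apply AntitoneOn.intervalIntegrable
    rwa [Set.uIcc_of_le hab.le]
  have hsub1 : Set.uIcc a c ⊆ Set.uIcc a b := by
    rw [Set.uIcc_of_le hac, Set.uIcc_of_le hab.le]
    exact Set.Icc_subset_Icc le_rfl hcb
  have hsub2 : Set.uIcc c b ⊆ Set.uIcc a b := by
    rw [Set.uIcc_of_le hcb, Set.uIcc_of_le hab.le]
    exact Set.Icc_subset_Icc hac le_rfl
  have hf1 := hf_int.mono_set hsub1
  have hg1 := hg.mono_set hsub1
  have hg2 := hg.mono_set hsub2
  have hfg1 := hfg.mono_set hsub1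
  have hfg2 := hfg.mono_set hsub2
  have hIcc1 : Set.Icc a c ⊆ Set.Icc a b := Set.Icc_subset_Icc le_rfl hcb
  have hIcc2 : Set.Icc c b ⊆ Set.Icc a b := Set.Icc_subset_Icc hac le_rfl
  have hgsplit : (∫ t in a..c, g t) + ∫ t in c..b, g t = lam := by
    rw [intervalIntegral.integral_add_adjacent_intervals hg1 hg2, ← hlam]
  have hfgsplit : (∫ t in a..c, f t * g t) + ∫ t in c..b, f t * g t
      = ∫ t in a..b, f t * g t :=
    intervalIntegral.integral_add_adjacent_intervals hfg1 hfg2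
  -- key1 : f c * ((c - a) - ∫_a^c g) ≤ ∫_a^c (f - f g)
  have key1 : f c * ((c - a) - ∫ t in a..c, g t) ≤ ∫ t in a..c, (f t - f t * g t) := by
    have hmono : (∫ t in a..c, (f c - f c * g t)) ≤ ∫ t in a..c, (f t - f t * g t) := by
      apply intervalIntegral.integral_mono_on hac
        (intervalIntegrable_const.sub (hg1.const_mul (f c))) (hf1.sub hfg1)
      intro t ht
      have hfcft : f c ≤ f t := hf_dec (hIcc1 ht) hcmem ht.2
      have hgle : g t ≤ 1 := (hg01 t (hIcc1 ht)).2
      nlinarith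
    calc f c * ((c - a) - ∫ t in a..c, g t)
        = ∫ t in a..c, (f c - f c * g t) := by
          rw [intervalIntegral.integral_sub intervalIntegrable_const (hg1.const_mul (f c)),
            intervalIntegral.integral_const_mul, intervalIntegral.integral_const,
            smul_eq_mul]
          ring
      _ ≤ _ := hmono
  -- key2 : ∫_c^b f g ≤ f c * ∫_c^b g
  have key2 : (∫ t in c..b, f t * g t) ≤ f c * ∫ t in c..b, g t := by
    rw [← intervalIntegral.integral_const_mul]
    apply intervalIntegral.integral_mono_on hcb hfg2 (hg2.const_mul (f c))
    intro t ht
    have hftfc : f t ≤ f c := hf_dec hcmem (hIcc2 ht) ht.1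
    have hg0 : 0 ≤ g t := (hg01 t (hIcc2 ht)).1
    nlinarith
  -- key3 : ∫_a^c (f - f g) ≤ f a * ((c - a) - ∫_a^c g)
  have key3 : (∫ t in a..c, (f t - f t * g t)) ≤ f a * ((c - a) - ∫ t in a..c, g t) := by
    have hmono : (∫ t in a..c, (f t - f t * g t)) ≤ ∫ t in a..c, (f a - f a * g t) := by
      apply intervalIntegral.integral_mono_on hac (hf1.sub hfg1)
        (intervalIntegrable_const.sub (hg1.const_mul (f a)))
      intro t ht
      have hftfa : f t ≤ f a := hf_dec (Set.left_mem_Icc.mpr hab.le) (hIcc1 ht) ht.1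
      have hgle : g t ≤ 1 := (hg01 t (hIcc1 ht)).2
      nlinarith
    calc (∫ t in a..c, (f t - f t * g t))
        ≤ ∫ t in a..c, (f a - f a * g t) := hmono
      _ = f a * ((c - a) - ∫ t in a..c, g t) := by
          rw [intervalIntegral.integral_sub intervalIntegrable_const (hg1.const_mul (f a)),
            intervalIntegral.integral_const_mul, intervalIntegral.integral_const,
            smul_eq_mul]
          ring
  -- key4 : f b * ∫_c^b g ≤ ∫_c^b f g
  have key4 : f b * (∫ t in c..b, g t) ≤ ∫ t in c..b, f t * g t := by
    rw [← intervalIntegral.integral_const_mul]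
    apply intervalIntegral.integral_mono_on hcb (hg2.const_mul (f b)) hfg2
    intro t ht
    have hfbft : f b ≤ f t := hf_dec (hIcc2 ht) (Set.right_mem_Icc.mpr hab.le) ht.2
    have hg0 : 0 ≤ g t := (hg01 t (hIcc2 ht)).1
    nlinarith
  have hsplitf : (∫ t in a..c, (f t - f t * g t)) = (∫ t in a..c, f t) - ∫ t in a..c, f t * g t :=
    intervalIntegral.integral_sub hf1 hfg1
  have hca : c - a = lam := by simp [hc]
  have e1 : f c * ((c - a) - ∫ t in a..c, g t) = f c * ∫ t in c..b, g t := by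
    rw [hca, ← hgsplit]; ring
  have e2 : f a * ((c - a) - ∫ t in a..c, g t) = f a * ∫ t in c..b, g t := by
    rw [hca, ← hgsplit]; ring
  have e3 : (f a - f b) * (∫ t in c..b, g t)
      = f a * (∫ t in c..b, g t) - f b * (∫ t in c..b, g t) := by ring
  constructor
  · linarith [key1, key2, hsplitf, hfgsplit, e1]
  · linarith [key3, key4, hsplitf, hfgsplit, e2, e3]
end

section
/- Let f, g : [a,b] → ℝ with g integrable, 0 ≤ g(t) ≤ 1 for all t ∈ [a,b], f decreasing on [a,b], and f·g integrable on [a,b]. Setting λ = ∫_a^b g(t) dt, one has 0 ≤ ∫_a^b f(t) g(t) dt − ∫_{b-λ}^b f(t) dt ≤ (f(a) − f(b)) · ∫_a^{b-λ} g(t) dt. -/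
open MeasureTheory

theorem steffensen_decreasing_two (a b : ℝ) (hab : a < b) (f g : ℝ → ℝ)
    (hg : IntervalIntegrable g volume a b)
    (hg01 : ∀ t ∈ Set.Icc a b, 0 ≤ g t ∧ g t ≤ 1)
    (hf_dec : AntitoneOn f (Set.Icc a b))
    (hfg : IntervalIntegrable (fun t => f t * g t) volume a b)
    (lam : ℝ) (hlam : lam = ∫ t in a..b, g t) :
    0 ≤ (∫ t in a..b, f t * g t) - ∫ t in (b - lam)..b, f t ∧
      (∫ t in a..b, f t * g t) - (∫ t in (b - lam)..b, f t)
        ≤ (f a - f b) * ∫ t in a..(b - lam), g t := by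
  set c := b - lam with hc
  have hlam0 : 0 ≤ lam := by
    rw [hlam]
    exact intervalIntegral.integral_nonneg hab.le (fun t ht => (hg01 t ht).1)
  have hlamba : lam ≤ b - a := by
    rw [hlam]
    calc (∫ t in a..b, g t) ≤ ∫ t in a..b, (1:ℝ) :=
          intervalIntegral.integral_mono_on hab.le hg intervalIntegrable_const
            (fun t ht => (hg01 t ht).2)
      _ = b - a := by simp
  have hac : a ≤ c := by rw [hc]; linarith
  have hcb : c ≤ b := by rw [hc]; linarith
  have hsub1 : Set.uIcc a c ⊆ Set.uIcc a b := by
    rw [Set.uIcc_of_le hac, Set.uIcc_of_le hab.le]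
    exact Set.Icc_subset_Icc le_rfl hcb
  have hsub2 : Set.uIcc c b ⊆ Set.uIcc a b := by
    rw [Set.uIcc_of_le hcb, Set.uIcc_of_le hab.le]
    exact Set.Icc_subset_Icc hac le_rfl
  have hg1 : IntervalIntegrable g volume a c := hg.mono_set hsub1
  have hg2 : IntervalIntegrable g volume c b := hg.mono_set hsub2
  have hfg1 : IntervalIntegrable (fun t => f t * g t) volume a c := hfg.mono_set hsub1
  have hfg2 : IntervalIntegrable (fun t => f t * g t) volume c b := hfg.mono_set hsub2
  have hf2 : IntervalIntegrable f volume c b := by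
    refine AntitoneOn.intervalIntegrable (hf_dec.mono ?_)
    rw [Set.uIcc_of_le hcb]
    exact Set.Icc_subset_Icc hac le_rfl
  have hsplit : (∫ t in a..b, f t * g t)
      = (∫ t in a..c, f t * g t) + ∫ t in c..b, f t * g t :=
    (intervalIntegral.integral_add_adjacent_intervals hfg1 hfg2).symm
  have hGsum : (∫ t in a..c, g t) + (∫ t in c..b, g t) = lam := by
    rw [hlam]; exact intervalIntegral.integral_add_adjacent_intervals hg1 hg2
  have hbc : b - c = lam := by rw [hc]; ring
  -- lower bound on ∫_a^c f g
  have L1 : f c * (∫ t in a..c, g t) ≤ ∫ t in a..c, f t * g t := by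
    rw [← intervalIntegral.integral_const_mul]
    refine intervalIntegral.integral_mono_on hac (hg1.const_mul _) hfg1 ?_
    intro t ht
    have htb : t ∈ Set.Icc a b := ⟨ht.1, le_trans ht.2 hcb⟩
    have h1 : f c ≤ f t := hf_dec htb ⟨hac, hcb⟩ ht.2
    exact mul_le_mul_of_nonneg_right h1 (hg01 t htb).1
  -- upper bound on ∫_a^c f g
  have U1 : (∫ t in a..c, f t * g t) ≤ f a * ∫ t in a..c, g t := by
    rw [← intervalIntegral.integral_const_mul]
    refine intervalIntegral.integral_mono_on hac hfg1 (hg1.const_mul _) ?_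
    intro t ht
    have htb : t ∈ Set.Icc a b := ⟨ht.1, le_trans ht.2 hcb⟩
    have h1 : f t ≤ f a := hf_dec ⟨le_rfl, hab.le⟩ htb ht.1
    exact mul_le_mul_of_nonneg_right h1 (hg01 t htb).1
  -- upper bound on ∫_c^b f (1 - g)
  have L2 : (∫ t in c..b, f t) - (∫ t in c..b, f t * g t)
      ≤ f c * ((b - c) - ∫ t in c..b, g t) := by
    have key : (∫ t in c..b, (f t - f t * g t))
        ≤ ∫ t in c..b, (f c - f c * g t) := by
      refine intervalIntegral.integral_mono_on hcb (hf2.sub hfg2)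
        (intervalIntegrable_const.sub (hg2.const_mul _)) ?_
      intro t ht
      have htb : t ∈ Set.Icc a b := ⟨le_trans hac ht.1, ht.2⟩
      have h1 : f t ≤ f c := hf_dec ⟨hac, hcb⟩ htb ht.1
      have h2 : g t ≤ 1 := (hg01 t htb).2
      nlinarith
    rw [intervalIntegral.integral_sub hf2 hfg2,
      intervalIntegral.integral_sub intervalIntegrable_const (hg2.const_mul _),
      intervalIntegral.integral_const_mul, intervalIntegral.integral_const] at key
    simp only [smul_eq_mul, mul_one] at key
    linarith
  -- lower bound on ∫_c^b f (1 - g)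
  have U2 : f b * ((b - c) - ∫ t in c..b, g t)
      ≤ (∫ t in c..b, f t) - (∫ t in c..b, f t * g t) := by
    have key : (∫ t in c..b, (f b - f b * g t))
        ≤ ∫ t in c..b, (f t - f t * g t) := by
      refine intervalIntegral.integral_mono_on hcb
        (intervalIntegrable_const.sub (hg2.const_mul _)) (hf2.sub hfg2) ?_
      intro t ht
      have htb : t ∈ Set.Icc a b := ⟨le_trans hac ht.1, ht.2⟩
      have h1 : f b ≤ f t := hf_dec htb ⟨hab.le, le_rfl⟩ ht.2
      have h2 : g t ≤ 1 := (hg01 t htb).2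
      nlinarith
    rw [intervalIntegral.integral_sub hf2 hfg2,
      intervalIntegral.integral_sub intervalIntegrable_const (hg2.const_mul _),
      intervalIntegral.integral_const_mul, intervalIntegral.integral_const] at key
    simp only [smul_eq_mul, mul_one] at key
    linarith
  have hG1 : (b - c) - (∫ t in c..b, g t) = ∫ t in a..c, g t := by linarith
  rw [hG1] at L2 U2
  have hring : (f a - f b) * (∫ t in a..c, g t)
      = f a * (∫ t in a..c, g t) - f b * (∫ t in a..c, g t) := by ring
  constructor
  · linarith [hsplit, L1, L2]
  · rw [hring]; linarith [hsplit, U1, U2]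
end

section
/- Let f, g : [a,b] → ℝ with g integrable, 0 ≤ g(t) ≤ 1 for all t ∈ [a,b], f·g integrable on [a,b], and f L-Lipschitz on [a,b] (i.e. |f(x) − f(y)| ≤ L|x − y| for all x, y ∈ [a,b]). Setting λ = ∫_a^b g(t) dt, one has |∫_a^{a+λ} f(t) dt − ∫_a^b f(t) g(t) dt| ≤ (L/2)[(b − a − λ)² + λ²]. -/
open MeasureTheory intervalIntegral

theorem steffensen_lipschitz_one (a b L : ℝ) (hab : a < b) (hL : 0 ≤ L) (f g : ℝ → ℝ)
    (hg : IntervalIntegrable g volume a b)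
    (hg01 : ∀ t ∈ Set.Icc a b, 0 ≤ g t ∧ g t ≤ 1)
    (hfg : IntervalIntegrable (fun t => f t * g t) volume a b)
    (hf_lip : ∀ x ∈ Set.Icc a b, ∀ y ∈ Set.Icc a b, |f x - f y| ≤ L * |x - y|)
    (lam : ℝ) (hlam : lam = ∫ t in a..b, g t) :
    |(∫ t in a..(a + lam), f t) - ∫ t in a..b, f t * g t|
      ≤ L / 2 * ((b - a - lam) ^ 2 + lam ^ 2) := by
  have hlam0 : 0 ≤ lam := by
    rw [hlam]
    exact intervalIntegral.integral_nonneg hab.le fun u hu => (hg01 u hu).1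
  have hlamb : lam ≤ b - a := by
    rw [hlam]
    calc (∫ t in a..b, g t) ≤ ∫ t in a..b, (1 : ℝ) :=
          intervalIntegral.integral_mono_on hab.le hg intervalIntegrable_const
            fun u hu => (hg01 u hu).2
      _ = b - a := by simp
  obtain ⟨c, hc⟩ : ∃ c : ℝ, c = a + lam := ⟨_, rfl⟩
  rw [show a + lam = c from hc.symm]
  have hac : a ≤ c := by linarith
  have hcb : c ≤ b := by linarith
  -- continuity of f on [a,b]
  have hf_cont : ContinuousOn f (Set.Icc a b) := by
    refine (LipschitzOnWith.of_dist_le_mul (K := Real.toNNReal L)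
      (fun x hx y hy => ?_)).continuousOn
    rw [Real.dist_eq, Real.dist_eq, Real.coe_toNNReal _ hL]
    exact hf_lip x hx y hy
  have hfI : IntervalIntegrable f volume a b :=
    ContinuousOn.intervalIntegrable (by rwa [Set.uIcc_of_le hab.le])
  have hsub1 : Set.uIcc a c ⊆ Set.uIcc a b := by
    rw [Set.uIcc_of_le hac, Set.uIcc_of_le hab.le]
    exact Set.Icc_subset_Icc le_rfl hcb
  have hsub2 : Set.uIcc c b ⊆ Set.uIcc a b := by
    rw [Set.uIcc_of_le hcb, Set.uIcc_of_le hab.le]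
    exact Set.Icc_subset_Icc hac le_rfl
  have hf1 : IntervalIntegrable f volume a c := hfI.mono_set hsub1
  have hg1 : IntervalIntegrable g volume a c := hg.mono_set hsub1
  have hg2 : IntervalIntegrable g volume c b := hg.mono_set hsub2
  have hfg1 : IntervalIntegrable (fun t => f t * g t) volume a c := hfg.mono_set hsub1
  have hfg2 : IntervalIntegrable (fun t => f t * g t) volume c b := hfg.mono_set hsub2
  -- sum of g-integrals
  have hgsum : (∫ t in a..c, g t) + (∫ t in c..b, g t) = lam := by
    rw [intervalIntegral.integral_add_adjacent_intervals hg1 hg2, ← hlam]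
  have hfgsplit : (∫ t in a..c, f t * g t) + (∫ t in c..b, f t * g t)
      = ∫ t in a..b, f t * g t :=
    intervalIntegral.integral_add_adjacent_intervals hfg1 hfg2
  -- expansion of the first piece
  have e1 : (∫ t in a..c, (f t - f c) * (1 - g t))
      = (∫ t in a..c, f t) - (∫ t in a..c, f t * g t) - f c * (c - a)
        + f c * ∫ t in a..c, g t := by
    have hfun : (fun t => (f t - f c) * (1 - g t))
        = fun t => (f t - f t * g t) - (f c - f c * g t) := by
      funext t; ring
    rw [hfun, intervalIntegral.integral_sub (hf1.sub hfg1)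
          (intervalIntegrable_const.sub (hg1.const_mul (f c))),
        intervalIntegral.integral_sub hf1 hfg1,
        intervalIntegral.integral_sub intervalIntegrable_const (hg1.const_mul (f c)),
        intervalIntegral.integral_const_mul, intervalIntegral.integral_const]
    simp only [smul_eq_mul]
    ring
  have e2 : (∫ t in c..b, (f t - f c) * g t)
      = (∫ t in c..b, f t * g t) - f c * ∫ t in c..b, g t := by
    have hfun : (fun t => (f t - f c) * g t) = fun t => f t * g t - f c * g t := by
      funext t; ring
    rw [hfun, intervalIntegral.integral_sub hfg2 (hg2.const_mul (f c)),
        intervalIntegral.integral_const_mul]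
  have key : (∫ t in a..c, f t) - (∫ t in a..b, f t * g t)
      = (∫ t in a..c, (f t - f c) * (1 - g t)) - ∫ t in c..b, (f t - f c) * g t := by
    rw [e1, e2, ← hfgsplit]
    have hca : c - a = lam := by linarith
    rw [hca]
    have hmul : f c * lam = f c * (∫ t in a..c, g t) + f c * ∫ t in c..b, g t := by
      rw [← hgsum]; ring
    linarith [hmul]
  -- integrability of the products
  have hprod1 : IntervalIntegrable (fun t => (f t - f c) * (1 - g t)) volume a c := by
    have hfun : (fun t => (f t - f c) * (1 - g t))
        = fun t => (f t - f t * g t) - (f c - f c * g t) := by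
      funext t; ring
    rw [hfun]
    exact (hf1.sub hfg1).sub (intervalIntegrable_const.sub (hg1.const_mul (f c)))
  have hprod2 : IntervalIntegrable (fun t => (f t - f c) * g t) volume c b := by
    have hfun : (fun t => (f t - f c) * g t) = fun t => f t * g t - f c * g t := by
      funext t; ring
    rw [hfun]
    exact hfg2.sub (hg2.const_mul (f c))
  have hcIcc : c ∈ Set.Icc a b := ⟨hac, hcb⟩
  have lin1 : IntervalIntegrable (fun t => L * (c - t)) volume a c :=
    (Continuous.intervalIntegrable (by continuity) a c)
  have lin2 : IntervalIntegrable (fun t => L * (t - c)) volume c b :=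
    (Continuous.intervalIntegrable (by continuity) c b)
  have b1 : |∫ t in a..c, (f t - f c) * (1 - g t)| ≤ L * (c - a) ^ 2 / 2 := by
    calc |∫ t in a..c, (f t - f c) * (1 - g t)|
        ≤ ∫ t in a..c, |(f t - f c) * (1 - g t)| :=
          intervalIntegral.abs_integral_le_integral_abs hac
      _ ≤ ∫ t in a..c, L * (c - t) := by
          apply intervalIntegral.integral_mono_on hac hprod1.abs lin1
          intro t ht
          have htab : t ∈ Set.Icc a b := ⟨ht.1, ht.2.trans hcb⟩
          have h1 : |f t - f c| ≤ L * (c - t) := by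
            have h := hf_lip t htab c hcIcc
            have habs : |t - c| = c - t := by
              rw [abs_of_nonpos (by linarith [ht.2] : t - c ≤ 0)]; ring
            rwa [habs] at h
          have hgt := hg01 t htab
          have h2 : |1 - g t| ≤ 1 := by
            rw [abs_of_nonneg (by linarith [hgt.2])]
            linarith [hgt.1]
          calc |(f t - f c) * (1 - g t)| = |f t - f c| * |1 - g t| := abs_mul _ _
            _ ≤ (L * (c - t)) * 1 :=
                mul_le_mul h1 h2 (abs_nonneg _)
                  (mul_nonneg hL (by linarith [ht.2]))
            _ = L * (c - t) := by ring
      _ = L * (c - a) ^ 2 / 2 := by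
          rw [intervalIntegral.integral_const_mul,
            intervalIntegral.integral_sub intervalIntegrable_const
              intervalIntegrable_id,
            intervalIntegral.integral_const, integral_id]
          simp only [smul_eq_mul]
          ring
  have b2 : |∫ t in c..b, (f t - f c) * g t| ≤ L * (b - c) ^ 2 / 2 := by
    calc |∫ t in c..b, (f t - f c) * g t|
        ≤ ∫ t in c..b, |(f t - f c) * g t| :=
          intervalIntegral.abs_integral_le_integral_abs hcb
      _ ≤ ∫ t in c..b, L * (t - c) := by
          apply intervalIntegral.integral_mono_on hcb hprod2.abs lin2
          intro t ht
          have htab : t ∈ Set.Icc a b := ⟨hac.trans ht.1, ht.2⟩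
          have h1 : |f t - f c| ≤ L * (t - c) := by
            have h := hf_lip t htab c hcIcc
            rwa [abs_of_nonneg (by linarith [ht.1] : (0:ℝ) ≤ t - c)] at h
          have hgt := hg01 t htab
          have h2 : |g t| ≤ 1 := by
            rw [abs_of_nonneg hgt.1]; exact hgt.2
          calc |(f t - f c) * g t| = |f t - f c| * |g t| := abs_mul _ _
            _ ≤ (L * (t - c)) * 1 :=
                mul_le_mul h1 h2 (abs_nonneg _)
                  (mul_nonneg hL (by linarith [ht.1]))
            _ = L * (t - c) := by ring
      _ = L * (b - c) ^ 2 / 2 := by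
          rw [intervalIntegral.integral_const_mul,
            intervalIntegral.integral_sub intervalIntegrable_id
              intervalIntegrable_const,
            intervalIntegral.integral_const, integral_id]
          simp only [smul_eq_mul]
          ring
  have hca : c - a = lam := by linarith
  have hbc : b - c = b - a - lam := by linarith
  calc |(∫ t in a..c, f t) - ∫ t in a..b, f t * g t|
      = |(∫ t in a..c, (f t - f c) * (1 - g t)) - ∫ t in c..b, (f t - f c) * g t| := by
        rw [key]
    _ ≤ |∫ t in a..c, (f t - f c) * (1 - g t)| + |∫ t in c..b, (f t - f c) * g t| :=
        abs_sub _ _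
    _ ≤ L * (c - a) ^ 2 / 2 + L * (b - c) ^ 2 / 2 := add_le_add b1 b2
    _ = L / 2 * ((b - a - lam) ^ 2 + lam ^ 2) := by rw [hca, hbc]; ring
end

section
/- Let f, g : [a,b] → ℝ with g integrable, 0 ≤ g(t) ≤ 1 for all t ∈ [a,b], f monotone nondecreasing on [a,b], and f·g integrable on [a,b]. Setting λ = ∫_a^b g(t) dt, one has |∫_a^{a+λ} f(t) dt − ∫_a^b f(t) g(t) dt| ≤ λ[f(a+λ) − f(a)] + (b − a − λ)[f(b) − f(a+λ)]. -/
open MeasureTheory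

theorem steffensen_monotone_one (a b : ℝ) (hab : a < b) (f g : ℝ → ℝ)
    (hg : IntervalIntegrable g volume a b)
    (hg01 : ∀ t ∈ Set.Icc a b, 0 ≤ g t ∧ g t ≤ 1)
    (hf_mono : MonotoneOn f (Set.Icc a b))
    (hfg : IntervalIntegrable (fun t => f t * g t) volume a b)
    (lam : ℝ) (hlam : lam = ∫ t in a..b, g t) :
    |(∫ t in a..(a + lam), f t) - ∫ t in a..b, f t * g t|
      ≤ lam * (f (a + lam) - f a) + (b - a - lam) * (f b - f (a + lam)) := by
  have hab' : a ≤ b := hab.le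
  set c := a + lam with hc
  have hlam0 : 0 ≤ lam := by
    rw [hlam]
    exact intervalIntegral.integral_nonneg hab' (fun t ht => (hg01 t ht).1)
  have hlamab : lam ≤ b - a := by
    have : (∫ t in a..b, g t) ≤ ∫ t in a..b, (1 : ℝ) :=
      intervalIntegral.integral_mono_on hab' hg intervalIntegrable_const
        (fun t ht => (hg01 t ht).2)
    simpa [hlam] using this
  have hac : a ≤ c := by simp [hc, hlam0]
  have hcb : c ≤ b := by simp [hc]; linarith
  have hmemc : c ∈ Set.Icc a b := ⟨hac, hcb⟩
  have hmema : a ∈ Set.Icc a b := ⟨le_rfl, hab'⟩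
  have hmemb : b ∈ Set.Icc a b := ⟨hab', le_rfl⟩
  have hsub : ∀ x y : ℝ, x ∈ Set.Icc a b → y ∈ Set.Icc a b →
      Set.uIcc x y ⊆ Set.Icc a b := by
    intro x y hx hy
    rw [← Set.uIcc_of_le hab'] at hx hy ⊢
    exact Set.uIcc_subset_uIcc hx hy
  have hf_int : ∀ x y : ℝ, x ∈ Set.Icc a b → y ∈ Set.Icc a b →
      IntervalIntegrable f volume x y := fun x y hx hy =>
    (hf_mono.mono (hsub x y hx hy)).intervalIntegrable
  have hg_int : ∀ x y : ℝ, x ∈ Set.Icc a b → y ∈ Set.Icc a b →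
      IntervalIntegrable g volume x y := fun x y hx hy =>
    hg.mono_set (hsub x y hx hy |>.trans (Set.uIcc_of_le hab' ▸ le_rfl))
  have hfg_int : ∀ x y : ℝ, x ∈ Set.Icc a b → y ∈ Set.Icc a b →
      IntervalIntegrable (fun t => f t * g t) volume x y := fun x y hx hy =>
    hfg.mono_set (hsub x y hx hy |>.trans (Set.uIcc_of_le hab' ▸ le_rfl))
  set I := ∫ t in a..c, g t with hI
  have hmu_def : (∫ t in a..c, (1 - g t)) = lam - I := by
    rw [intervalIntegral.integral_sub intervalIntegrable_const (hg_int a c hmema hmemc)]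
    simp [hc]
    rfl
  have hnu_def : (∫ t in c..b, g t) = lam - I := by
    have := intervalIntegral.integral_add_adjacent_intervals
      (hg_int a c hmema hmemc) (hg_int c b hmemc hmemb)
    rw [← hlam] at this
    linarith [this]
  have hI0 : 0 ≤ I := intervalIntegral.integral_nonneg hac
    (fun t ht => (hg01 t ⟨ht.1, ht.2.trans hcb⟩).1)
  have hnu0 : 0 ≤ lam - I := by
    rw [← hnu_def]
    exact intervalIntegral.integral_nonneg hcb
      (fun t ht => (hg01 t ⟨hac.trans ht.1, ht.2⟩).1)
  have hfac : f a ≤ f c := hf_mono hmema hmemc hac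
  have hfcb : f c ≤ f b := hf_mono hmemc hmemb hcb
  set A := ∫ t in a..c, (f t - f t * g t) with hA
  set B := ∫ t in c..b, (f t * g t) with hB
  have hD : (∫ t in a..c, f t) - (∫ t in a..b, f t * g t) = A - B := by
    have h1 := intervalIntegral.integral_add_adjacent_intervals
      (hfg_int a c hmema hmemc) (hfg_int c b hmemc hmemb)
    have h2 : A = (∫ t in a..c, f t) - ∫ t in a..c, f t * g t := by
      rw [hA, intervalIntegral.integral_sub (hf_int a c hmema hmemc)
        (hfg_int a c hmema hmemc)]
    rw [← h1, h2]; ring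
  have h1g_int : IntervalIntegrable (fun t => 1 - g t) volume a c :=
    intervalIntegrable_const.sub (hg_int a c hmema hmemc)
  -- A ≤ f c * (lam - I)
  have hA_ub : A ≤ f c * (lam - I) := by
    have h := intervalIntegral.integral_mono_on hac
      ((hf_int a c hmema hmemc).sub (hfg_int a c hmema hmemc))
      (h1g_int.const_mul (f c)) (fun t ht => by
        have h1 : f t ≤ f c := hf_mono ⟨ht.1, ht.2.trans hcb⟩ hmemc ht.2
        have h2 : g t ≤ 1 := (hg01 t ⟨ht.1, ht.2.trans hcb⟩).2
        nlinarith)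
    rwa [intervalIntegral.integral_const_mul, hmu_def] at h
  -- f a * (lam - I) ≤ A
  have hA_lb : f a * (lam - I) ≤ A := by
    have h := intervalIntegral.integral_mono_on hac
      (h1g_int.const_mul (f a))
      ((hf_int a c hmema hmemc).sub (hfg_int a c hmema hmemc)) (fun t ht => by
        have h1 : f a ≤ f t := hf_mono hmema ⟨ht.1, ht.2.trans hcb⟩ ht.1
        have h2 : g t ≤ 1 := (hg01 t ⟨ht.1, ht.2.trans hcb⟩).2
        nlinarith)
    rwa [intervalIntegral.integral_const_mul, hmu_def] at h
  -- f c * (lam - I) ≤ B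
  have hB_lb : f c * (lam - I) ≤ B := by
    have h := intervalIntegral.integral_mono_on hcb
      ((hg_int c b hmemc hmemb).const_mul (f c))
      (hfg_int c b hmemc hmemb) (fun t ht => by
        have h1 : f c ≤ f t := hf_mono hmemc ⟨hac.trans ht.1, ht.2⟩ ht.1
        have h2 : 0 ≤ g t := (hg01 t ⟨hac.trans ht.1, ht.2⟩).1
        nlinarith)
    rwa [intervalIntegral.integral_const_mul, hnu_def] at h
  -- B ≤ f c * (lam - I) + (f b - f c) * (b - c)
  have hB_ub : B ≤ f c * (lam - I) + (f b - f c) * (b - c) := by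
    have h := intervalIntegral.integral_mono_on hcb
      (hfg_int c b hmemc hmemb)
      (((hg_int c b hmemc hmemb).const_mul (f c)).add intervalIntegrable_const)
      (fun t ht => by
        have hm : t ∈ Set.Icc a b := ⟨hac.trans ht.1, ht.2⟩
        have h1 : f c ≤ f t := hf_mono hmemc hm ht.1
        have h2 : f t ≤ f b := hf_mono hm hmemb ht.2
        have h3 : 0 ≤ g t := (hg01 t hm).1
        have h4 : g t ≤ 1 := (hg01 t hm).2
        show f t * g t ≤ f c * g t + (f b - f c)
        nlinarith)
    rw [intervalIntegral.integral_add ((hg_int c b hmemc hmemb).const_mul (f c))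
      intervalIntegrable_const, intervalIntegral.integral_const_mul,
      intervalIntegral.integral_const, hnu_def] at h
    simpa [smul_eq_mul, mul_comm] using h
  have hIlam : lam - I ≤ lam := by linarith
  have hbc : b - c = b - a - lam := by rw [hc]; ring
  rw [hD, abs_le]
  constructor
  · -- -(RHS) ≤ A - B
    have : B - A ≤ lam * (f c - f a) + (b - a - lam) * (f b - f c) := by
      have e1 : (f c - f a) * (lam - I) ≤ (f c - f a) * lam :=
        mul_le_mul_of_nonneg_left hIlam (by linarith)
      rw [← hbc]
      nlinarith [hB_ub, hA_lb]
    linarith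
  · -- A - B ≤ RHS
    have hRHS0 : 0 ≤ lam * (f c - f a) + (b - a - lam) * (f b - f c) := by
      have := mul_nonneg hlam0 (by linarith : (0:ℝ) ≤ f c - f a)
      have := mul_nonneg (by linarith : (0:ℝ) ≤ b - a - lam) (by linarith : (0:ℝ) ≤ f b - f c)
      linarith
    linarith [hA_ub, hB_lb]
end

section
/- Let f, g : [a,b] → ℝ with g integrable, 0 ≤ g(t) ≤ 1 for all t ∈ [a,b], f monotone nondecreasing on [a,b], and f·g integrable on [a,b]. Setting λ = ∫_a^b g(t) dt, one has |∫_a^b f(t) g(t) dt − ∫_{b-λ}^b f(t) dt| ≤ λ[f(b) − f(b−λ)] + (b − a − λ)[f(b−λ) − f(a)]. -/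
open MeasureTheory

theorem steffensen_monotone_two (a b : ℝ) (hab : a < b) (f g : ℝ → ℝ)
    (hg : IntervalIntegrable g volume a b)
    (hg01 : ∀ t ∈ Set.Icc a b, 0 ≤ g t ∧ g t ≤ 1)
    (hf_mono : MonotoneOn f (Set.Icc a b))
    (hfg : IntervalIntegrable (fun t => f t * g t) volume a b)
    (lam : ℝ) (hlam : lam = ∫ t in a..b, g t) :
    |(∫ t in a..b, f t * g t) - ∫ t in (b - lam)..b, f t|
      ≤ lam * (f b - f (b - lam)) + (b - a - lam) * (f (b - lam) - f a) := by
  set c : ℝ := b - lam with hc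
  have hlam0 : 0 ≤ lam := by
    rw [hlam]
    exact intervalIntegral.integral_nonneg hab.le (fun u hu => (hg01 u hu).1)
  have hlamle : lam ≤ b - a := by
    have h1 : (∫ t in a..b, g t) ≤ ∫ t in a..b, (1:ℝ) :=
      intervalIntegral.integral_mono_on hab.le hg intervalIntegrable_const
        (fun x hx => (hg01 x hx).2)
    have h2 : (∫ t in a..b, (1:ℝ)) = b - a := by simp
    linarith [hlam ▸ h1.trans_eq h2]
  have hac : a ≤ c := by simp [hc]; linarith
  have hcb : c ≤ b := by simp [hc]; linarith
  have hcmem : c ∈ Set.Icc a b := ⟨hac, hcb⟩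
  have hsub1 : Set.uIcc a c ⊆ Set.uIcc a b := by
    rw [Set.uIcc_of_le hac, Set.uIcc_of_le hab.le]
    exact Set.Icc_subset_Icc le_rfl hcb
  have hsub2 : Set.uIcc c b ⊆ Set.uIcc a b := by
    rw [Set.uIcc_of_le hcb, Set.uIcc_of_le hab.le]
    exact Set.Icc_subset_Icc hac le_rfl
  have hf_int : IntervalIntegrable f volume a b := by
    apply MonotoneOn.intervalIntegrable
    rwa [Set.uIcc_of_le hab.le]
  have hg_ac := hg.mono_set hsub1
  have hg_cb := hg.mono_set hsub2
  have hfg_ac := hfg.mono_set hsub1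
  have hfg_cb := hfg.mono_set hsub2
  have hf_cb := hf_int.mono_set hsub2
  -- integrability of the two key integrands
  have hI1int : IntervalIntegrable (fun t => (f t - f c) * g t) volume a c := by
    have : (fun t => (f t - f c) * g t) = fun t => f t * g t - f c * g t := by
      funext t; ring
    rw [this]
    exact hfg_ac.sub (hg_ac.const_mul _)
  have hI2int : IntervalIntegrable (fun t => (f t - f c) * (g t - 1)) volume c b := by
    have : (fun t => (f t - f c) * (g t - 1))
        = fun t => (f t * g t - f t) - (f c * g t - f c) := by
      funext t; ring
    rw [this]
    exact (hfg_cb.sub hf_cb).sub ((hg_cb.const_mul _).sub intervalIntegrable_const)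
  set I1 : ℝ := ∫ t in a..c, (f t - f c) * g t with hI1
  set I2 : ℝ := ∫ t in c..b, (f t - f c) * (g t - 1) with hI2
  -- the key identity
  have hsplit_fg : (∫ t in a..c, f t * g t) + ∫ t in c..b, f t * g t
      = ∫ t in a..b, f t * g t :=
    intervalIntegral.integral_add_adjacent_intervals hfg_ac hfg_cb
  have hsplit_g : (∫ t in a..c, g t) + ∫ t in c..b, g t = lam := by
    rw [hlam]; exact intervalIntegral.integral_add_adjacent_intervals hg_ac hg_cb
  have hI1eq : I1 = (∫ t in a..c, f t * g t) - f c * ∫ t in a..c, g t := by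
    rw [hI1]
    have : (fun t => (f t - f c) * g t) = fun t => f t * g t - f c * g t := by
      funext t; ring
    rw [this, intervalIntegral.integral_sub hfg_ac (hg_ac.const_mul _),
      intervalIntegral.integral_const_mul]
  have hI2eq : I2 = (∫ t in c..b, f t * g t) - (∫ t in c..b, f t)
      - f c * (∫ t in c..b, g t) + f c * lam := by
    rw [hI2]
    have h : (fun t => (f t - f c) * (g t - 1))
        = fun t => (f t * g t - f t) - (f c * g t - f c) := by
      funext t; ring
    rw [h, intervalIntegral.integral_sub (hfg_cb.sub hf_cb)
      ((hg_cb.const_mul _).sub intervalIntegrable_const),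
      intervalIntegral.integral_sub hfg_cb hf_cb,
      intervalIntegral.integral_sub (hg_cb.const_mul _) intervalIntegrable_const,
      intervalIntegral.integral_const_mul, intervalIntegral.integral_const]
    have : b - c = lam := by rw [hc]; ring
    rw [this, smul_eq_mul]
    ring
  have hD : (∫ t in a..b, f t * g t) - (∫ t in c..b, f t) = I1 + I2 := by
    have h3 : f c * (∫ t in a..c, g t) + f c * (∫ t in c..b, g t) = f c * lam := by
      rw [← mul_add, hsplit_g]
    rw [hI1eq, hI2eq]; linarith
  -- D ≤ 0
  have hI1nonpos : I1 ≤ 0 := by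
    have hpt : ∀ t ∈ Set.Icc a c, (f t - f c) * g t ≤ (0:ℝ) := by
      intro t ht
      have htab : t ∈ Set.Icc a b := Set.Icc_subset_Icc le_rfl hcb ht
      exact mul_nonpos_of_nonpos_of_nonneg
        (sub_nonpos.mpr (hf_mono htab hcmem ht.2)) (hg01 t htab).1
    have h := intervalIntegral.integral_mono_on hac hI1int intervalIntegrable_const hpt
    simpa using h
  have hI2nonpos : I2 ≤ 0 := by
    have hpt : ∀ t ∈ Set.Icc c b, (f t - f c) * (g t - 1) ≤ (0:ℝ) := by
      intro t ht
      have htab : t ∈ Set.Icc a b := Set.Icc_subset_Icc hac le_rfl ht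
      exact mul_nonpos_of_nonneg_of_nonpos
        (sub_nonneg.mpr (hf_mono hcmem htab ht.1))
        (sub_nonpos.mpr (hg01 t htab).2)
    have h := intervalIntegral.integral_mono_on hcb hI2int intervalIntegrable_const hpt
    simpa using h
  -- lower bounds for I1 and I2
  have hI1lb : -((b - a - lam) * (f c - f a)) ≤ I1 := by
    have hmono : ∀ t ∈ Set.Icc a c, -((f c - f a) * 1) ≤ (f t - f c) * g t := by
      intro t ht
      have htab : t ∈ Set.Icc a b := Set.Icc_subset_Icc le_rfl hcb ht
      have h1 : f c - f t ≤ f c - f a := by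
        have := hf_mono (Set.left_mem_Icc.mpr hab.le) htab ht.1
        linarith
      have h2 : 0 ≤ f c - f t := sub_nonneg.mpr (hf_mono htab hcmem ht.2)
      have : (f c - f t) * g t ≤ (f c - f a) * 1 :=
        mul_le_mul h1 (hg01 t htab).2 (hg01 t htab).1 (by linarith)
      nlinarith
    have := intervalIntegral.integral_mono_on hac intervalIntegrable_const hI1int hmono
    have hconst : (∫ _ in a..c, -((f c - f a) * 1)) = (c - a) * (-((f c - f a) * 1)) := by
      rw [intervalIntegral.integral_const, smul_eq_mul]
    rw [hconst] at this
    have hca : c - a = b - a - lam := by rw [hc]; ring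
    rw [hca] at this
    rw [hI1]; nlinarith [this]
  have hI2lb : -(lam * (f b - f c)) ≤ I2 := by
    have hmono : ∀ t ∈ Set.Icc c b, -((f b - f c) * 1) ≤ (f t - f c) * (g t - 1) := by
      intro t ht
      have htab : t ∈ Set.Icc a b := Set.Icc_subset_Icc hac le_rfl ht
      have h1 : f t - f c ≤ f b - f c := by
        have := hf_mono htab (Set.right_mem_Icc.mpr hab.le) ht.2
        linarith
      have h2 : 0 ≤ f t - f c := sub_nonneg.mpr (hf_mono hcmem htab ht.1)
      have h3 : 0 ≤ 1 - g t := by linarith [(hg01 t htab).2]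
      have h4 : 1 - g t ≤ 1 := by linarith [(hg01 t htab).1]
      have : (f t - f c) * (1 - g t) ≤ (f b - f c) * 1 :=
        mul_le_mul h1 h4 h3 (by linarith)
      nlinarith
    have := intervalIntegral.integral_mono_on hcb intervalIntegrable_const hI2int hmono
    have hconst : (∫ _ in c..b, -((f b - f c) * 1)) = (b - c) * (-((f b - f c) * 1)) := by
      rw [intervalIntegral.integral_const, smul_eq_mul]
    rw [hconst] at this
    have hbc : b - c = lam := by rw [hc]; ring
    rw [hbc] at this
    rw [hI2]; nlinarith [this]
  have hR0 : 0 ≤ lam * (f b - f c) := by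
    have := hf_mono hcmem (Set.right_mem_Icc.mpr hab.le) hcb
    nlinarith
  have hR1 : 0 ≤ (b - a - lam) * (f c - f a) := by
    have := hf_mono (Set.left_mem_Icc.mpr hab.le) hcmem hac
    nlinarith
  rw [abs_le]
  constructor
  · rw [hD]; linarith
  · rw [hD]; linarith
end

section
/- Let g : [a,b] → ℝ be integrable with 0 ≤ g(t) ≤ 1 for all t ∈ [a,b], and let f : [a,b] → ℝ be absolutely continuous on [a,b] with derivative f' essentially bounded on [a,b]. Setting λ = ∫_a^b g(t) dt, one has |∫_a^{a+λ} f(t) dt − ∫_a^b f(t) g(t) dt| ≤ (1/2)[λ² + (b − a − λ)²] · ‖f'‖_{L^∞[a,b]}. -/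
open MeasureTheory Set

lemma swap_aux (a b : ℝ) (φ ψ : ℝ → ℝ) (hφm : Measurable φ) (hψm : Measurable ψ)
    (hφ : IntegrableOn φ (Set.Ioc a b))
    (hψ1 : ∀ t, |ψ t| ≤ 1) :
    ∫ t in Set.Ioc a b, (∫ s in Set.Ioc a t, φ s) * ψ t
      = ∫ s in Set.Ioc a b, φ s * ∫ t in Set.Ioc s b, ψ t := by
  set μ := volume.restrict (Set.Ioc a b) with hμ
  have hK : MeasurableSet {p : ℝ × ℝ | p.2 ≤ p.1} :=
    measurableSet_le measurable_snd measurable_fst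
  set F : ℝ → ℝ → ℝ := fun t s =>
    ({p : ℝ × ℝ | p.2 ≤ p.1}).indicator (fun p => φ p.2 * ψ p.1) (t, s) with hF
  have hFu : Function.uncurry F
      = ({p : ℝ × ℝ | p.2 ≤ p.1}).indicator (fun p => φ p.2 * ψ p.1) := by
    ext ⟨t, s⟩; rfl
  have hFm : Measurable (Function.uncurry F) := by
    rw [hFu]
    exact ((hφm.comp measurable_snd).mul (hψm.comp measurable_fst)).indicator hK
  have hFint : Integrable (Function.uncurry F) (μ.prod μ) := by
    have hbound : Integrable (fun p : ℝ × ℝ => (1 : ℝ) * |φ p.2|) (μ.prod μ) :=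
      (integrable_const (1 : ℝ)).mul_prod hφ.abs
    refine Integrable.mono' (by simpa using hbound) hFm.aestronglyMeasurable ?_
    refine Filter.Eventually.of_forall fun p => ?_
    rw [hFu]
    by_cases h : p ∈ {p : ℝ × ℝ | p.2 ≤ p.1}
    · rw [Set.indicator_of_mem h]
      calc ‖φ p.2 * ψ p.1‖ = |φ p.2| * |ψ p.1| := abs_mul _ _
        _ ≤ |φ p.2| * 1 := mul_le_mul_of_nonneg_left (hψ1 _) (abs_nonneg _)
        _ = |φ p.2| := mul_one _
    · rw [Set.indicator_of_notMem h]; simp [abs_nonneg]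
  have key : ∫ t, ∫ s, F t s ∂μ ∂μ = ∫ s, ∫ t, F t s ∂μ ∂μ :=
    integral_integral_swap hFint
  have lhs_eq : ∫ t in Set.Ioc a b, (∫ s in Set.Ioc a t, φ s) * ψ t
      = ∫ t, ∫ s, F t s ∂μ ∂μ := by
    refine setIntegral_congr_fun measurableSet_Ioc fun t ht => ?_
    have h1 : ∀ s, F t s = (Set.Iic t).indicator φ s * ψ t := by
      intro s
      by_cases h : s ≤ t
      · simp [hF, Set.indicator_of_mem, h]
      · simp [hF, Set.indicator_of_notMem, h]
    calc (∫ s in Set.Ioc a t, φ s) * ψ t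
        = (∫ s in Set.Ioc a b, (Set.Iic t).indicator φ s) * ψ t := by
          rw [setIntegral_indicator measurableSet_Iic, Set.Ioc_inter_Iic,
            min_eq_right ht.2]
      _ = ∫ s in Set.Ioc a b, (Set.Iic t).indicator φ s * ψ t := by
          rw [integral_mul_const]
      _ = ∫ s, F t s ∂μ := by simp_rw [h1]; rfl
  have rhs_eq : ∫ s, ∫ t, F t s ∂μ ∂μ
      = ∫ s in Set.Ioc a b, φ s * ∫ t in Set.Ioc s b, ψ t := by
    refine setIntegral_congr_fun measurableSet_Ioc fun s hs => ?_
    have h1 : ∀ t, F t s = (Set.Ici s).indicator ψ t * φ s := by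
      intro t
      by_cases h : s ≤ t
      · simp [hF, Set.indicator_of_mem, h, mul_comm]
      · simp [hF, Set.indicator_of_notMem, h]
    have h2 : Set.Ioc a b ∩ Set.Ici s = Set.Icc s b := by
      ext x
      simp only [Set.mem_inter_iff, Set.mem_Ioc, Set.mem_Ici, Set.mem_Icc]
      constructor
      · rintro ⟨⟨_, h2⟩, h3⟩; exact ⟨h3, h2⟩
      · rintro ⟨h1', h2⟩; exact ⟨⟨lt_of_lt_of_le hs.1 h1', h2⟩, h1'⟩
    calc ∫ t, F t s ∂μ
        = ∫ t in Set.Ioc a b, (Set.Ici s).indicator ψ t * φ s := by simp_rw [h1]; rfl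
      _ = (∫ t in Set.Ioc a b, (Set.Ici s).indicator ψ t) * φ s := integral_mul_const _ _
      _ = (∫ t in Set.Icc s b, ψ t) * φ s := by
          rw [setIntegral_indicator measurableSet_Ici, h2]
      _ = φ s * ∫ t in Set.Ioc s b, ψ t := by
          rw [integral_Icc_eq_integral_Ioc, mul_comm]
  rw [lhs_eq, key, rhs_eq]

theorem steffensen_Linfty_one (a b : ℝ) (hab : a < b) (f f' g : ℝ → ℝ)
    (hg : IntervalIntegrable g volume a b)
    (hg01 : ∀ t ∈ Set.Icc a b, 0 ≤ g t ∧ g t ≤ 1)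
    (hf' : IntervalIntegrable f' volume a b)
    (hAC : ∀ x ∈ Set.Icc a b, f x = f a + ∫ t in a..x, f' t)
    (hbdd : MemLp f' ⊤ (volume.restrict (Set.Icc a b)))
    (lam : ℝ) (hlam : lam = ∫ t in a..b, g t) :
    |(∫ t in a..(a + lam), f t) - ∫ t in a..b, f t * g t|
      ≤ 1 / 2 * (lam ^ 2 + (b - a - lam) ^ 2)
          * (eLpNormEssSup f' (volume.restrict (Set.Icc a b))).toReal := by
  have hab' : a ≤ b := hab.le
  set μI := volume.restrict (Set.Ioc a b) with hμI
  have hgI : IntegrableOn g (Set.Ioc a b) := hg.1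
  have hfI' : IntegrableOn f' (Set.Ioc a b) := hf'.1
  -- measurable representatives
  have hgm := hgI.aestronglyMeasurable
  set g₁ : ℝ → ℝ := fun t => max 0 (min 1 (hgm.mk g t)) with hg₁def
  have hg₁m : Measurable g₁ :=
    measurable_const.max (measurable_const.min hgm.measurable_mk)
  have hg₁eq : g =ᵐ[μI] g₁ := by
    filter_upwards [hgm.ae_eq_mk, ae_restrict_mem measurableSet_Ioc] with t h1 h2
    obtain ⟨h3, h4⟩ := hg01 t (Set.Ioc_subset_Icc_self h2)
    rw [hg₁def]
    simp only [← h1]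
    rw [min_eq_right h4, max_eq_right h3]
  have hg₁01 : ∀ t, 0 ≤ g₁ t ∧ g₁ t ≤ 1 := by
    intro t
    refine ⟨le_max_left _ _, max_le zero_le_one (min_le_left _ _)⟩
  have hfm' := hfI'.aestronglyMeasurable
  set f₁ : ℝ → ℝ := hfm'.mk f' with hf₁def
  have hf₁m : Measurable f₁ := hfm'.measurable_mk
  have hf₁eq : f' =ᵐ[μI] f₁ := hfm'.ae_eq_mk
  have hf₁I : IntegrableOn f₁ (Set.Ioc a b) := hfI'.congr_fun_ae hf₁eq
  -- lam bounds
  have hlam0 : 0 ≤ lam := by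
    rw [hlam, intervalIntegral.integral_of_le hab']
    exact setIntegral_nonneg measurableSet_Ioc
      fun t ht => (hg01 t (Set.Ioc_subset_Icc_self ht)).1
  have hlamle : lam ≤ b - a := by
    rw [hlam, intervalIntegral.integral_of_le hab']
    calc ∫ t in Set.Ioc a b, g t ≤ ∫ _t in Set.Ioc a b, (1 : ℝ) :=
          setIntegral_mono_on hgI
            (integrableOn_const measure_Ioc_lt_top.ne) measurableSet_Ioc
            (fun t ht => (hg01 t (Set.Ioc_subset_Icc_self ht)).2)
      _ = b - a := by simp [Real.volume_Ioc, ENNReal.toReal_ofReal (by linarith : (0:ℝ) ≤ b - a), hab']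
  set c := a + lam with hc
  have hac : a ≤ c := by rw [hc]; linarith
  have hcb : c ≤ b := by rw [hc]; linarith
  -- G
  set G : ℝ → ℝ := fun s => ∫ t in Set.Ioc a s, g t with hG
  have hGsplit : ∀ s ∈ Set.Icc a b, ∫ t in Set.Ioc s b, g t = lam - G s := by
    intro s hs
    have hU : Set.Ioc a s ∪ Set.Ioc s b = Set.Ioc a b := Set.Ioc_union_Ioc_eq_Ioc hs.1 hs.2
    have h2 : ∫ t in Set.Ioc a s ∪ Set.Ioc s b, g t
        = G s + ∫ t in Set.Ioc s b, g t :=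
      setIntegral_union (Set.Ioc_disjoint_Ioc_of_le le_rfl) measurableSet_Ioc
        (hgI.mono_set (Set.Ioc_subset_Ioc_right hs.2))
        (hgI.mono_set (Set.Ioc_subset_Ioc_left hs.1))
    rw [hU] at h2
    rw [hlam, intervalIntegral.integral_of_le hab', h2]
    ring
  have hG0 : ∀ s ∈ Set.Icc a b, 0 ≤ G s := by
    intro s hs
    exact setIntegral_nonneg measurableSet_Ioc
      fun t ht => (hg01 t ⟨ht.1.le, ht.2.trans hs.2⟩).1
  have hGle : ∀ s ∈ Set.Icc a b, G s ≤ s - a := by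
    intro s hs
    calc G s ≤ ∫ _t in Set.Ioc a s, (1 : ℝ) :=
          setIntegral_mono_on (hgI.mono_set (Set.Ioc_subset_Ioc_right hs.2))
            (integrableOn_const measure_Ioc_lt_top.ne) measurableSet_Ioc
            (fun t ht => (hg01 t ⟨ht.1.le, ht.2.trans hs.2⟩).2)
      _ = s - a := by simp [Real.volume_Ioc, ENNReal.toReal_ofReal (by linarith [hs.1] : (0:ℝ) ≤ s - a), hs.1]
  have hGb0 : ∀ s ∈ Set.Icc a b, 0 ≤ lam - G s := by
    intro s hs
    rw [← hGsplit s hs]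
    exact setIntegral_nonneg measurableSet_Ioc
      fun t ht => (hg01 t ⟨hs.1.trans ht.1.le, ht.2⟩).1
  have hGble : ∀ s ∈ Set.Icc a b, lam - G s ≤ b - s := by
    intro s hs
    rw [← hGsplit s hs]
    calc ∫ t in Set.Ioc s b, g t ≤ ∫ _t in Set.Ioc s b, (1 : ℝ) :=
          setIntegral_mono_on (hgI.mono_set (Set.Ioc_subset_Ioc_left hs.1))
            (integrableOn_const measure_Ioc_lt_top.ne) measurableSet_Ioc
            (fun t ht => (hg01 t ⟨hs.1.trans ht.1.le, ht.2⟩).2)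
      _ = b - s := by simp [Real.volume_Ioc, ENNReal.toReal_ofReal (by linarith [hs.2] : (0:ℝ) ≤ b - s), hs.2]
  -- essential sup bound
  set M := (eLpNormEssSup f' (volume.restrict (Set.Icc a b))).toReal with hMdef
  have hMfin : eLpNormEssSup f' (volume.restrict (Set.Icc a b)) < ⊤ := by
    have h := hbdd.2
    rwa [eLpNorm_exponent_top] at h
  have hMae : ∀ᵐ s ∂(volume.restrict (Set.Icc a b)), |f' s| ≤ M := by
    filter_upwards [ae_le_eLpNormEssSup (f := f') (μ := volume.restrict (Set.Icc a b))] with s hs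
    have h2 := ENNReal.toReal_mono hMfin.ne hs
    simpa [Real.norm_eq_abs] using h2
  have hMaeI : ∀ᵐ s ∂μI, |f₁ s| ≤ M := by
    have h1 : ∀ᵐ s ∂μI, |f' s| ≤ M :=
      ae_restrict_of_ae_restrict_of_subset Set.Ioc_subset_Icc_self hMae
    filter_upwards [h1, hf₁eq] with s hs1 hs2
    rwa [← hs2]
  -- continuity and integrability of f
  have hfc : ContinuousOn (fun x => f a + ∫ t in a..x, f' t) (Set.Icc a b) := by
    refine continuousOn_const.add ?_
    have h1 : IntegrableOn f' (Set.uIcc a b) := by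
      rw [Set.uIcc_of_le hab']
      exact (integrableOn_Icc_iff_integrableOn_Ioc).2 hfI'
    have := intervalIntegral.continuousOn_primitive_interval (f := f') (μ := volume) (a := a) (b := b) h1
    rwa [Set.uIcc_of_le hab'] at this
  have hfIcc : IntegrableOn f (Set.Icc a b) :=
    (hfc.integrableOn_Icc).congr_fun (fun x hx => (hAC x hx).symm) measurableSet_Icc
  have hfIoc : IntegrableOn f (Set.Ioc a b) := hfIcc.mono_set Set.Ioc_subset_Icc_self
  have hsubcc : Set.Ioc a c ⊆ Set.Icc a b := fun x hx => ⟨hx.1.le, hx.2.trans hcb⟩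
  have hfIocc : IntegrableOn f (Set.Ioc a c) := hfIcc.mono_set hsubcc
  -- primitive identity
  have hprim : ∀ t ∈ Set.Icc a b, ∫ s in Set.Ioc a t, f₁ s = f t - f a := by
    intro t ht
    have h1 : ∫ s in Set.Ioc a t, f₁ s = ∫ s in Set.Ioc a t, f' s :=
      (integral_congr_ae
        (ae_restrict_of_ae_restrict_of_subset (Set.Ioc_subset_Ioc_right ht.2) hf₁eq)).symm
    rw [h1, ← intervalIntegral.integral_of_le ht.1, hAC t ht]
    ring
  -- Claim A
  have claimA : ∫ t in Set.Ioc a c, (f t - f a) = ∫ s in Set.Ioc a c, (c - s) * f₁ s := by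
    have hφI : IntegrableOn f₁ (Set.Ioc a c) := hf₁I.mono_set (Set.Ioc_subset_Ioc_right hcb)
    have h := swap_aux a c f₁ (fun _ => 1) hf₁m measurable_const hφI (by norm_num)
    simp only [mul_one] at h
    calc ∫ t in Set.Ioc a c, (f t - f a)
        = ∫ t in Set.Ioc a c, ∫ s in Set.Ioc a t, f₁ s :=
          setIntegral_congr_fun measurableSet_Ioc fun t ht =>
            (hprim t (hsubcc ht)).symm
      _ = ∫ s in Set.Ioc a c, f₁ s * ∫ t in Set.Ioc s c, (1 : ℝ) := h
      _ = ∫ s in Set.Ioc a c, (c - s) * f₁ s := by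
          refine setIntegral_congr_fun measurableSet_Ioc fun s hs => ?_
          rw [setIntegral_const, Real.volume_real_Ioc_of_le (by linarith [hs.2] : s ≤ c), smul_eq_mul, mul_one,
            mul_comm]
  -- Claim B
  have claimB : ∫ t in Set.Ioc a b, (f t - f a) * g t
      = ∫ s in Set.Ioc a b, (lam - G s) * f₁ s := by
    have h := swap_aux a b f₁ g₁ hf₁m hg₁m hf₁I
      (fun t => abs_le.2 ⟨by linarith [(hg₁01 t).1], (hg₁01 t).2⟩)
    calc ∫ t in Set.Ioc a b, (f t - f a) * g t
        = ∫ t in Set.Ioc a b, (∫ s in Set.Ioc a t, f₁ s) * g₁ t := by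
          refine integral_congr_ae ?_
          filter_upwards [hg₁eq, ae_restrict_mem measurableSet_Ioc] with t h1 h2
          rw [hprim t (Set.Ioc_subset_Icc_self h2), h1]
      _ = ∫ s in Set.Ioc a b, f₁ s * ∫ t in Set.Ioc s b, g₁ t := h
      _ = ∫ s in Set.Ioc a b, (lam - G s) * f₁ s := by
          refine setIntegral_congr_fun measurableSet_Ioc fun s hs => ?_
          have h3 : ∫ t in Set.Ioc s b, g₁ t = ∫ t in Set.Ioc s b, g t :=
            (integral_congr_ae
              (ae_restrict_of_ae_restrict_of_subset (Set.Ioc_subset_Ioc_left hs.1.le) hg₁eq)).symm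
          rw [h3, hGsplit s (Set.Ioc_subset_Icc_self hs), mul_comm]
  -- decomposition
  have hconstc : IntegrableOn (fun _ : ℝ => f a) (Set.Ioc a c) :=
    (integrableOn_const measure_Ioc_lt_top.ne)
  have eq1 : ∫ t in a..(a + lam), f t = (∫ s in Set.Ioc a c, (c - s) * f₁ s) + lam * f a := by
    rw [show a + lam = c from rfl, intervalIntegral.integral_of_le hac]
    have h0 : ∫ t in Set.Ioc a c, f t
        = ∫ t in Set.Ioc a c, ((f t - f a) + f a) := by
      refine setIntegral_congr_fun measurableSet_Ioc fun t _ => by ring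
    have h1 : IntegrableOn (fun t => f t - f a) (Set.Ioc a c) := hfIocc.sub hconstc
    rw [h0, integral_add h1 hconstc, claimA, setIntegral_const,
      Real.volume_real_Ioc_of_le hac, smul_eq_mul]
    have : c - a = lam := by rw [hc]; ring
    rw [this]
  have hfg : IntegrableOn (fun t => f t * g t) (Set.Ioc a b) := by
    obtain ⟨C, hC⟩ := (isCompact_Icc (a := a) (b := b)).exists_bound_of_continuousOn hfc
    refine Integrable.bdd_mul (c := C) hgI hfIoc.aestronglyMeasurable ?_
    refine (ae_restrict_iff' measurableSet_Ioc).2 (Filter.Eventually.of_forall fun x hx => ?_)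
    have hx' := Set.Ioc_subset_Icc_self hx
    rw [Real.norm_eq_abs, hAC x hx']
    have := hC x hx'
    rwa [Real.norm_eq_abs] at this
  have hfag : IntegrableOn (fun t => f a * g t) (Set.Ioc a b) := hgI.const_mul (f a)
  have eq2 : ∫ t in a..b, f t * g t
      = (∫ s in Set.Ioc a b, (lam - G s) * f₁ s) + f a * lam := by
    rw [intervalIntegral.integral_of_le hab']
    have h0 : ∫ t in Set.Ioc a b, f t * g t
        = ∫ t in Set.Ioc a b, ((f t - f a) * g t + f a * g t) := by
      refine setIntegral_congr_fun measurableSet_Ioc fun t _ => by ring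
    have h1 : IntegrableOn (fun t => (f t - f a) * g t) (Set.Ioc a b) := by
      have : (fun t => (f t - f a) * g t) = fun t => f t * g t - f a * g t := by
        funext t; ring
      rw [this]
      exact hfg.sub hfag
    have h2 : ∫ t in Set.Ioc a b, g t = lam := by
      rw [hlam, intervalIntegral.integral_of_le hab']
    rw [h0, integral_add h1 hfag, claimB, integral_const_mul, h2]
  -- the difference as a single integral
  set ψ : ℝ → ℝ := fun s =>
    (Set.Ioc a c).indicator (fun s => (c - s) * f₁ s) s - (lam - G s) * f₁ s with hψdef
  have hindrw : ∫ s in Set.Ioc a b, (Set.Ioc a c).indicator (fun s => (c - s) * f₁ s) s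
      = ∫ s in Set.Ioc a c, (c - s) * f₁ s := by
    rw [setIntegral_indicator measurableSet_Ioc]
    congr 1
    rw [Set.Ioc_inter_Ioc, sup_idem, min_eq_right hcb]
  -- integrability pieces
  have hGc : ContinuousOn G (Set.Icc a b) :=
    intervalIntegral.continuousOn_primitive ((integrableOn_Icc_iff_integrableOn_Ioc).2 hgI)
  have hD2int : IntegrableOn (fun s => (lam - G s) * f₁ s) (Set.Ioc a b) := by
    refine Integrable.bdd_mul (c := b - a) hf₁I
      (((continuousOn_const.sub hGc).mono Set.Ioc_subset_Icc_self).aestronglyMeasurable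
        measurableSet_Ioc) ?_
    refine (ae_restrict_iff' measurableSet_Ioc).2 (Filter.Eventually.of_forall fun s hs => ?_)
    have hs' := Set.Ioc_subset_Icc_self hs
    rw [Real.norm_eq_abs]
    exact abs_le.2 ⟨by linarith [hGb0 s hs'], by linarith [hGble s hs', hs'.1]⟩
  have hindint : Integrable
      ((Set.Ioc a c).indicator (fun s => (c - s) * f₁ s)) μI := by
    rw [hμI, integrable_indicator_iff measurableSet_Ioc, IntegrableOn,
      Measure.restrict_restrict measurableSet_Ioc, Set.Ioc_inter_Ioc, sup_idem,
      min_eq_left hcb]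
    refine Integrable.bdd_mul (c := c - a)
      (hf₁I.mono_set (Set.Ioc_subset_Ioc_right hcb))
      (continuous_const.sub continuous_id).aestronglyMeasurable.restrict ?_
    refine (ae_restrict_iff' measurableSet_Ioc).2 (Filter.Eventually.of_forall fun s hs => ?_)
    rw [Real.norm_eq_abs]
    exact abs_le.2 ⟨by linarith [hs.2], by linarith [hs.1]⟩
  have hψint : Integrable ψ μI := hindint.sub hD2int
  have hDiff : (∫ t in a..(a + lam), f t) - ∫ t in a..b, f t * g t
      = ∫ s in Set.Ioc a b, ψ s := by
    rw [eq1, eq2, integral_sub hindint hD2int, hindrw]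
    ring
  -- the weight function
  set w : ℝ → ℝ := fun s => if s ≤ c then s - a else b - s with hwdef
  have hwm : Measurable w :=
    Measurable.ite (measurableSet_le measurable_id measurable_const)
      (measurable_id.sub measurable_const) (measurable_const.sub measurable_id)
  have hψw : ∀ᵐ s ∂μI, |ψ s| ≤ M * w s := by
    filter_upwards [hMaeI, ae_restrict_mem measurableSet_Ioc] with s hsM hs
    have hsIcc : s ∈ Set.Icc a b := Set.Ioc_subset_Icc_self hs
    by_cases h : s ≤ c
    · have hmem : s ∈ Set.Ioc a c := ⟨hs.1, h⟩
      have hψs : ψ s = (G s - (s - a)) * f₁ s := by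
        rw [hψdef]
        simp only [Set.indicator_of_mem hmem]
        rw [hc]; ring
      rw [hψs, abs_mul, hwdef]
      simp only [if_pos h]
      have h1 : |G s - (s - a)| ≤ s - a :=
        abs_le.2 ⟨by linarith [hG0 s hsIcc, hsIcc.1], by linarith [hGle s hsIcc, hsIcc.1]⟩
      calc |G s - (s - a)| * |f₁ s| ≤ (s - a) * M :=
            mul_le_mul h1 hsM (abs_nonneg _) (by linarith [hs.1])
        _ = M * (s - a) := mul_comm _ _
    · have hmem : s ∉ Set.Ioc a c := fun hm => h hm.2
      have hψs : ψ s = -((lam - G s) * f₁ s) := by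
        rw [hψdef]
        simp [Set.indicator_of_notMem hmem]
      rw [hψs, abs_neg, abs_mul, hwdef]
      simp only [if_neg h]
      have h1 : |lam - G s| ≤ b - s :=
        abs_le.2 ⟨by linarith [hGb0 s hsIcc, hsIcc.2], hGble s hsIcc⟩
      calc |lam - G s| * |f₁ s| ≤ (b - s) * M :=
            mul_le_mul h1 hsM (abs_nonneg _) (by linarith [hs.2])
        _ = M * (b - s) := mul_comm _ _
  have hM0 : 0 ≤ M := ENNReal.toReal_nonneg
  have hwint : Integrable (fun s => M * w s) μI := by
    refine Integrable.mono' (g := fun _ => M * (b - a))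
      (integrableOn_const measure_Ioc_lt_top.ne)
      (measurable_const.mul hwm).aestronglyMeasurable ?_
    refine (ae_restrict_iff' measurableSet_Ioc).2 (Filter.Eventually.of_forall fun s hs => ?_)
    rw [Real.norm_eq_abs, abs_mul, abs_of_nonneg hM0]
    refine mul_le_mul_of_nonneg_left ?_ hM0
    simp only [hwdef]
    by_cases h : s ≤ c
    · rw [if_pos h, abs_of_nonneg (by linarith [hs.1])]; linarith [hs.2]
    · rw [if_neg h, abs_of_nonneg (by linarith [hs.2])]; linarith [hs.1]
  have hstep1 : |∫ s in Set.Ioc a b, ψ s| ≤ ∫ s in Set.Ioc a b, |ψ s| := by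
    have := norm_integral_le_integral_norm (μ := μI) ψ
    simpa [Real.norm_eq_abs] using this
  have hstep2 : ∫ s in Set.Ioc a b, |ψ s| ≤ ∫ s in Set.Ioc a b, M * w s :=
    integral_mono_ae hψint.abs hwint hψw
  have hwval : ∫ s in Set.Ioc a b, M * w s
      = M * (lam ^ 2 / 2 + (b - a - lam) ^ 2 / 2) := by
    rw [integral_const_mul]
    congr 1
    have hw1 : IntegrableOn w (Set.Ioc a c) := by
      refine Integrable.mono' (g := fun _ => b - a)
        (integrableOn_const measure_Ioc_lt_top.ne)
        hwm.aestronglyMeasurable.restrict ?_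
      refine (ae_restrict_iff' measurableSet_Ioc).2 (Filter.Eventually.of_forall fun s hs => ?_)
      simp only [hwdef, Real.norm_eq_abs]
      by_cases h : s ≤ c
      · rw [if_pos h, abs_of_nonneg (by linarith [hs.1])]; linarith [hs.2, hcb]
      · rw [if_neg h, abs_of_nonneg (by linarith [hs.2, hcb])]; linarith [hs.1]
    have hw2 : IntegrableOn w (Set.Ioc c b) := by
      refine Integrable.mono' (g := fun _ => b - a)
        (integrableOn_const measure_Ioc_lt_top.ne)
        hwm.aestronglyMeasurable.restrict ?_
      refine (ae_restrict_iff' measurableSet_Ioc).2 (Filter.Eventually.of_forall fun s hs => ?_)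
      simp only [hwdef, Real.norm_eq_abs]
      by_cases h : s ≤ c
      · rw [if_pos h, abs_of_nonneg (by linarith [hs.1, hac])]; linarith [hs.2]
      · rw [if_neg h, abs_of_nonneg (by linarith [hs.2])]; linarith [hs.1, hac]
    rw [← Set.Ioc_union_Ioc_eq_Ioc hac hcb,
      setIntegral_union (Set.Ioc_disjoint_Ioc_of_le le_rfl) measurableSet_Ioc hw1 hw2]
    have hv1 : ∫ s in Set.Ioc a c, w s = lam ^ 2 / 2 := by
      have h0 : ∫ s in Set.Ioc a c, w s = ∫ s in Set.Ioc a c, (s - a) := by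
        refine setIntegral_congr_fun measurableSet_Ioc fun s hs => ?_
        rw [hwdef]; exact if_pos hs.2
      rw [h0, ← intervalIntegral.integral_of_le hac,
        intervalIntegral.integral_sub intervalIntegral.intervalIntegrable_id intervalIntegrable_const,
        integral_id, intervalIntegral.integral_const, smul_eq_mul, hc]
      ring
    have hv2 : ∫ s in Set.Ioc c b, w s = (b - a - lam) ^ 2 / 2 := by
      have h0 : ∫ s in Set.Ioc c b, w s = ∫ s in Set.Ioc c b, (b - s) := by
        refine setIntegral_congr_fun measurableSet_Ioc fun s hs => ?_
        rw [hwdef]; exact if_neg (not_le.2 hs.1)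
      rw [h0, ← intervalIntegral.integral_of_le hcb,
        intervalIntegral.integral_sub intervalIntegrable_const intervalIntegral.intervalIntegrable_id,
        integral_id, intervalIntegral.integral_const, smul_eq_mul, hc]
      ring
    rw [hv1, hv2]
  calc |(∫ t in a..(a + lam), f t) - ∫ t in a..b, f t * g t|
      = |∫ s in Set.Ioc a b, ψ s| := by rw [hDiff]
    _ ≤ ∫ s in Set.Ioc a b, |ψ s| := hstep1
    _ ≤ ∫ s in Set.Ioc a b, M * w s := hstep2
    _ = M * (lam ^ 2 / 2 + (b - a - lam) ^ 2 / 2) := hwval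
    _ = 1 / 2 * (lam ^ 2 + (b - a - lam) ^ 2) * M := by ring
end

section
/- Let g : [a,b] → ℝ be integrable with 0 ≤ g(t) ≤ 1 for all t ∈ [a,b], and let f : [a,b] → ℝ be absolutely continuous on [a,b] with derivative f' ∈ L^p[a,b] for some p > 1, and let q satisfy 1/p + 1/q = 1. Setting λ = ∫_a^b g(t) dt, one has |∫_a^{a+λ} f(t) dt − ∫_a^b f(t) g(t) dt| ≤ (‖f'‖_{L^p[a,b]} / (q+1)^{1/q}) · [λ^{(q+1)/q} + (b − a − λ)^{(q+1)/q}]. -/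
open MeasureTheory
open scoped NNReal

private lemma steff_fubini {a b : ℝ} {f' h : ℝ → ℝ}
    (hf' : IntegrableOn f' (Set.Ioc a b))
    (hh : IntegrableOn h (Set.Ioc a b)) :
    (∫ t in Set.Ioc a b, (∫ s in Set.Ioc a t, f' s) * h t)
      = ∫ s in Set.Ioc a b, f' s * ∫ t in Set.Ioc s b, h t := by
  set μ := volume.restrict (Set.Ioc a b) with hμ
  set k : ℝ × ℝ → ℝ :=
    Set.indicator {z : ℝ × ℝ | z.1 ≤ z.2} (fun z => f' z.1 * h z.2) with hk
  have hmeas : MeasurableSet {z : ℝ × ℝ | z.1 ≤ z.2} :=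
    measurableSet_le measurable_fst measurable_snd
  have hk_aesm : AEStronglyMeasurable k (μ.prod μ) :=
    ((hf'.aestronglyMeasurable.comp_fst).mul hh.aestronglyMeasurable.comp_snd).indicator hmeas
  have hk_int : Integrable k (μ.prod μ) := by
    refine (hf'.mul_prod hh).mono hk_aesm ?_
    filter_upwards with z
    exact norm_indicator_le_norm_self _ _
  have L : (∫ t, (∫ s, k (s, t) ∂μ) ∂μ)
      = ∫ t in Set.Ioc a b, (∫ s in Set.Ioc a t, f' s) * h t := by
    refine setIntegral_congr_fun measurableSet_Ioc fun t ht => ?_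
    have hsec : (fun s => k (s, t)) =
        Set.indicator (Set.Iic t) (fun s => f' s * h t) := by
      funext s
      by_cases hst : s ≤ t <;> simp [hk, Set.indicator, hst]
    rw [hsec, hμ, integral_indicator measurableSet_Iic,
      Measure.restrict_restrict measurableSet_Iic]
    have : Set.Iic t ∩ Set.Ioc a b = Set.Ioc a t := by
      ext x
      simp only [Set.mem_inter_iff, Set.mem_Iic, Set.mem_Ioc]
      constructor
      · rintro ⟨h1, h2, h3⟩; exact ⟨h2, h1⟩
      · rintro ⟨h1, h2⟩; exact ⟨h2, h1, h2.trans ht.2⟩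
    rw [this, integral_mul_const]
  have R : (∫ s, (∫ t, k (s, t) ∂μ) ∂μ)
      = ∫ s in Set.Ioc a b, f' s * ∫ t in Set.Ioc s b, h t := by
    refine setIntegral_congr_fun measurableSet_Ioc fun s hs => ?_
    have hsec : (fun t => k (s, t)) =
        Set.indicator (Set.Ici s) (fun t => f' s * h t) := by
      funext t
      by_cases hst : s ≤ t <;> simp [hk, Set.indicator, hst]
    rw [hsec, hμ, integral_indicator measurableSet_Ici,
      Measure.restrict_restrict measurableSet_Ici]
    have : Set.Ici s ∩ Set.Ioc a b = Set.Icc s b := by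
      ext x
      simp only [Set.mem_inter_iff, Set.mem_Ici, Set.mem_Ioc, Set.mem_Icc]
      constructor
      · rintro ⟨h1, h2, h3⟩; exact ⟨h1, h3⟩
      · rintro ⟨h1, h2⟩; exact ⟨h1, hs.1.trans_le h1, h2⟩
    rw [this, integral_Icc_eq_integral_Ioc, integral_const_mul]
  rw [← L, ← R]
  exact (integral_integral_swap (f := fun s t => k (s, t)) hk_int).symm

private lemma steff_rpow_add_le {x y z : ℝ} (hx : 0 ≤ x) (hy : 0 ≤ y)
    (hz0 : 0 ≤ z) (hz1 : z ≤ 1) : (x + y) ^ z ≤ x ^ z + y ^ z := by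
  have h := NNReal.rpow_add_le_add_rpow x.toNNReal y.toNNReal hz0 hz1
  have hxy : ((x.toNNReal + y.toNNReal : ℝ≥0) : ℝ) = x + y := by
    simp [Real.coe_toNNReal _ hx, Real.coe_toNNReal _ hy]
  calc (x + y) ^ z = (((x.toNNReal + y.toNNReal : ℝ≥0) : ℝ)) ^ z := by rw [hxy]
    _ = (((x.toNNReal + y.toNNReal) ^ z : ℝ≥0) : ℝ) := by rw [← NNReal.coe_rpow]
    _ ≤ ((x.toNNReal ^ z + y.toNNReal ^ z : ℝ≥0) : ℝ) := by exact_mod_cast h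
    _ = x ^ z + y ^ z := by
        push_cast [NNReal.coe_rpow, Real.coe_toNNReal _ hx, Real.coe_toNNReal _ hy]
        ring

theorem steffensen_Lp_one (a b p q : ℝ) (hab : a < b) (hp : 1 < p)
    (hpq : 1 / p + 1 / q = 1) (f f' g : ℝ → ℝ)
    (hg : IntervalIntegrable g volume a b)
    (hg01 : ∀ t ∈ Set.Icc a b, 0 ≤ g t ∧ g t ≤ 1)
    (hf' : IntervalIntegrable f' volume a b)
    (hf'p : IntervalIntegrable (fun x => |f' x| ^ p) volume a b)
    (hAC : ∀ x ∈ Set.Icc a b, f x = f a + ∫ t in a..x, f' t)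
    (lam : ℝ) (hlam : lam = ∫ t in a..b, g t) :
    |(∫ t in a..(a + lam), f t) - ∫ t in a..b, f t * g t|
      ≤ (∫ x in a..b, |f' x| ^ p) ^ (1 / p) / (q + 1) ^ (1 / q)
          * (lam ^ ((q + 1) / q) + (b - a - lam) ^ ((q + 1) / q)) := by
  have hab' : a ≤ b := hab.le
  have hp0 : 0 < p := lt_trans one_pos hp
  have hconj : p.HolderConjugate q := Real.holderConjugate_iff.2 ⟨hp, by rw [← one_div, ← one_div]; exact hpq⟩
  have hq1 : 1 < q := hconj.symm.lt
  have hq0 : 0 < q := lt_trans one_pos hq1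
  have hlam0 : 0 ≤ lam := by
    rw [hlam]
    exact intervalIntegral.integral_nonneg hab' fun u hu => (hg01 u hu).1
  have hlamb : lam ≤ b - a := by
    rw [hlam]
    calc ∫ t in a..b, g t ≤ ∫ t in a..b, (1:ℝ) :=
          intervalIntegral.integral_mono_on hab' hg intervalIntegrable_const
            fun u hu => (hg01 u hu).2
      _ = b - a := by simp
  have hmem : a + lam ≤ b := by linarith
  have hge : a ≤ a + lam := by linarith
  set χ : ℝ → ℝ := Set.indicator (Set.Ioc a (a + lam)) (fun _ => (1:ℝ)) with hχ
  set h : ℝ → ℝ := fun t => χ t - g t with hh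
  set F : ℝ → ℝ := fun t => ∫ s in a..t, f' s with hF
  set C : ℝ → ℝ := fun t => f a + F t with hC
  set G : ℝ → ℝ := fun s => ∫ t in Set.Ioc s b, h t with hG
  set φ : ℝ → ℝ := fun s => if s ≤ a + lam then s - a else b - s with hφ
  -- integrability facts
  have hgI : IntegrableOn g (Set.Ioc a b) := hg.1
  have hχI : IntegrableOn χ (Set.Ioc a b) := by
    apply Integrable.indicator _ measurableSet_Ioc
    exact integrableOn_const measure_Ioc_lt_top.ne
  have hhI : IntegrableOn h (Set.Ioc a b) := hχI.sub hgI
  have hFcont : ContinuousOn F (Set.Icc a b) := by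
    have := intervalIntegral.continuousOn_primitive_interval' hf' Set.left_mem_uIcc
    rwa [Set.uIcc_of_le hab'] at this
  have hFI : IntegrableOn F (Set.Ioc a b) :=
    (hFcont.integrableOn_Icc).mono_set Set.Ioc_subset_Icc_self
  have hCcont : ContinuousOn C (Set.Icc a b) := continuousOn_const.add hFcont
  have hCI : IntegrableOn C (Set.Ioc a b) :=
    (hCcont.integrableOn_Icc).mono_set Set.Ioc_subset_Icc_self
  -- Step 1: rewrite the difference as ∫ f' * G
  have E1 : (∫ t in a..(a + lam), f t) = ∫ t in Set.Ioc a (a + lam), C t := by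
    rw [intervalIntegral.integral_of_le hge]
    refine setIntegral_congr_fun measurableSet_Ioc fun t ht => ?_
    exact hAC t ⟨ht.1.le, ht.2.trans hmem⟩
  have E2 : (∫ t in a..b, f t * g t) = ∫ t in Set.Ioc a b, C t * g t := by
    rw [intervalIntegral.integral_of_le hab']
    refine setIntegral_congr_fun measurableSet_Ioc fun t ht => ?_
    rw [hAC t ⟨ht.1.le, ht.2⟩]
  have E3 : (∫ t in Set.Ioc a (a + lam), C t) = ∫ t in Set.Ioc a b, χ t * C t := by
    have : ∀ t, χ t * C t = Set.indicator (Set.Ioc a (a + lam)) C t := by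
      intro t
      by_cases ht : t ∈ Set.Ioc a (a + lam) <;> simp [hχ, Set.indicator, ht]
    simp_rw [this]
    rw [integral_indicator measurableSet_Ioc, Measure.restrict_restrict measurableSet_Ioc,
      Set.inter_eq_self_of_subset_left (Set.Ioc_subset_Ioc le_rfl hmem)]
  have hχbd : ∀ t, ‖χ t‖ ≤ 1 := by
    intro t
    by_cases ht : t ∈ Set.Ioc a (a + lam) <;> simp [hχ, Set.indicator, ht]
  have hχC : IntegrableOn (fun t => χ t * C t) (Set.Ioc a b) :=
    hCI.bdd_mul hχI.aestronglyMeasurable (Filter.Eventually.of_forall hχbd)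
  obtain ⟨M, hM⟩ : ∃ M, ∀ x ∈ Set.Icc a b, ‖C x‖ ≤ M :=
    isCompact_Icc.exists_bound_of_continuousOn hCcont
  have hCg : IntegrableOn (fun t => C t * g t) (Set.Ioc a b) := by
    refine hgI.bdd_mul (c := M) hCI.aestronglyMeasurable ?_
    refine (ae_restrict_iff' measurableSet_Ioc).2 (Filter.Eventually.of_forall ?_)
    exact fun x hx => hM x ⟨hx.1.le, hx.2⟩
  have E4 : (∫ t in Set.Ioc a b, χ t * C t) - (∫ t in Set.Ioc a b, C t * g t)
      = ∫ t in Set.Ioc a b, C t * h t := by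
    rw [← integral_sub hχC hCg]
    congr 1; funext t; simp only [hh]; ring
  have hinth : (∫ t in Set.Ioc a b, h t) = 0 := by
    have h1 : (∫ t in Set.Ioc a b, χ t) = lam := by
      rw [hχ, integral_indicator measurableSet_Ioc,
        Measure.restrict_restrict measurableSet_Ioc,
        Set.inter_eq_self_of_subset_left (Set.Ioc_subset_Ioc le_rfl hmem)]
      simp [Real.volume_Ioc, ENNReal.toReal_ofReal hlam0, hlam0]
    have h2 : (∫ t in Set.Ioc a b, g t) = lam := by
      rw [hlam, intervalIntegral.integral_of_le hab']
    rw [hh]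
    rw [integral_sub hχI hgI, h1, h2, sub_self]
  have E5 : (∫ t in Set.Ioc a b, C t * h t) = ∫ t in Set.Ioc a b, F t * h t := by
    have : ∀ t, C t * h t = f a * h t + F t * h t := fun t => by simp only [hC]; ring
    simp_rw [this]
    obtain ⟨M', hM'⟩ : ∃ M', ∀ x ∈ Set.Icc a b, ‖F x‖ ≤ M' :=
      isCompact_Icc.exists_bound_of_continuousOn hFcont
    have hFh : IntegrableOn (fun t => F t * h t) (Set.Ioc a b) := by
      refine hhI.bdd_mul (c := M') hFI.aestronglyMeasurable ?_
      refine (ae_restrict_iff' measurableSet_Ioc).2 (Filter.Eventually.of_forall ?_)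
      exact fun x hx => hM' x ⟨hx.1.le, hx.2⟩
    rw [integral_add ((hhI.const_mul (f a))) hFh, integral_const_mul, hinth, mul_zero, zero_add]
  have E6 : (∫ t in Set.Ioc a b, F t * h t) = ∫ s in Set.Ioc a b, f' s * G s := by
    have : (∫ t in Set.Ioc a b, F t * h t)
        = ∫ t in Set.Ioc a b, (∫ s in Set.Ioc a t, f' s) * h t := by
      refine setIntegral_congr_fun measurableSet_Ioc fun t ht => ?_
      simp only [hF]
      rw [intervalIntegral.integral_of_le ht.1.le]
    rw [this, steff_fubini hf'.1 hhI]
  have keyD : (∫ t in a..(a + lam), f t) - (∫ t in a..b, f t * g t)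
      = ∫ s in Set.Ioc a b, f' s * G s := by
    rw [E1, E2, E3, E4, E5, E6]
  -- Step 2: pointwise bound |G s| ≤ φ s on Ioc a b
  have hGbound : ∀ s ∈ Set.Ioc a b, |G s| ≤ φ s := by
    intro s hs
    have hsa : a < s := hs.1
    have hsb : s ≤ b := hs.2
    have hgsub1 : IntervalIntegrable g volume a s :=
      hg.mono_set (by rw [Set.uIcc_of_le hsa.le, Set.uIcc_of_le hab']
                      exact Set.Icc_subset_Icc le_rfl hsb)
    have hgsub2 : IntervalIntegrable g volume s b :=
      hg.mono_set (by rw [Set.uIcc_of_le hsb, Set.uIcc_of_le hab']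
                      exact Set.Icc_subset_Icc hsa.le le_rfl)
    set Gg : ℝ := ∫ t in s..b, g t with hGg
    have hGg_eq : (∫ t in Set.Ioc s b, g t) = Gg := (intervalIntegral.integral_of_le hsb).symm
    have hGg0 : 0 ≤ Gg :=
      intervalIntegral.integral_nonneg hsb fun u hu => (hg01 u ⟨hsa.le.trans hu.1, hu.2⟩).1
    have hGgb : Gg ≤ b - s := by
      calc Gg ≤ ∫ t in s..b, (1:ℝ) :=
            intervalIntegral.integral_mono_on hsb hgsub2 intervalIntegrable_const
              fun u hu => (hg01 u ⟨hsa.le.trans hu.1, hu.2⟩).2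
        _ = b - s := by simp
    have hsplit : (∫ t in a..s, g t) + Gg = lam := by
      rw [hlam, hGg]
      exact intervalIntegral.integral_add_adjacent_intervals hgsub1 hgsub2
    have hga0 : 0 ≤ ∫ t in a..s, g t :=
      intervalIntegral.integral_nonneg hsa.le fun u hu => (hg01 u ⟨hu.1, hu.2.trans hsb⟩).1
    have hgab : (∫ t in a..s, g t) ≤ s - a := by
      calc (∫ t in a..s, g t) ≤ ∫ t in a..s, (1:ℝ) :=
            intervalIntegral.integral_mono_on hsa.le hgsub1 intervalIntegrable_const
              fun u hu => (hg01 u ⟨hu.1, hu.2.trans hsb⟩).2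
        _ = s - a := by simp
    have hχint : (∫ t in Set.Ioc s b, χ t) = if s ≤ a + lam then a + lam - s else 0 := by
      rw [hχ, integral_indicator measurableSet_Ioc,
        Measure.restrict_restrict measurableSet_Ioc]
      have hinter : Set.Ioc a (a + lam) ∩ Set.Ioc s b = Set.Ioc s (a + lam) := by
        rw [Set.Ioc_inter_Ioc, max_eq_right hsa.le, min_eq_left hmem]
      rw [hinter]
      by_cases hcase : s ≤ a + lam
      · simp [Real.volume_Ioc, ENNReal.toReal_ofReal (by linarith : (0:ℝ) ≤ a + lam - s), hcase]
      · rw [Set.Ioc_eq_empty (by intro hc; exact hcase hc.le)]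
        simp [hcase]
    have hGeq : G s = (if s ≤ a + lam then a + lam - s else 0) - Gg := by
      rw [hG]
      simp only [hh]
      rw [integral_sub (hχI.mono_set (Set.Ioc_subset_Ioc hsa.le le_rfl))
        (hgI.mono_set (Set.Ioc_subset_Ioc hsa.le le_rfl)), hχint, hGg_eq]
    by_cases hcase : s ≤ a + lam
    · rw [hGeq, if_pos hcase, hφ]
      simp only [if_pos hcase]
      rw [abs_le]
      constructor
      · -- a + lam - s - Gg ≥ -(s - a), i.e. Gg ≤ lam
        have : Gg ≤ lam := by linarith
        linarith
      · -- a + lam - s - Gg ≤ s - a, using Gg ≥ lam - (s - a)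
        have : lam - (s - a) ≤ Gg := by linarith
        linarith
    · rw [hGeq, if_neg hcase, hφ]
      simp only [if_neg hcase]
      rw [zero_sub, abs_neg, abs_of_nonneg hGg0]
      exact hGgb
  -- Step 3: Hölder
  set μ : Measure ℝ := volume.restrict (Set.Ioc a b) with hμ
  haveI : IsFiniteMeasure μ := ⟨by rw [Measure.restrict_apply_univ]; exact measure_Ioc_lt_top⟩
  have hφm : Measurable φ := by
    refine Measurable.ite (measurableSet_le measurable_id measurable_const) ?_ ?_
    · exact measurable_id.sub measurable_const
    · exact measurable_const.sub measurable_id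
  have hφnonneg : ∀ s ∈ Set.Ioc a b, 0 ≤ φ s := by
    intro s hs
    rw [hφ]
    by_cases hcase : s ≤ a + lam
    · simp only [if_pos hcase]; linarith [hs.1]
    · simp only [if_neg hcase]; linarith [hs.2]
  have hφbd : ∀ s ∈ Set.Ioc a b, ‖φ s‖ ≤ b - a := by
    intro s hs
    rw [Real.norm_eq_abs, abs_of_nonneg (hφnonneg s hs), hφ]
    by_cases hcase : s ≤ a + lam
    · simp only [if_pos hcase]; linarith [hs.2]
    · simp only [if_neg hcase]; linarith [hs.1]
  have hφae : ∀ᵐ x ∂μ, ‖φ x‖ ≤ b - a :=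
    (ae_restrict_iff' measurableSet_Ioc).2 (Filter.Eventually.of_forall hφbd)
  have hφaenn : 0 ≤ᵐ[μ] φ :=
    (ae_restrict_iff' measurableSet_Ioc).2 (Filter.Eventually.of_forall hφnonneg)
  have hMφ : MemLp φ (ENNReal.ofReal q) μ :=
    MemLp.of_bound hφm.aestronglyMeasurable (b - a) hφae
  have hMf : MemLp (fun x => |f' x|) (ENNReal.ofReal p) μ := by
    have hne : ENNReal.ofReal p ≠ 0 := by
      simp only [ne_eq, ENNReal.ofReal_eq_zero, not_le]; exact hp0
    have hnt : ENNReal.ofReal p ≠ ⊤ := ENNReal.ofReal_ne_top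
    have hiff := memLp_norm_rpow_iff (q := ENNReal.ofReal p) (p := ENNReal.ofReal p)
      (hf'.1.aestronglyMeasurable) hne hnt
    rw [ENNReal.div_self hne hnt] at hiff
    have h2 : MemLp f' (ENNReal.ofReal p) μ := by
      apply hiff.1
      rw [memLp_one_iff_integrable]
      have : (fun x => ‖f' x‖ ^ (ENNReal.ofReal p).toReal) = fun x => |f' x| ^ p := by
        funext x
        rw [Real.norm_eq_abs, ENNReal.toReal_ofReal hp0.le]
      rw [this]
      exact hf'p.1
    simpa only [Real.norm_eq_abs] using h2.norm
  have hHolder : (∫ x, |f' x| * φ x ∂μ)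
      ≤ (∫ x, |f' x| ^ p ∂μ) ^ (1 / p) * (∫ x, φ x ^ q ∂μ) ^ (1 / q) :=
    integral_mul_le_Lp_mul_Lq_of_nonneg hconj
      (Filter.Eventually.of_forall fun x => abs_nonneg _) hφaenn hMf hMφ
  -- the integral of |f'| * φ dominates |∫ f' * G|
  have hfφI : Integrable (fun x => |f' x| * φ x) μ := by
    have h1 : Integrable (fun x => φ x * ‖f' x‖) μ :=
      (hf'.1.norm).bdd_mul (c := b - a) hφm.aestronglyMeasurable hφae
    refine h1.congr (Filter.Eventually.of_forall fun x => ?_)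
    simp only [Real.norm_eq_abs]; ring
  have hDbound : |∫ s in Set.Ioc a b, f' s * G s| ≤ ∫ x, |f' x| * φ x ∂μ := by
    calc |∫ s in Set.Ioc a b, f' s * G s| ≤ ∫ s in Set.Ioc a b, ‖f' s * G s‖ := by
          have := norm_integral_le_integral_norm (μ := μ) (fun s => f' s * G s)
          rwa [Real.norm_eq_abs] at this
      _ ≤ ∫ x, |f' x| * φ x ∂μ := by
          refine integral_mono_of_nonneg
            (Filter.Eventually.of_forall fun x => norm_nonneg _) hfφI ?_
          refine (ae_restrict_iff' measurableSet_Ioc).2 (Filter.Eventually.of_forall ?_)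
          intro s hs
          simp only [Real.norm_eq_abs, abs_mul]
          exact mul_le_mul_of_nonneg_left (hGbound s hs) (abs_nonneg _)
  -- Step 4: compute ∫ φ^q
  have hcont_rpow : Continuous (fun y : ℝ => y ^ q) := by
    rw [continuous_iff_continuousAt]
    intro x
    exact Real.continuousAt_rpow_const x q (Or.inr hq0.le)
  have hI1 : IntegrableOn (fun x => φ x ^ q) (Set.Ioc a (a + lam)) := by
    have hc : IntegrableOn (fun x : ℝ => (x - a) ^ q) (Set.Ioc a (a + lam)) :=
      ((hcont_rpow.comp (continuous_id.sub continuous_const)).integrableOn_Icc).mono_set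
        Set.Ioc_subset_Icc_self
    refine hc.congr_fun (fun x hx => ?_) measurableSet_Ioc
    simp only [hφ, if_pos hx.2]
  have hI2 : IntegrableOn (fun x => φ x ^ q) (Set.Ioc (a + lam) b) := by
    have hc : IntegrableOn (fun x : ℝ => (b - x) ^ q) (Set.Ioc (a + lam) b) :=
      ((hcont_rpow.comp (continuous_const.sub continuous_id)).integrableOn_Icc).mono_set
        Set.Ioc_subset_Icc_self
    refine hc.congr_fun (fun x hx => ?_) measurableSet_Ioc
    simp only [hφ, if_neg (not_le.2 hx.1)]
  have hP1 : (∫ x in Set.Ioc a (a + lam), φ x ^ q) = lam ^ (q + 1) / (q + 1) := by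
    have e1 : (∫ x in Set.Ioc a (a + lam), φ x ^ q)
        = ∫ x in Set.Ioc a (a + lam), (x - a) ^ q := by
      refine setIntegral_congr_fun measurableSet_Ioc fun x hx => ?_
      simp only [hφ, if_pos hx.2]
    rw [e1, ← intervalIntegral.integral_of_le hge,
      intervalIntegral.integral_comp_sub_right (fun y : ℝ => y ^ q) a]
    have : a - a = (0:ℝ) := by ring
    rw [this]
    have : a + lam - a = lam := by ring
    rw [this]
    rw [integral_rpow (Or.inl (by linarith : (-1:ℝ) < q))]
    rw [Real.zero_rpow (by linarith : q + 1 ≠ 0)]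
    ring
  have hP2 : (∫ x in Set.Ioc (a + lam) b, φ x ^ q) = (b - a - lam) ^ (q + 1) / (q + 1) := by
    have e1 : (∫ x in Set.Ioc (a + lam) b, φ x ^ q)
        = ∫ x in Set.Ioc (a + lam) b, (b - x) ^ q := by
      refine setIntegral_congr_fun measurableSet_Ioc fun x hx => ?_
      simp only [hφ, if_neg (not_le.2 hx.1)]
    rw [e1, ← intervalIntegral.integral_of_le hmem,
      intervalIntegral.integral_comp_sub_left (fun y : ℝ => y ^ q) b]
    have : b - b = (0:ℝ) := by ring
    rw [this]
    have : b - (a + lam) = b - a - lam := by ring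
    rw [this]
    rw [integral_rpow (Or.inl (by linarith : (-1:ℝ) < q))]
    rw [Real.zero_rpow (by linarith : q + 1 ≠ 0)]
    ring
  have hT : (∫ x, φ x ^ q ∂μ)
      = (lam ^ (q + 1) + (b - a - lam) ^ (q + 1)) / (q + 1) := by
    have : (∫ x, φ x ^ q ∂μ)
        = (∫ x in Set.Ioc a (a + lam), φ x ^ q) + ∫ x in Set.Ioc (a + lam) b, φ x ^ q := by
      rw [hμ, ← Set.Ioc_union_Ioc_eq_Ioc hge hmem]
      exact setIntegral_union (Set.Ioc_disjoint_Ioc_of_le le_rfl) measurableSet_Ioc hI1 hI2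
    rw [this, hP1, hP2]
    ring
  -- Step 5: final algebra
  set A : ℝ := ∫ x in a..b, |f' x| ^ p with hA
  have hA0 : 0 ≤ A :=
    intervalIntegral.integral_nonneg hab' fun u _ => Real.rpow_nonneg (abs_nonneg _) p
  have hAeq : (∫ x, |f' x| ^ p ∂μ) = A := by
    rw [hA, intervalIntegral.integral_of_le hab', hμ]
  set X : ℝ := lam ^ (q + 1) with hX
  set Y : ℝ := (b - a - lam) ^ (q + 1) with hY
  have hX0 : 0 ≤ X := Real.rpow_nonneg hlam0 _
  have hY0 : 0 ≤ Y := Real.rpow_nonneg (by linarith) _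
  have hq1pos : (0:ℝ) < q + 1 := by linarith
  have hTbound : (∫ x, φ x ^ q ∂μ) ^ (1 / q)
      ≤ ((q + 1) ^ (1 / q))⁻¹ * (lam ^ ((q + 1) / q) + (b - a - lam) ^ ((q + 1) / q)) := by
    rw [hT]
    have e1 : (X + Y) / (q + 1) = (X + Y) * (q + 1)⁻¹ := by ring
    rw [e1, Real.mul_rpow (by positivity) (by positivity),
      Real.inv_rpow hq1pos.le]
    rw [mul_comm]
    refine mul_le_mul_of_nonneg_left ?_ (by positivity)
    have hsub : (X + Y) ^ (1 / q) ≤ X ^ (1 / q) + Y ^ (1 / q) :=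
      steff_rpow_add_le hX0 hY0 (by positivity) (by
        rw [div_le_one hq0]; linarith)
    refine hsub.trans (le_of_eq ?_)
    rw [hX, hY, ← Real.rpow_mul hlam0, ← Real.rpow_mul (by linarith : (0:ℝ) ≤ b - a - lam),
      mul_one_div]
  -- put everything together
  rw [keyD]
  calc |∫ s, f' s * G s ∂μ| ≤ ∫ x, |f' x| * φ x ∂μ := hDbound
    _ ≤ (∫ x, |f' x| ^ p ∂μ) ^ (1 / p) * (∫ x, φ x ^ q ∂μ) ^ (1 / q) := hHolder
    _ = A ^ (1 / p) * (∫ x, φ x ^ q ∂μ) ^ (1 / q) := by rw [hAeq]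
    _ ≤ A ^ (1 / p) * (((q + 1) ^ (1 / q))⁻¹
          * (lam ^ ((q + 1) / q) + (b - a - lam) ^ ((q + 1) / q))) := by
        refine mul_le_mul_of_nonneg_left hTbound (Real.rpow_nonneg hA0 _)
    _ = A ^ (1 / p) / (q + 1) ^ (1 / q)
          * (lam ^ ((q + 1) / q) + (b - a - lam) ^ ((q + 1) / q)) := by
        rw [div_eq_mul_inv]; ring
end

section
/- Let g : [a,b] → ℝ be integrable with 0 ≤ g(t) ≤ 1 for all t ∈ [a,b], and let f : [a,b] → ℝ be absolutely continuous on [a,b] with derivative f' ∈ L^1[a,b]. Setting λ = ∫_a^b g(t) dt, one has |∫_a^{a+λ} f(t) dt − ∫_a^b f(t) g(t) dt| ≤ (∫_{a+λ}^b g(t) dt) · ‖f'‖_{L^1[a,b]}. -/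
open MeasureTheory

/-- Fubini for the triangle: swap a primitive inside an interval integral. -/
lemma fubini_triangle_s16 (a b : ℝ) (hab : a ≤ b) (φ ψ : ℝ → ℝ)
    (hφ : IntervalIntegrable φ volume a b) (hψ : IntervalIntegrable ψ volume a b) :
    ∫ t in a..b, (∫ s in a..t, φ s) * ψ t = ∫ s in a..b, φ s * ∫ t in s..b, ψ t := by
  have hφ' : IntegrableOn φ (Set.Ioc a b) volume :=
    (intervalIntegrable_iff_integrableOn_Ioc_of_le hab).mp hφ
  have hψ' : IntegrableOn ψ (Set.Ioc a b) volume :=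
    (intervalIntegrable_iff_integrableOn_Ioc_of_le hab).mp hψ
  set μ := volume.restrict (Set.Ioc a b) with hμ
  set K : ℝ → ℝ → ℝ := fun t s => if s ≤ t then φ s * ψ t else 0 with hK
  have hKint : Integrable (Function.uncurry K) (μ.prod μ) := by
    have hbase : Integrable (fun p : ℝ × ℝ => ψ p.1 * φ p.2) (μ.prod μ) :=
      hψ'.mul_prod hφ'
    have : Function.uncurry K =
        Set.indicator {p : ℝ × ℝ | p.2 ≤ p.1} (fun p => ψ p.1 * φ p.2) := by
      funext p
      simp only [Function.uncurry, hK, Set.indicator_apply, Set.mem_setOf_eq]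
      by_cases h : p.2 ≤ p.1 <;> simp [h, mul_comm]
    rw [this]
    exact hbase.indicator (measurableSet_le measurable_snd measurable_fst)
  have step1 : ∫ t in a..b, (∫ s in a..t, φ s) * ψ t = ∫ t, ∫ s, K t s ∂μ ∂μ := by
    rw [intervalIntegral.integral_of_le hab]
    refine setIntegral_congr_fun measurableSet_Ioc (fun t ht => ?_)
    have h1 : (fun s => K t s) = Set.indicator (Set.Iic t) (fun s => φ s * ψ t) := by
      funext s
      simp only [hK, Set.indicator_apply, Set.mem_Iic]
    rw [h1, integral_indicator measurableSet_Iic, hμ,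
      Measure.restrict_restrict measurableSet_Iic]
    have h2 : Set.Iic t ∩ Set.Ioc a b = Set.Ioc a t := by
      ext x
      simp only [Set.mem_inter_iff, Set.mem_Iic, Set.mem_Ioc]
      constructor
      · rintro ⟨h1, h2, h3⟩; exact ⟨h2, h1⟩
      · rintro ⟨h1, h2⟩; exact ⟨h2, h1, h2.trans ht.2⟩
    rw [h2, integral_mul_const, intervalIntegral.integral_of_le ht.1.le]
  have step3 : ∫ s, ∫ t, K t s ∂μ ∂μ = ∫ s in a..b, φ s * ∫ t in s..b, ψ t := by
    rw [intervalIntegral.integral_of_le hab]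
    refine setIntegral_congr_fun measurableSet_Ioc (fun s hs => ?_)
    have h1 : (fun t => K t s) = Set.indicator (Set.Ici s) (fun t => φ s * ψ t) := by
      funext t
      simp only [hK, Set.indicator_apply, Set.mem_Ici]
    rw [h1, integral_indicator measurableSet_Ici, hμ,
      Measure.restrict_restrict measurableSet_Ici]
    have h2 : Set.Ici s ∩ Set.Ioc a b = Set.Icc s b := by
      ext x
      simp only [Set.mem_inter_iff, Set.mem_Ici, Set.mem_Ioc, Set.mem_Icc]
      constructor
      · rintro ⟨h1, h2, h3⟩; exact ⟨h1, h3⟩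
      · rintro ⟨h1, h2⟩; exact ⟨h1, hs.1.trans_le h1, h2⟩
    rw [h2, integral_Icc_eq_integral_Ioc, integral_const_mul,
      intervalIntegral.integral_of_le hs.2]
  rw [step1, integral_integral_swap hKint, step3]

theorem steffensen_L1_one (a b : ℝ) (hab : a < b) (f f' g : ℝ → ℝ)
    (hg : IntervalIntegrable g volume a b)
    (hg01 : ∀ t ∈ Set.Icc a b, 0 ≤ g t ∧ g t ≤ 1)
    (hf' : IntervalIntegrable f' volume a b)
    (hAC : ∀ x ∈ Set.Icc a b, f x = f a + ∫ t in a..x, f' t)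
    (lam : ℝ) (hlam : lam = ∫ t in a..b, g t) :
    |(∫ t in a..(a + lam), f t) - ∫ t in a..b, f t * g t|
      ≤ (∫ t in (a + lam)..b, g t) * ∫ x in a..b, |f' x| := by
  set c := a + lam with hc
  -- basic facts about g-integrals over subintervals
  have intg_nonneg : ∀ u v : ℝ, a ≤ u → u ≤ v → v ≤ b → 0 ≤ ∫ t in u..v, g t := by
    intro u v hau huv hvb
    refine intervalIntegral.integral_nonneg huv (fun t ht => ?_)
    exact (hg01 t ⟨hau.trans ht.1, ht.2.trans hvb⟩).1
  have intg_le_len : ∀ u v : ℝ, a ≤ u → u ≤ v → v ≤ b → (∫ t in u..v, g t) ≤ v - u := by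
    intro u v hau huv hvb
    have : (∫ t in u..v, g t) ≤ ∫ t in u..v, (1 : ℝ) := by
      refine intervalIntegral.integral_mono_on huv (hg.mono_set ?_) intervalIntegrable_const
        (fun t ht => (hg01 t ⟨hau.trans ht.1, ht.2.trans hvb⟩).2)
      rw [Set.uIcc_of_le huv, Set.uIcc_of_le hab.le]
      exact Set.Icc_subset_Icc hau hvb
    simpa using this
  have adj : ∀ u v w : ℝ, a ≤ u → u ≤ v → v ≤ w → w ≤ b →
      (∫ t in u..w, g t) = (∫ t in u..v, g t) + ∫ t in v..w, g t := by
    intro u v w hau huv hvw hwb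
    refine (intervalIntegral.integral_add_adjacent_intervals ?_ ?_).symm
    · refine hg.mono_set ?_
      rw [Set.uIcc_of_le huv, Set.uIcc_of_le hab.le]
      exact Set.Icc_subset_Icc hau (hvw.trans hwb)
    · refine hg.mono_set ?_
      rw [Set.uIcc_of_le hvw, Set.uIcc_of_le hab.le]
      exact Set.Icc_subset_Icc (hau.trans huv) hwb
  have hlam0 : 0 ≤ lam := hlam ▸ intg_nonneg a b le_rfl hab.le le_rfl
  have hlamle : lam ≤ b - a := hlam ▸ intg_le_len a b le_rfl hab.le le_rfl
  have hac : a ≤ c := by simp [hc, hlam0]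
  have hcb : c ≤ b := by simp [hc]; linarith
  set μg : ℝ := ∫ t in c..b, g t with hμg
  have hμg0 : 0 ≤ μg := intg_nonneg c b hac hcb le_rfl
  set F : ℝ → ℝ := fun x => ∫ s in a..x, f' s with hF
  have hf'Icc : IntegrableOn f' (Set.Icc a b) volume :=
    (intervalIntegrable_iff_integrableOn_Icc_of_le hab.le).mp hf'
  have hFcont : ContinuousOn F (Set.Icc a b) := by
    have := intervalIntegral.continuousOn_primitive_interval' hf' (Set.left_mem_uIcc (a := a) (b := b))
    rwa [Set.uIcc_of_le hab.le] at this
  have hFint : IntervalIntegrable F volume a b := by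
    rw [← Set.uIcc_of_le hab.le] at hFcont
    exact hFcont.intervalIntegrable
  have hsub : Set.uIcc a c ⊆ Set.uIcc a b := by
    rw [Set.uIcc_of_le hac, Set.uIcc_of_le hab.le]
    exact Set.Icc_subset_Icc le_rfl hcb
  have hf'ac : IntervalIntegrable f' volume a c := hf'.mono_set hsub
  -- Step A : the left integral
  have stepA : (∫ t in a..c, f t) = lam * f a + ∫ t in a..c, F t := by
    have h1 : (∫ t in a..c, f t) = ∫ t in a..c, (f a + F t) := by
      refine intervalIntegral.integral_congr (fun t ht => ?_)
      rw [Set.uIcc_of_le hac] at ht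
      exact hAC t ⟨ht.1, ht.2.trans hcb⟩
    rw [h1, intervalIntegral.integral_add intervalIntegrable_const (hFint.mono_set hsub)]
    simp [hc, smul_eq_mul, mul_comm]
  -- Step B : the right integral
  have hgF : IntervalIntegrable (fun t => F t * g t) volume a b := by
    refine hg.continuousOn_mul ?_
    rw [Set.uIcc_of_le hab.le]; exact hFcont
  have stepB : (∫ t in a..b, f t * g t) = lam * f a + ∫ t in a..b, F t * g t := by
    have h1 : (∫ t in a..b, f t * g t) = ∫ t in a..b, (f a * g t + F t * g t) := by
      refine intervalIntegral.integral_congr (fun t ht => ?_)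
      rw [Set.uIcc_of_le hab.le] at ht
      rw [hAC t ht]; ring
    rw [h1, intervalIntegral.integral_add (hg.const_mul (f a)) hgF,
      intervalIntegral.integral_const_mul, ← hlam]
    ring
  -- Step C1 : Fubini on [a,c] with ψ = 1
  have stepC1 : (∫ t in a..c, F t) = ∫ s in a..c, f' s * (c - s) := by
    have h1 : (∫ t in a..c, F t) = ∫ t in a..c, F t * 1 := by simp
    rw [h1, fubini_triangle_s16 a c hac f' (fun _ => (1 : ℝ)) hf'ac intervalIntegrable_const]
    refine intervalIntegral.integral_congr (fun s hs => ?_)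
    simp
  -- Step C2 : Fubini on [a,b] with ψ = g
  have stepC2 : (∫ t in a..b, F t * g t) = ∫ s in a..b, f' s * ∫ t in s..b, g t :=
    fubini_triangle_s16 a b hab.le f' g hf' hg
  -- Step C3 : extend C1 to [a,b] with the truncated weight
  have hmaxcont : Continuous (fun s : ℝ => max (c - s) 0) :=
    (continuous_const.sub continuous_id).max continuous_const
  have hWint : ∀ u v : ℝ, Set.uIcc u v ⊆ Set.uIcc a b →
      IntervalIntegrable (fun s => f' s * max (c - s) 0) volume u v := by
    intro u v huv
    exact (hf'.mono_set huv).mul_continuousOn (hmaxcont.continuousOn)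
  have stepC3 : (∫ s in a..c, f' s * (c - s))
      = ∫ s in a..b, f' s * max (c - s) 0 := by
    have hsub2 : Set.uIcc c b ⊆ Set.uIcc a b := by
      rw [Set.uIcc_of_le hcb, Set.uIcc_of_le hab.le]
      exact Set.Icc_subset_Icc hac le_rfl
    have h2 : (∫ s in a..b, f' s * max (c - s) 0)
        = (∫ s in a..c, f' s * max (c - s) 0) + ∫ s in c..b, f' s * max (c - s) 0 :=
      (intervalIntegral.integral_add_adjacent_intervals (hWint a c hsub) (hWint c b hsub2)).symm
    have h3 : (∫ s in a..c, f' s * max (c - s) 0) = ∫ s in a..c, f' s * (c - s) := by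
      refine intervalIntegral.integral_congr (fun s hs => ?_)
      rw [Set.uIcc_of_le hac] at hs
      rw [max_eq_left (by linarith [hs.2] : (0:ℝ) ≤ c - s)]
    have h4 : (∫ s in c..b, f' s * max (c - s) 0) = 0 := by
      have heq : Set.EqOn (fun s => f' s * max (c - s) 0) (fun _ => (0:ℝ)) (Set.uIcc c b) := by
        intro s hs
        rw [Set.uIcc_of_le hcb] at hs
        simp only []
        rw [max_eq_right (by linarith [hs.1] : c - s ≤ (0:ℝ)), mul_zero]
      rw [intervalIntegral.integral_congr heq, intervalIntegral.integral_zero]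
    rw [h2, h3, h4, add_zero]
  -- put everything together : the difference equals ∫ f' * h
  set h : ℝ → ℝ := fun s => max (c - s) 0 - ∫ t in s..b, g t with hh
  have hGcont : ContinuousOn (fun s => ∫ t in s..b, g t) (Set.Icc a b) := by
    have h1 : ∀ s ∈ Set.Icc a b, (∫ t in s..b, g t) = (∫ t in a..b, g t) - ∫ t in a..s, g t := by
      intro s hs
      have := adj a s b le_rfl hs.1 hs.2 le_rfl
      linarith
    have h2 : ContinuousOn (fun s => (∫ t in a..b, g t) - ∫ t in a..s, g t) (Set.Icc a b) := by
      refine continuousOn_const.sub ?_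
      have := intervalIntegral.continuousOn_primitive_interval'
        hg (Set.left_mem_uIcc (a := a) (b := b))
      rwa [Set.uIcc_of_le hab.le] at this
    exact ContinuousOn.congr h2 h1
  have hGint : IntervalIntegrable (fun s => f' s * ∫ t in s..b, g t) volume a b := by
    refine hf'.mul_continuousOn ?_
    rw [Set.uIcc_of_le hab.le]; exact hGcont
  have key : (∫ t in a..c, f t) - (∫ t in a..b, f t * g t)
      = ∫ s in a..b, f' s * h s := by
    rw [stepA, stepB, stepC1, stepC2, stepC3]
    have : (∫ s in a..b, f' s * max (c - s) 0) - (∫ s in a..b, f' s * ∫ t in s..b, g t)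
        = ∫ s in a..b, (f' s * max (c - s) 0 - f' s * ∫ t in s..b, g t) :=
      (intervalIntegral.integral_sub (hWint a b (le_refl _)) hGint).symm
    rw [show lam * f a + (∫ s in a..b, f' s * max (c - s) 0)
        - (lam * f a + ∫ s in a..b, f' s * ∫ t in s..b, g t)
        = (∫ s in a..b, f' s * max (c - s) 0) - ∫ s in a..b, f' s * ∫ t in s..b, g t by ring,
      this]
    refine intervalIntegral.integral_congr (fun s hs => ?_)
    simp only [hh]; ring
  -- pointwise bound |h s| ≤ μg
  have hbound : ∀ s ∈ Set.Icc a b, |h s| ≤ μg := by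
    intro s hs
    rw [abs_le]
    rcases le_or_gt s c with hsc | hsc
    · have e1 : (∫ t in s..b, g t) = (∫ t in s..c, g t) + μg := adj s c b hs.1 hsc hcb le_rfl
      have e2 : (∫ t in a..b, g t) = (∫ t in a..s, g t) + ∫ t in s..b, g t :=
        adj a s b le_rfl hs.1 hs.2 le_rfl
      have e3 : (∫ t in s..c, g t) ≤ c - s := intg_le_len s c hs.1 hsc hcb
      have e4 : (∫ t in a..s, g t) ≤ s - a := intg_le_len a s le_rfl hs.1 hs.2
      have hmax : max (c - s) 0 = c - s := max_eq_left (by linarith)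
      constructor
      · simp only [hh, hmax]; linarith
      · simp only [hh, hmax]
        have : c - s ≤ ∫ t in s..b, g t := by rw [← hlam] at e2; simp only [hc] at *; linarith
        linarith
    · have e1 : μg = (∫ t in c..s, g t) + ∫ t in s..b, g t :=
        adj c s b hac hsc.le hs.2 le_rfl
      have e2 : 0 ≤ ∫ t in c..s, g t := intg_nonneg c s hac hsc.le hs.2
      have e3 : 0 ≤ ∫ t in s..b, g t := intg_nonneg s b hs.1 hs.2 le_rfl
      have hmax : max (c - s) 0 = 0 := max_eq_right (by linarith)
      constructor
      · simp only [hh, hmax]; linarith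
      · simp only [hh, hmax]; linarith
  -- final estimate
  have hfh : IntervalIntegrable (fun s => f' s * h s) volume a b := by
    refine hf'.mul_continuousOn ?_
    rw [Set.uIcc_of_le hab.le]
    exact (hmaxcont.continuousOn.sub hGcont)
  calc |(∫ t in a..c, f t) - ∫ t in a..b, f t * g t|
      = |∫ s in a..b, f' s * h s| := by rw [key]
    _ ≤ ∫ s in a..b, |f' s * h s| := intervalIntegral.abs_integral_le_integral_abs hab.le
    _ ≤ ∫ s in a..b, |f' s| * μg := by
        refine intervalIntegral.integral_mono_on hab.le hfh.abs (hf'.abs.mul_const μg)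
          (fun s hs => ?_)
        rw [abs_mul]
        exact mul_le_mul_of_nonneg_left (hbound s hs) (abs_nonneg _)
    _ = μg * ∫ x in a..b, |f' x| := by
        rw [intervalIntegral.integral_mul_const, mul_comm]
end

section
/- Let g : [a,b] → ℝ be integrable with 0 ≤ g(t) ≤ 1 for all t ∈ [a,b], and let f : [a,b] → ℝ be absolutely continuous on [a,b] with derivative f' essentially bounded on [a,b]. Setting λ = ∫_a^b g(t) dt, one has |∫_a^b f(t) g(t) dt − ∫_{b-λ}^b f(t) dt| ≤ (1/2)[λ² + (b − a − λ)²] · ‖f'‖_{L^∞[a,b]}. -/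
open MeasureTheory

theorem steffensen_Linfty_two (a b : ℝ) (hab : a < b) (f f' g : ℝ → ℝ)
    (hg : IntervalIntegrable g volume a b)
    (hg01 : ∀ t ∈ Set.Icc a b, 0 ≤ g t ∧ g t ≤ 1)
    (hf' : IntervalIntegrable f' volume a b)
    (hAC : ∀ x ∈ Set.Icc a b, f x = f a + ∫ t in a..x, f' t)
    (hbdd : MemLp f' ⊤ (volume.restrict (Set.Icc a b)))
    (lam : ℝ) (hlam : lam = ∫ t in a..b, g t) :
    |(∫ t in a..b, f t * g t) - ∫ t in (b - lam)..b, f t|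
      ≤ 1 / 2 * (lam ^ 2 + (b - a - lam) ^ 2)
          * (eLpNormEssSup f' (volume.restrict (Set.Icc a b))).toReal := by
  set M : ℝ := (eLpNormEssSup f' (volume.restrict (Set.Icc a b))).toReal with hM
  have hM0 : 0 ≤ M := ENNReal.toReal_nonneg
  -- bounds on lam
  have hlam0 : 0 ≤ lam := by
    rw [hlam]
    exact intervalIntegral.integral_nonneg hab.le fun u hu => (hg01 u hu).1
  have hlam1 : lam ≤ b - a := by
    rw [hlam]
    calc (∫ t in a..b, g t) ≤ ∫ _t in a..b, (1 : ℝ) :=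
          intervalIntegral.integral_mono_on hab.le hg intervalIntegrable_const
            fun x hx => (hg01 x hx).2
      _ = b - a := by simp
  set c : ℝ := b - lam with hc
  have hac : a ≤ c := by simp [hc]; linarith
  have hcb : c ≤ b := by simp [hc]; linarith
  have huIcc : Set.uIcc a b = Set.Icc a b := Set.uIcc_of_le hab.le
  -- the continuous representative
  set F : ℝ → ℝ := fun x => f a + ∫ t in a..x, f' t with hF
  have hFeq : Set.EqOn f F (Set.Icc a b) := fun x hx => hAC x hx
  have hFcont : ContinuousOn F (Set.Icc a b) := by
    rw [← huIcc]
    exact continuousOn_const.add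
      (intervalIntegral.continuousOn_primitive_interval' hf' Set.left_mem_uIcc)
  -- a.e. bound on f'
  have hM_lt : eLpNormEssSup f' (volume.restrict (Set.Icc a b)) < ⊤ := by
    have := hbdd.2
    rwa [eLpNorm_exponent_top] at this
  have hae : ∀ᵐ t, t ∈ Set.Icc a b → |f' t| ≤ M := by
    have h1 : ∀ᵐ t ∂(volume.restrict (Set.Icc a b)),
        ‖f' t‖₊ ≤ eLpNormEssSup f' (volume.restrict (Set.Icc a b)) := ae_le_eLpNormEssSup
    rw [ae_restrict_iff' measurableSet_Icc] at h1
    filter_upwards [h1] with t ht htmem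
    have := ht htmem
    have h2 : ((‖f' t‖₊ : ENNReal)).toReal ≤ M :=
      ENNReal.toReal_mono hM_lt.ne this
    simpa [Real.norm_eq_abs] using h2
  -- Lipschitz bound for F on [a,b]
  have hLip : ∀ x ∈ Set.Icc a b, ∀ y ∈ Set.Icc a b, |F x - F y| ≤ M * |x - y| := by
    intro x hx y hy
    have hix : IntervalIntegrable f' volume a x :=
      hf'.mono_set (by rw [huIcc]; exact Set.uIcc_subset_Icc ⟨le_refl a, hab.le⟩ hx)
    have hiy : IntervalIntegrable f' volume a y :=
      hf'.mono_set (by rw [huIcc]; exact Set.uIcc_subset_Icc ⟨le_refl a, hab.le⟩ hy)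
    have hsub : F x - F y = ∫ t in y..x, f' t := by
      simp only [hF]
      rw [add_sub_add_left_eq_sub]
      exact intervalIntegral.integral_interval_sub_left hix hiy
    rw [hsub]
    have haes : ∀ᵐ t, t ∈ Set.uIoc y x → ‖f' t‖ ≤ M := by
      filter_upwards [hae] with t ht htmem
      have : t ∈ Set.Icc a b := by
        have h1 : Set.uIoc y x ⊆ Set.uIcc y x := Set.Ioc_subset_Icc_self
        have h2 : Set.uIcc y x ⊆ Set.Icc a b := Set.uIcc_subset_Icc hy hx
        exact h2 (h1 htmem)
      simpa [Real.norm_eq_abs] using ht this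
    simpa [Real.norm_eq_abs] using
      intervalIntegral.norm_integral_le_of_norm_le_const_ae (C := M) haes
  -- integrability facts
  have hg_ac : IntervalIntegrable g volume a c :=
    hg.mono_set (Set.uIcc_subset_uIcc (by simp [Set.uIcc_of_le hab.le, hab.le])
      (by simp [Set.uIcc_of_le hab.le, hac, hcb]))
  have hg_cb : IntervalIntegrable g volume c b :=
    hg.mono_set (Set.uIcc_subset_uIcc (by simp [Set.uIcc_of_le hab.le, hac, hcb])
      (by simp [Set.uIcc_of_le hab.le, hab.le]))
  have hFc_ac : ContinuousOn F (Set.uIcc a c) :=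
    hFcont.mono (by rw [Set.uIcc_of_le hac]; exact Set.Icc_subset_Icc le_rfl hcb)
  have hFc_cb : ContinuousOn F (Set.uIcc c b) :=
    hFcont.mono (by rw [Set.uIcc_of_le hcb]; exact Set.Icc_subset_Icc hac le_rfl)
  have hFg_ac : IntervalIntegrable (fun t => F t * g t) volume a c :=
    hg_ac.continuousOn_mul hFc_ac
  have hFg_cb : IntervalIntegrable (fun t => F t * g t) volume c b :=
    hg_cb.continuousOn_mul hFc_cb
  have hF_cb : IntervalIntegrable F volume c b := hFc_cb.intervalIntegrable
  -- rewrite the integrals in terms of F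
  have e1 : (∫ t in a..b, f t * g t) = ∫ t in a..b, F t * g t := by
    apply intervalIntegral.integral_congr
    intro t ht
    rw [huIcc] at ht
    show f t * g t = F t * g t
    rw [hFeq ht]
  have e2 : (∫ t in c..b, f t) = ∫ t in c..b, F t := by
    apply intervalIntegral.integral_congr
    intro t ht
    rw [Set.uIcc_of_le hcb] at ht
    show f t = F t
    exact hFeq (Set.Icc_subset_Icc hac le_rfl ht)
  -- main decomposition
  have hsplit : (∫ t in a..b, F t * g t) =
      (∫ t in a..c, F t * g t) + ∫ t in c..b, F t * g t :=
    (intervalIntegral.integral_add_adjacent_intervals hFg_ac hFg_cb).symm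
  have hgsplit : (∫ t in a..c, g t) + (∫ t in c..b, g t) = lam := by
    rw [hlam]
    exact intervalIntegral.integral_add_adjacent_intervals hg_ac hg_cb
  set A := ∫ t in a..c, (F t - F c) * g t with hA
  set B := ∫ t in c..b, (F t - F c) * (1 - g t) with hB
  have hAval : A = (∫ t in a..c, F t * g t) - F c * ∫ t in a..c, g t := by
    rw [hA]
    have : (fun t => (F t - F c) * g t) = fun t => F t * g t - F c * g t := by
      funext t; ring
    rw [this, intervalIntegral.integral_sub hFg_ac (hg_ac.const_mul (F c)),
      intervalIntegral.integral_const_mul]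
  have hBval : B = (∫ t in c..b, F t) - (∫ t in c..b, F t * g t)
      - F c * (b - c) + F c * ∫ t in c..b, g t := by
    rw [hB]
    have : (fun t => (F t - F c) * (1 - g t))
        = fun t => (F t - F t * g t) - (F c - F c * g t) := by
      funext t; ring
    rw [this, intervalIntegral.integral_sub ((hF_cb.sub hFg_cb))
      ((intervalIntegrable_const).sub (hg_cb.const_mul (F c))),
      intervalIntegral.integral_sub hF_cb hFg_cb,
      intervalIntegral.integral_sub intervalIntegrable_const (hg_cb.const_mul (F c)),
      intervalIntegral.integral_const_mul, intervalIntegral.integral_const]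
    simp only [smul_eq_mul, mul_one]
    ring
  have hbc : b - c = lam := by rw [hc]; ring
  have hkey : (∫ t in a..b, F t * g t) - (∫ t in c..b, F t) = A - B := by
    rw [hAval, hBval, hsplit]
    linear_combination (F c) * hgsplit - (F c) * hbc
  -- bound A
  have hcmem : c ∈ Set.Icc a b := ⟨hac, hcb⟩
  have hIA : IntervalIntegrable (fun t => (F t - F c) * g t) volume a c :=
    hg_ac.continuousOn_mul (hFc_ac.sub continuousOn_const)
  have hAbound : |A| ≤ M * ((c - a) ^ 2 / 2) := by
    have h1 : |A| ≤ ∫ t in a..c, |(F t - F c) * g t| := by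
      exact intervalIntegral.abs_integral_le_integral_abs hac
    have h2 : (∫ t in a..c, |(F t - F c) * g t|) ≤ ∫ t in a..c, M * (c - t) := by
      apply intervalIntegral.integral_mono_on hac hIA.abs
        ((continuous_const.mul (continuous_const.sub continuous_id)).intervalIntegrable a c)
      intro t ht
      have htab : t ∈ Set.Icc a b := Set.Icc_subset_Icc le_rfl hcb ht
      have hF1 : |F t - F c| ≤ M * (c - t) := by
        have := hLip t htab c hcmem
        rwa [abs_of_nonpos (by linarith [ht.2] : t - c ≤ 0), neg_sub] at this
      have hg1 : |g t| ≤ 1 := by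
        rw [abs_of_nonneg (hg01 t htab).1]; exact (hg01 t htab).2
      calc |(F t - F c) * g t| = |F t - F c| * |g t| := abs_mul _ _
        _ ≤ (M * (c - t)) * 1 := by
            apply mul_le_mul hF1 hg1 (abs_nonneg _)
            nlinarith [ht.2]
        _ = M * (c - t) := by ring
    have h3 : (∫ t in a..c, M * (c - t)) = M * ((c - a) ^ 2 / 2) := by
      rw [intervalIntegral.integral_const_mul]
      have : (∫ t in a..c, (c - t)) = (c - a) ^ 2 / 2 := by
        have h := intervalIntegral.integral_sub (f := fun _ : ℝ => c) (g := fun t : ℝ => t)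
          (μ := volume) (a := a) (b := c) intervalIntegrable_const
          (continuous_id.intervalIntegrable a c)
        simp only [intervalIntegral.integral_const, integral_id, smul_eq_mul] at h
        rw [h]; ring
      rw [this]
    linarith
  -- bound B
  have hIB : IntervalIntegrable (fun t => (F t - F c) * (1 - g t)) volume c b :=
    (intervalIntegrable_const.sub hg_cb).continuousOn_mul (hFc_cb.sub continuousOn_const)
  have hBbound : |B| ≤ M * ((b - c) ^ 2 / 2) := by
    have h1 : |B| ≤ ∫ t in c..b, |(F t - F c) * (1 - g t)| := by
      exact intervalIntegral.abs_integral_le_integral_abs hcb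
    have h2 : (∫ t in c..b, |(F t - F c) * (1 - g t)|) ≤ ∫ t in c..b, M * (t - c) := by
      apply intervalIntegral.integral_mono_on hcb hIB.abs
        ((continuous_const.mul (continuous_id.sub continuous_const)).intervalIntegrable c b)
      intro t ht
      have htab : t ∈ Set.Icc a b := Set.Icc_subset_Icc hac le_rfl ht
      have hF1 : |F t - F c| ≤ M * (t - c) := by
        have := hLip t htab c hcmem
        rwa [abs_of_nonneg (by linarith [ht.1] : (0:ℝ) ≤ t - c)] at this
      have hg1 : |1 - g t| ≤ 1 := by
        rw [abs_of_nonneg (by linarith [(hg01 t htab).2])]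
        linarith [(hg01 t htab).1]
      calc |(F t - F c) * (1 - g t)| = |F t - F c| * |1 - g t| := abs_mul _ _
        _ ≤ (M * (t - c)) * 1 := by
            apply mul_le_mul hF1 hg1 (abs_nonneg _)
            nlinarith [ht.1]
        _ = M * (t - c) := by ring
    have h3 : (∫ t in c..b, M * (t - c)) = M * ((b - c) ^ 2 / 2) := by
      rw [intervalIntegral.integral_const_mul]
      have : (∫ t in c..b, (t - c)) = (b - c) ^ 2 / 2 := by
        have h := intervalIntegral.integral_sub (f := fun t : ℝ => t) (g := fun _ : ℝ => c)
          (μ := volume) (a := c) (b := b) (continuous_id.intervalIntegrable c b)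
          intervalIntegrable_const
        simp only [intervalIntegral.integral_const, integral_id, smul_eq_mul] at h
        rw [h]; ring
      rw [this]
    linarith
  -- conclude
  rw [e1, e2, hkey]
  have hca : c - a = b - a - lam := by rw [hc]; ring
  calc |A - B| ≤ |A| + |B| := abs_sub A B
    _ ≤ M * ((c - a) ^ 2 / 2) + M * ((b - c) ^ 2 / 2) := add_le_add hAbound hBbound
    _ = 1 / 2 * (lam ^ 2 + (b - a - lam) ^ 2) * M := by
        rw [hca, hbc]; ring
end

section
/- Let g : [a,b] → ℝ be integrable with 0 ≤ g(t) ≤ 1 for all t ∈ [a,b], and let f : [a,b] → ℝ be absolutely continuous on [a,b] with derivative f' ∈ L^p[a,b] for some p > 1, and let q satisfy 1/p + 1/q = 1. Setting λ = ∫_a^b g(t) dt, one has |∫_a^b f(t) g(t) dt − ∫_{b-λ}^b f(t) dt| ≤ (‖f'‖_{L^p[a,b]} / (q+1)^{1/q}) · [λ^{(q+1)/q} + (b − a − λ)^{(q+1)/q}]. -/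
open MeasureTheory

section SteffensenHelpers
open Set

private lemma real_rpow_subadd {x y r : ℝ} (hx : 0 ≤ x) (hy : 0 ≤ y) (hr : 0 ≤ r) (hr1 : r ≤ 1) :
    (x + y) ^ r ≤ x ^ r + y ^ r := by
  lift x to NNReal using hx
  lift y to NNReal using hy
  exact_mod_cast NNReal.rpow_add_le_add_rpow x y hr hr1

private lemma fubini_key (a b : ℝ) (u v : ℝ → ℝ)
    (hu : MeasureTheory.IntegrableOn u (Set.Ioc a b))
    (hv : MeasureTheory.IntegrableOn v (Set.Ioc a b)) :
    ∫ t in Set.Ioc a b, (∫ s in Set.Ioc a t, u s) * v t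
      = ∫ s in Set.Ioc a b, u s * ∫ t in Set.Ioc a b ∩ Set.Ici s, v t := by
  set U := (Set.Ioc a b).indicator u with hUdef
  set V := (Set.Ioc a b).indicator v with hVdef
  have hU : Integrable U := (integrable_indicator_iff measurableSet_Ioc).mpr hu
  have hV : Integrable V := (integrable_indicator_iff measurableSet_Ioc).mpr hv
  have huncurry : (Function.uncurry fun s t => if s ≤ t then U s * V t else 0)
      = ({p : ℝ × ℝ | p.1 ≤ p.2}).indicator (fun z => U z.1 * V z.2) := by
    funext z
    by_cases h : z.1 ≤ z.2 <;> simp [Function.uncurry, Set.indicator_apply, h]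
  have hF : Integrable (Function.uncurry fun s t => if s ≤ t then U s * V t else 0)
      ((volume : Measure ℝ).prod volume) := by
    rw [huncurry]
    exact (hU.mul_prod hV).indicator (measurableSet_le measurable_fst measurable_snd)
  have swap := integral_integral_swap hF
  have side1 : (∫ s : ℝ, ∫ t : ℝ, (if s ≤ t then U s * V t else 0))
      = ∫ s in Set.Ioc a b, u s * ∫ t in Set.Ioc a b ∩ Set.Ici s, v t := by
    have inner : ∀ s : ℝ, (∫ t : ℝ, (if s ≤ t then U s * V t else 0))
        = U s * ∫ t in Set.Ioc a b ∩ Set.Ici s, v t := by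
      intro s
      have e1 : (fun t => if s ≤ t then U s * V t else 0)
          = (Set.Ici s).indicator (fun t => U s * V t) := by
        funext t
        by_cases h : s ≤ t <;> simp [Set.indicator_apply, h]
      rw [e1, integral_indicator measurableSet_Ici, integral_const_mul, hVdef,
        integral_indicator measurableSet_Ioc, Measure.restrict_restrict measurableSet_Ioc]
    simp_rw [inner]
    have e2 : (fun s => U s * ∫ t in Set.Ioc a b ∩ Set.Ici s, v t)
        = (Set.Ioc a b).indicator (fun s => u s * ∫ t in Set.Ioc a b ∩ Set.Ici s, v t) := by
      funext s
      by_cases h : s ∈ Set.Ioc a b <;> simp [hUdef, Set.indicator_apply, h]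
    rw [e2, integral_indicator measurableSet_Ioc]
  have side2 : (∫ t : ℝ, ∫ s : ℝ, (if s ≤ t then U s * V t else 0))
      = ∫ t in Set.Ioc a b, (∫ s in Set.Ioc a t, u s) * v t := by
    have inner : ∀ t : ℝ, (∫ s : ℝ, (if s ≤ t then U s * V t else 0))
        = (∫ s in Set.Ioc a b ∩ Set.Iic t, u s) * V t := by
      intro t
      have e1 : (fun s => if s ≤ t then U s * V t else 0)
          = (Set.Iic t).indicator (fun s => U s * V t) := by
        funext s
        by_cases h : s ≤ t <;> simp [Set.indicator_apply, h]
      rw [e1, integral_indicator measurableSet_Iic, integral_mul_const, hUdef,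
        integral_indicator measurableSet_Ioc, Measure.restrict_restrict measurableSet_Ioc]
    simp_rw [inner]
    have e2 : (fun t => (∫ s in Set.Ioc a b ∩ Set.Iic t, u s) * V t)
        = (Set.Ioc a b).indicator (fun t => (∫ s in Set.Ioc a b ∩ Set.Iic t, u s) * v t) := by
      funext t
      by_cases h : t ∈ Set.Ioc a b <;> simp [hVdef, Set.indicator_apply, h]
    rw [e2, integral_indicator measurableSet_Ioc]
    refine setIntegral_congr_fun measurableSet_Ioc (fun t ht => ?_)
    rw [Set.Ioc_inter_Iic, min_eq_right ht.2]
  rw [← side1, ← side2, swap]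

end SteffensenHelpers

theorem steffensen_Lp_two (a b p q : ℝ) (hab : a < b) (hp : 1 < p)
    (hpq : 1 / p + 1 / q = 1) (f f' g : ℝ → ℝ)
    (hg : IntervalIntegrable g volume a b)
    (hg01 : ∀ t ∈ Set.Icc a b, 0 ≤ g t ∧ g t ≤ 1)
    (hf' : IntervalIntegrable f' volume a b)
    (hf'p : IntervalIntegrable (fun x => |f' x| ^ p) volume a b)
    (hAC : ∀ x ∈ Set.Icc a b, f x = f a + ∫ t in a..x, f' t)
    (lam : ℝ) (hlam : lam = ∫ t in a..b, g t) :
    |(∫ t in a..b, f t * g t) - ∫ t in (b - lam)..b, f t|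
      ≤ (∫ x in a..b, |f' x| ^ p) ^ (1 / p) / (q + 1) ^ (1 / q)
          * (lam ^ ((q + 1) / q) + (b - a - lam) ^ ((q + 1) / q)) := by
  have hp0 : 0 < p := lt_trans one_pos hp
  have hinvq : 0 < 1 / q := by
    have : 1 / p < 1 := by rw [div_lt_one hp0]; exact hp
    linarith
  have hq0 : 0 < q := one_div_pos.mp hinvq
  have hq1 : 1 < q := by
    have h1 : 0 < 1 / p := by positivity
    exact (div_lt_one hq0).mp (by linarith)
  have hgI : IntegrableOn g (Set.Ioc a b) := hg.1
  have hlam' : lam = ∫ t in Set.Ioc a b, g t := by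
    rw [hlam, intervalIntegral.integral_of_le hab.le]
  have hlam0 : 0 ≤ lam := by
    rw [hlam']
    exact setIntegral_nonneg measurableSet_Ioc
      (fun t ht => (hg01 t (Set.Ioc_subset_Icc_self ht)).1)
  have hlamle : lam ≤ b - a := by
    rw [hlam']
    calc ∫ t in Set.Ioc a b, g t ≤ ∫ _t in Set.Ioc a b, (1 : ℝ) := by
          refine setIntegral_mono_on hgI ?_ measurableSet_Ioc
            (fun t ht => (hg01 t (Set.Ioc_subset_Icc_self ht)).2)
          exact integrableOn_const measure_Ioc_lt_top.ne
      _ = b - a := by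
          rw [setIntegral_const, measureReal_def, Real.volume_Ioc, smul_eq_mul, mul_one,
            ENNReal.toReal_ofReal (by linarith)]
  set c : ℝ := b - lam with hc
  have hac : a ≤ c := by rw [hc]; linarith
  have hcb : c ≤ b := by rw [hc]; linarith
  -- primitive of f'
  set P : ℝ → ℝ := fun t => ∫ s in Set.Ioc a t, f' s with hP
  have hf'Icc : IntegrableOn f' (Set.Icc a b) :=
    (integrableOn_Icc_iff_integrableOn_Ioc).mpr hf'.1
  have hPc : ContinuousOn P (Set.Icc a b) :=
    intervalIntegral.continuousOn_primitive hf'Icc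
  have hPI : IntegrableOn P (Set.Icc a b) := hPc.integrableOn_Icc
  -- tail integral of g
  set G : ℝ → ℝ := fun s => ∫ t in Set.Ioc a b ∩ Set.Ici s, g t with hG
  set m : ℝ → ℝ := fun s => min lam (b - s) with hm
  set h : ℝ → ℝ := fun s => m s - G s with hh
  have hsub1 : ∀ s ∈ Set.Icc a b, Set.Ioo a s ⊆ Set.Icc a b := by
    intro s hs t ht
    exact ⟨ht.1.le, ht.2.le.trans hs.2⟩
  have hsub2 : ∀ s : ℝ, Set.Ioc a b ∩ Set.Ici s ⊆ Set.Icc a b := by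
    intro s t ht
    exact ⟨ht.1.1.le, ht.1.2⟩
  have hsplit : ∀ s ∈ Set.Icc a b, lam = (∫ t in Set.Ioo a s, g t) + G s := by
    intro s hs
    have hset : Set.Ioc a b = Set.Ioo a s ∪ (Set.Ioc a b ∩ Set.Ici s) := by
      ext t
      simp only [Set.mem_Ioc, Set.mem_Ioo, Set.mem_union, Set.mem_inter_iff, Set.mem_Ici]
      constructor
      · rintro ⟨h1, h2⟩
        rcases lt_or_ge t s with hts | hts
        · exact Or.inl ⟨h1, hts⟩
        · exact Or.inr ⟨⟨h1, h2⟩, hts⟩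
      · rintro (⟨h1, h2⟩ | ⟨⟨h1, h2⟩, _⟩)
        · exact ⟨h1, h2.le.trans hs.2⟩
        · exact ⟨h1, h2⟩
    have hdisj : Disjoint (Set.Ioo a s) (Set.Ioc a b ∩ Set.Ici s) := by
      rw [Set.disjoint_left]
      rintro t ht ⟨_, hts⟩
      exact absurd ht.2 (not_lt.mpr hts)
    rw [hlam', hset, setIntegral_union hdisj (measurableSet_Ioc.inter measurableSet_Ici)
      (hgI.mono_set (fun t ht => ⟨ht.1, ht.2.le.trans hs.2⟩))
      (hgI.mono_set Set.inter_subset_left)]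
  have hIoo_bound : ∀ s ∈ Set.Icc a b,
      0 ≤ (∫ t in Set.Ioo a s, g t) ∧ (∫ t in Set.Ioo a s, g t) ≤ s - a := by
    intro s hs
    constructor
    · exact setIntegral_nonneg measurableSet_Ioo
        (fun t ht => (hg01 t (hsub1 s hs ht)).1)
    · calc (∫ t in Set.Ioo a s, g t) ≤ ∫ _t in Set.Ioo a s, (1 : ℝ) := by
            refine setIntegral_mono_on
              (hgI.mono_set (fun t ht => ⟨ht.1, ht.2.le.trans hs.2⟩)) ?_ measurableSet_Ioo
              (fun t ht => (hg01 t (hsub1 s hs ht)).2)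
            exact integrableOn_const measure_Ioo_lt_top.ne
        _ = s - a := by
            rw [setIntegral_const, measureReal_def, Real.volume_Ioo, smul_eq_mul, mul_one,
              ENNReal.toReal_ofReal (by linarith [hs.1])]
  have hG_bound : ∀ s ∈ Set.Icc a b, 0 ≤ G s ∧ G s ≤ b - s := by
    intro s hs
    constructor
    · exact setIntegral_nonneg (measurableSet_Ioc.inter measurableSet_Ici)
        (fun t ht => (hg01 t (hsub2 s ht)).1)
    · calc G s ≤ ∫ _t in Set.Ioc a b ∩ Set.Ici s, (1 : ℝ) := by
            refine setIntegral_mono_on (hgI.mono_set Set.inter_subset_left) ?_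
              (measurableSet_Ioc.inter measurableSet_Ici)
              (fun t ht => (hg01 t (hsub2 s ht)).2)
            exact integrableOn_const
              (lt_of_le_of_lt (measure_mono Set.inter_subset_left) measure_Ioc_lt_top).ne
        _ ≤ b - s := by
            rw [setIntegral_const, smul_eq_mul, mul_one, measureReal_def]
            have hle : volume (Set.Ioc a b ∩ Set.Ici s) ≤ ENNReal.ofReal (b - s) := by
              rw [← Real.volume_Icc]
              exact measure_mono (fun t ht => ⟨ht.2, ht.1.2⟩)
            calc (volume (Set.Ioc a b ∩ Set.Ici s)).toReal
                ≤ (ENNReal.ofReal (b - s)).toReal :=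
                  ENNReal.toReal_mono ENNReal.ofReal_ne_top hle
              _ = b - s := ENNReal.toReal_ofReal (by linarith [hs.2])
  have hh0 : ∀ s ∈ Set.Icc a b, 0 ≤ h s := by
    intro s hs
    have h1 := hsplit s hs
    have h2 := hIoo_bound s hs
    have h3 := hG_bound s hs
    have : G s ≤ min lam (b - s) := le_min (by linarith [h2.1]) h3.2
    simp only [hh, hm, sub_nonneg]
    exact this
  have hh1 : ∀ s ∈ Set.Icc a b, s ≤ c → h s ≤ s - a := by
    intro s hs hsc
    have h1 := hsplit s hs
    have h2 := hIoo_bound s hs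
    have hmls : m s = lam := min_eq_left (by rw [hc] at hsc; linarith)
    simp only [hh]
    rw [hmls]
    linarith [h2.2]
  have hh2 : ∀ s ∈ Set.Icc a b, h s ≤ b - s := by
    intro s hs
    have h3 := hG_bound s hs
    simp only [hh, hm]
    have := min_le_right lam (b - s)
    linarith [h3.1]
  -- continuity of h
  have hGc : ContinuousOn G (Set.Icc a b) := by
    have hgIcc : IntegrableOn g (Set.Icc a b) :=
      (integrableOn_Icc_iff_integrableOn_Ioc).mpr hgI
    have hprim : ContinuousOn (fun s => ∫ t in Set.Ioc a s, g t) (Set.Icc a b) :=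
      intervalIntegral.continuousOn_primitive hgIcc
    refine ContinuousOn.congr ((continuousOn_const (c := lam)).sub hprim) ?_
    intro s hs
    have h1 := hsplit s hs
    have : (∫ t in Set.Ioo a s, g t) = ∫ t in Set.Ioc a s, g t :=
      (integral_Ioc_eq_integral_Ioo).symm
    simp only [hG, Pi.sub_apply]
    rw [← this]
    linarith
  have hhc : ContinuousOn h (Set.Icc a b) := by
    refine ContinuousOn.sub ?_ hGc
    exact (continuous_const.min (continuous_const.sub continuous_id)).continuousOn
  -- Fubini for g
  have FubA : ∫ t in Set.Ioc a b, P t * g t = ∫ s in Set.Ioc a b, f' s * G s :=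
    fubini_key a b f' g hf'.1 hgI
  -- Fubini for the indicator
  set v : ℝ → ℝ := (Set.Ioc c b).indicator (fun _ => (1 : ℝ)) with hv
  have hvInt : Integrable v volume := by
    rw [hv, integrable_indicator_iff measurableSet_Ioc]
    exact integrableOn_const measure_Ioc_lt_top.ne
  have FubB : ∫ t in Set.Ioc a b, P t * v t
      = ∫ s in Set.Ioc a b, f' s * ∫ t in Set.Ioc a b ∩ Set.Ici s, v t :=
    fubini_key a b f' v hf'.1 hvInt.integrableOn
  -- LHS of FubB
  have FubB_lhs : ∫ t in Set.Ioc a b, P t * v t = ∫ t in Set.Ioc c b, P t := by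
    have e1 : ∀ t : ℝ, P t * v t = (Set.Ioc c b).indicator P t := by
      intro t
      by_cases ht : t ∈ Set.Ioc c b <;> simp [hv, Set.indicator_apply, ht]
    simp_rw [e1]
    rw [integral_indicator measurableSet_Ioc, Measure.restrict_restrict measurableSet_Ioc]
    congr 1
    rw [Set.inter_eq_left.mpr (Set.Ioc_subset_Ioc hac le_rfl)]
  -- RHS inner integral of FubB
  have FubB_inner : ∀ s ∈ Set.Ioc a b, (∫ t in Set.Ioc a b ∩ Set.Ici s, v t) = m s := by
    intro s hs
    rw [hv, integral_indicator measurableSet_Ioc,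
      setIntegral_const, smul_eq_mul, mul_one, measureReal_def, Measure.restrict_apply measurableSet_Ioc]
    rcases le_or_gt s c with hsc | hcs
    · have hset : Set.Ioc c b ∩ (Set.Ioc a b ∩ Set.Ici s) = Set.Ioc c b := by
        apply Set.inter_eq_left.mpr
        intro t ht
        exact ⟨⟨lt_of_le_of_lt hac ht.1, ht.2⟩, le_of_lt (lt_of_le_of_lt hsc ht.1)⟩
      rw [hset, Real.volume_Ioc, ENNReal.toReal_ofReal (by linarith)]
      simp only [hm]
      rw [min_eq_left (by linarith [hsc])]
      rw [hc]; ring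
    · have hset : Set.Ioc c b ∩ (Set.Ioc a b ∩ Set.Ici s) = Set.Icc s b := by
        ext t
        simp only [Set.mem_inter_iff, Set.mem_Ioc, Set.mem_Icc, Set.mem_Ici]
        constructor
        · rintro ⟨⟨_, h2⟩, ⟨_, h4⟩⟩
          exact ⟨h4, h2⟩
        · rintro ⟨h1, h2⟩
          exact ⟨⟨lt_of_lt_of_le hcs h1, h2⟩, ⟨lt_of_lt_of_le (lt_of_le_of_lt hac hcs) h1, h2⟩, h1⟩
      rw [hset, Real.volume_Icc, ENNReal.toReal_ofReal (by linarith [hs.2])]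
      simp only [hm]
      rw [min_eq_right (by rw [hc] at hcs; linarith [hcs])]
  have FubB' : ∫ t in Set.Ioc c b, P t = ∫ s in Set.Ioc a b, f' s * m s := by
    rw [← FubB_lhs, FubB]
    exact setIntegral_congr_fun measurableSet_Ioc
      (fun s hs => by rw [FubB_inner s hs])
  -- integrability facts
  have hPg : IntegrableOn (fun t => P t * g t) (Set.Ioc a b) :=
    MeasureTheory.IntegrableOn.continuousOn_mul_of_subset hPc hgI isCompact_Icc
      measurableSet_Ioc Set.Ioc_subset_Icc_self
  have hf'G : IntegrableOn (fun s => f' s * G s) (Set.Ioc a b) :=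
    MeasureTheory.IntegrableOn.mul_continuousOn_of_subset hf'.1 hGc measurableSet_Ioc
      isCompact_Icc Set.Ioc_subset_Icc_self
  have hmc : ContinuousOn m (Set.Icc a b) :=
    (continuous_const.min (continuous_const.sub continuous_id)).continuousOn
  have hf'm : IntegrableOn (fun s => f' s * m s) (Set.Ioc a b) :=
    MeasureTheory.IntegrableOn.mul_continuousOn_of_subset hf'.1 hmc measurableSet_Ioc
      isCompact_Icc Set.Ioc_subset_Icc_self
  -- representation of ∫ f g
  have Ifg : ∫ t in a..b, f t * g t = f a * lam + ∫ s in Set.Ioc a b, f' s * G s := by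
    rw [intervalIntegral.integral_of_le hab.le]
    have e : Set.EqOn (fun t => f t * g t) (fun t => f a * g t + P t * g t) (Set.Ioc a b) := by
      intro t ht
      have hmem : t ∈ Set.Icc a b := Set.Ioc_subset_Icc_self ht
      have := hAC t hmem
      rw [intervalIntegral.integral_of_le ht.1.le] at this
      simp only [hP]
      rw [this]
      ring
    rw [setIntegral_congr_fun measurableSet_Ioc e,
      integral_add (hgI.const_mul (f a)) hPg, integral_const_mul, ← hlam', FubA]
  -- representation of the second integral
  have Icb : ∫ t in c..b, f t = f a * lam + ∫ s in Set.Ioc a b, f' s * m s := by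
    rw [intervalIntegral.integral_of_le hcb]
    have e : Set.EqOn f (fun t => f a + P t) (Set.Ioc c b) := by
      intro t ht
      have hmem : t ∈ Set.Icc a b := ⟨(lt_of_le_of_lt hac ht.1).le, ht.2⟩
      have := hAC t hmem
      rw [intervalIntegral.integral_of_le hmem.1] at this
      simp only [hP]
      exact this
    rw [setIntegral_congr_fun measurableSet_Ioc e,
      integral_add (integrableOn_const (C := f a) measure_Ioc_lt_top.ne)
        (hPI.mono_set (fun t ht => ⟨(lt_of_le_of_lt hac ht.1).le, ht.2⟩)),
      setIntegral_const, smul_eq_mul, measureReal_def, Real.volume_Ioc,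
      ENNReal.toReal_ofReal (by linarith), FubB']
    have : b - c = lam := by rw [hc]; ring
    rw [this, mul_comm]
  -- the key difference formula
  have hdiff : (∫ t in a..b, f t * g t) - ∫ t in c..b, f t
      = ∫ s in Set.Ioc a b, f' s * (G s - m s) := by
    rw [Ifg, Icb]
    have : ∫ s in Set.Ioc a b, f' s * (G s - m s)
        = (∫ s in Set.Ioc a b, f' s * G s) - ∫ s in Set.Ioc a b, f' s * m s := by
      rw [← integral_sub hf'G hf'm]
      exact setIntegral_congr_fun measurableSet_Ioc (fun s _ => by ring)
    rw [this]
    ring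
  -- absolute value bound
  have habs : |(∫ t in a..b, f t * g t) - ∫ t in c..b, f t|
      ≤ ∫ s in Set.Ioc a b, |f' s| * h s := by
    rw [hdiff]
    calc |∫ s in Set.Ioc a b, f' s * (G s - m s)|
        = ‖∫ s in Set.Ioc a b, f' s * (G s - m s)‖ := (Real.norm_eq_abs _).symm
      _ ≤ ∫ s in Set.Ioc a b, ‖f' s * (G s - m s)‖ := norm_integral_le_integral_norm _
      _ = ∫ s in Set.Ioc a b, |f' s| * h s := by
          refine setIntegral_congr_fun measurableSet_Ioc (fun s hs => ?_)
          have h0 := hh0 s (Set.Ioc_subset_Icc_self hs)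
          rw [Real.norm_eq_abs, abs_mul, abs_sub_comm]
          congr 1
          exact abs_of_nonneg h0
  -- Hölder
  haveI : IsFiniteMeasure (volume.restrict (Set.Ioc a b)) :=
    ⟨by rw [Measure.restrict_apply_univ]; exact measure_Ioc_lt_top⟩
  have hf'meas : AEStronglyMeasurable f' (volume.restrict (Set.Ioc a b)) :=
    hf'.1.aestronglyMeasurable
  have hconj : Real.HolderConjugate p q := Real.holderConjugate_iff.mpr ⟨hp, by simpa [one_div] using hpq⟩
  have hA : ENNReal.ofReal p ≠ 0 := by
    simp only [ne_eq, ENNReal.ofReal_eq_zero, not_le]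
    exact hp0
  have hB : ENNReal.ofReal p ≠ ⊤ := ENNReal.ofReal_ne_top
  have hfLp : MemLp (fun x => |f' x|) (ENNReal.ofReal p) (volume.restrict (Set.Ioc a b)) := by
    have key : MemLp (fun x => ‖f' x‖ ^ p) 1 (volume.restrict (Set.Ioc a b)) := by
      rw [memLp_one_iff_integrable]
      have : IntegrableOn (fun x => |f' x| ^ p) (Set.Ioc a b) := hf'p.1
      simpa [Real.norm_eq_abs, IntegrableOn] using this
    have key2 : MemLp (fun x => ‖f' x‖ ^ (ENNReal.ofReal p).toReal)
        (ENNReal.ofReal p / ENNReal.ofReal p) (volume.restrict (Set.Ioc a b)) := by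
      rw [ENNReal.toReal_ofReal hp0.le, ENNReal.div_self hA hB]
      exact key
    have := (memLp_norm_rpow_iff hf'meas hA hB).mp key2
    simpa [Real.norm_eq_abs] using this.norm
  have hhLq : MemLp h (ENNReal.ofReal q) (volume.restrict (Set.Ioc a b)) := by
    have hmeas : AEStronglyMeasurable h (volume.restrict (Set.Ioc a b)) :=
      (hhc.mono Set.Ioc_subset_Icc_self).aestronglyMeasurable measurableSet_Ioc
    refine MemLp.of_bound hmeas (b - a) ?_
    filter_upwards [ae_restrict_mem measurableSet_Ioc] with s hs
    have h0 := hh0 s (Set.Ioc_subset_Icc_self hs)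
    have h2 := hh2 s (Set.Ioc_subset_Icc_self hs)
    rw [Real.norm_eq_abs, abs_of_nonneg h0]
    linarith [hs.1]
  have hHolder : (∫ s in Set.Ioc a b, |f' s| * h s)
      ≤ (∫ s in Set.Ioc a b, |f' s| ^ p) ^ (1 / p)
        * (∫ s in Set.Ioc a b, h s ^ q) ^ (1 / q) :=
    integral_mul_le_Lp_mul_Lq_of_nonneg hconj
      (Filter.Eventually.of_forall fun s => abs_nonneg _)
      ((ae_restrict_iff' measurableSet_Ioc).mpr
        (Filter.Eventually.of_forall fun s hs => hh0 s (Set.Ioc_subset_Icc_self hs)))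
      hfLp hhLq
  -- bound on ∫ h^q
  have hsubac : Set.Ioc a c ⊆ Set.Icc a b := fun t ht => ⟨ht.1.le, ht.2.trans hcb⟩
  have hsubcb : Set.Ioc c b ⊆ Set.Icc a b := fun t ht => ⟨(lt_of_le_of_lt hac ht.1).le, ht.2⟩
  have hhqc : ContinuousOn (fun s => h s ^ q) (Set.Icc a b) :=
    hhc.rpow_const (fun s _ => Or.inr hq0.le)
  have hhqI : IntegrableOn (fun s => h s ^ q) (Set.Icc a b) := hhqc.integrableOn_Icc
  have hTsplit : (∫ s in Set.Ioc a b, h s ^ q)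
      = (∫ s in Set.Ioc a c, h s ^ q) + ∫ s in Set.Ioc c b, h s ^ q := by
    rw [← Set.Ioc_union_Ioc_eq_Ioc hac hcb,
      setIntegral_union (Set.Ioc_disjoint_Ioc_of_le le_rfl) measurableSet_Ioc
        (hhqI.mono_set hsubac) (hhqI.mono_set hsubcb)]
  have hqne : q + 1 ≠ 0 := by linarith
  have hT1 : (∫ s in Set.Ioc a c, h s ^ q) ≤ (c - a) ^ (q + 1) / (q + 1) := by
    have cont2 : ContinuousOn (fun s : ℝ => (s - a) ^ q) (Set.Icc a b) :=
      ((continuous_id.sub continuous_const).continuousOn).rpow_const (fun x _ => Or.inr hq0.le)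
    calc (∫ s in Set.Ioc a c, h s ^ q) ≤ ∫ s in Set.Ioc a c, (s - a) ^ q := by
          refine setIntegral_mono_on (hhqI.mono_set hsubac)
            ((cont2.integrableOn_Icc).mono_set hsubac) measurableSet_Ioc (fun s hs => ?_)
          exact Real.rpow_le_rpow (hh0 s (hsubac hs)) (hh1 s (hsubac hs) hs.2) hq0.le
      _ = (c - a) ^ (q + 1) / (q + 1) := by
          rw [← intervalIntegral.integral_of_le hac,
            intervalIntegral.integral_comp_sub_right (fun x => x ^ q) a, sub_self,
            integral_rpow (Or.inl (by linarith : (-1:ℝ) < q)),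
            Real.zero_rpow hqne, sub_zero]
  have hT2 : (∫ s in Set.Ioc c b, h s ^ q) ≤ lam ^ (q + 1) / (q + 1) := by
    have cont2 : ContinuousOn (fun s : ℝ => (b - s) ^ q) (Set.Icc a b) :=
      ((continuous_const.sub continuous_id).continuousOn).rpow_const (fun x _ => Or.inr hq0.le)
    calc (∫ s in Set.Ioc c b, h s ^ q) ≤ ∫ s in Set.Ioc c b, (b - s) ^ q := by
          refine setIntegral_mono_on (hhqI.mono_set hsubcb)
            ((cont2.integrableOn_Icc).mono_set hsubcb) measurableSet_Ioc (fun s hs => ?_)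
          exact Real.rpow_le_rpow (hh0 s (hsubcb hs)) (hh2 s (hsubcb hs)) hq0.le
      _ = lam ^ (q + 1) / (q + 1) := by
          rw [← intervalIntegral.integral_of_le hcb,
            intervalIntegral.integral_comp_sub_left (fun x => x ^ q) b, sub_self,
            integral_rpow (Or.inl (by linarith : (-1:ℝ) < q)),
            Real.zero_rpow hqne, sub_zero]
          congr 2
          rw [hc]; ring
  have hY : (0:ℝ) ≤ b - a - lam := by linarith
  have hca : c - a = b - a - lam := by rw [hc]; ring
  have hTle : (∫ s in Set.Ioc a b, h s ^ q)
      ≤ ((b - a - lam) ^ (q + 1) + lam ^ (q + 1)) / (q + 1) := by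
    rw [hTsplit, add_div, ← hca]
    exact add_le_add hT1 hT2
  have hT0 : 0 ≤ ∫ s in Set.Ioc a b, h s ^ q :=
    setIntegral_nonneg measurableSet_Ioc
      (fun s hs => Real.rpow_nonneg (hh0 s (Set.Ioc_subset_Icc_self hs)) q)
  have hA0 : 0 ≤ ∫ s in Set.Ioc a b, |f' s| ^ p :=
    setIntegral_nonneg measurableSet_Ioc (fun s _ => Real.rpow_nonneg (abs_nonneg _) p)
  -- final assembly
  have e1 : ((b - a - lam) ^ (q + 1) + lam ^ (q + 1)) ^ (1 / q)
      ≤ (b - a - lam) ^ ((q + 1) / q) + lam ^ ((q + 1) / q) := by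
    calc ((b - a - lam) ^ (q + 1) + lam ^ (q + 1)) ^ (1 / q)
        ≤ ((b - a - lam) ^ (q + 1)) ^ (1 / q) + (lam ^ (q + 1)) ^ (1 / q) :=
          real_rpow_subadd (Real.rpow_nonneg hY _) (Real.rpow_nonneg hlam0 _)
            (by positivity) (by rw [div_le_one hq0]; exact hq1.le)
      _ = (b - a - lam) ^ ((q + 1) / q) + lam ^ ((q + 1) / q) := by
          rw [← Real.rpow_mul hY, ← Real.rpow_mul hlam0, mul_one_div]
  calc |(∫ t in a..b, f t * g t) - ∫ t in c..b, f t|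
      ≤ ∫ s in Set.Ioc a b, |f' s| * h s := habs
    _ ≤ (∫ s in Set.Ioc a b, |f' s| ^ p) ^ (1 / p)
        * (∫ s in Set.Ioc a b, h s ^ q) ^ (1 / q) := hHolder
    _ ≤ (∫ s in Set.Ioc a b, |f' s| ^ p) ^ (1 / p)
        * ((((b - a - lam) ^ (q + 1) + lam ^ (q + 1)) / (q + 1)) ^ (1 / q)) := by
        apply mul_le_mul_of_nonneg_left _ (Real.rpow_nonneg hA0 _)
        exact Real.rpow_le_rpow hT0 hTle (by positivity)
    _ = (∫ s in Set.Ioc a b, |f' s| ^ p) ^ (1 / p)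
        * (((b - a - lam) ^ (q + 1) + lam ^ (q + 1)) ^ (1 / q) / (q + 1) ^ (1 / q)) := by
        rw [Real.div_rpow (by positivity) (by linarith)]
    _ ≤ (∫ s in Set.Ioc a b, |f' s| ^ p) ^ (1 / p)
        * (((b - a - lam) ^ ((q + 1) / q) + lam ^ ((q + 1) / q)) / (q + 1) ^ (1 / q)) := by
        apply mul_le_mul_of_nonneg_left _ (Real.rpow_nonneg hA0 _)
        have hD : (0:ℝ) < (q + 1) ^ (1 / q) := Real.rpow_pos_of_pos (by linarith) _
        exact (div_le_div_iff_of_pos_right hD).mpr e1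
    _ = (∫ x in a..b, |f' x| ^ p) ^ (1 / p) / (q + 1) ^ (1 / q)
        * (lam ^ ((q + 1) / q) + (b - a - lam) ^ ((q + 1) / q)) := by
        rw [intervalIntegral.integral_of_le hab.le]
        ring
end
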